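/- arXiv:1312.6537 — 9 statements merged into one kernel-verified Lean document; each statement's English description precedes it below -/
import Mathlib

section
/- For m, n ≥ 1 and 0 ≤ r ≤ m + n − 1, the generalized Dilcher identity holds: ∑_{k=1}^{n} (-1)^{k-1} [n choose k]_q q^{k(k-1)/2 + k(m−r)} / (1 − q^k)^m = ∑_{j=0}^{m} C(r, m−j) · h_j, where h_j = ∑_{1 ≤ k_1 ≤ ⋯ ≤ k_j ≤ n} q^{k_1+⋯+k_j} / ((1−q^{k_1})⋯(1−q^{k_j})) (with h_0 = 1), as rational functions in q. -/
/-- The q-Pochhammer symbol `(a;q)_n = ∏_{j=0}^{n-1} (1 - a q^j)`. -/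
noncomputable def qPoch (a q : ℂ) (n : ℕ) : ℂ := ∏ j ∈ Finset.range n, (1 - a * q ^ j)

/-- The Gaussian binomial coefficient `[n choose k]_q`. -/
noncomputable def qBinom (q : ℂ) (n k : ℕ) : ℂ :=
  qPoch q q n / (qPoch q q k * qPoch q q (n - k))

/-- The complete homogeneous symmetric function `h_j` in `q^i/(1-q^i)`, `i = 1,…,n`. -/
noncomputable def hSym (q : ℂ) (n j : ℕ) : ℂ :=
  ∑ s ∈ (Finset.Icc 1 n).sym j,
    (Multiset.map (fun i => q ^ i / (1 - q ^ i)) (s : Multiset ℕ)).prod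

open Finset

variable {q : ℂ}

def QH (q : ℂ) : Prop := ∀ j, 1 ≤ j → q ^ j ≠ 1

lemma one_sub_ne (hq1 : QH q) (k : ℕ) (hk : 1 ≤ k) : (1 : ℂ) - q ^ k ≠ 0 :=
  sub_ne_zero.mpr fun h => hq1 k hk h.symm

lemma qPoch_succ (a : ℂ) (n : ℕ) : qPoch a q (n + 1) = qPoch a q n * (1 - a * q ^ n) :=
  Finset.prod_range_succ _ _

lemma qPoch_zero (a : ℂ) : qPoch a q 0 = 1 := Finset.prod_range_zero _

lemma qPoch_ne (hq1 : QH q) (n : ℕ) : qPoch q q n ≠ 0 := by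
  rw [qPoch, Finset.prod_ne_zero_iff]
  intro j _
  have : q * q ^ j = q ^ (j + 1) := (pow_succ' q j).symm
  rw [this]
  exact one_sub_ne hq1 (j+1) (Nat.le_add_left 1 j)

lemma qBinom_zero (hq1 : QH q) (n : ℕ) : qBinom q n 0 = 1 := by
  simp [qBinom, qPoch_zero, div_self (qPoch_ne hq1 n)]

lemma qBinom_self (hq1 : QH q) (n : ℕ) : qBinom q n n = 1 := by
  simp [qBinom, qPoch_zero, div_self (qPoch_ne hq1 n)]

/-- ratio: for k ≤ n, [n+1 k](1-q^{n+1-k}) = [n k](1-q^{n+1}) -/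
lemma qBinom_ratio (hq1 : QH q) {k n : ℕ} (hkn : k ≤ n) :
    qBinom q (n+1) k * (1 - q ^ (n + 1 - k)) = qBinom q n k * (1 - q ^ (n+1)) := by
  have h1 : n + 1 - k = (n - k) + 1 := by omega
  rw [qBinom, qBinom, h1, qPoch_succ, qPoch_succ]
  have e1 : q * q ^ (n - k) = q ^ (n - k + 1) := (pow_succ' q _).symm
  have e2 : q * q ^ n = q ^ (n + 1) := (pow_succ' q _).symm
  rw [e1, e2]
  have d1 := qPoch_ne hq1 (q := q) k
  have d2 := qPoch_ne hq1 (q := q) (n - k)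
  have d3 := one_sub_ne hq1 (n - k + 1) (by omega)
  field_simp

lemma qBinom_pred (hq1 : QH q) {k n : ℕ} (hk : 1 ≤ k) (hkn : k ≤ n) :
    qBinom q n (k-1) * (1 - q ^ (n - k + 1)) = qBinom q n k * (1 - q ^ k) := by
  have h1 : n - (k - 1) = (n - k) + 1 := by omega
  have h2 : k = (k - 1) + 1 := by omega
  have E1 : qPoch q q (n - (k-1)) = qPoch q q (n-k) * (1 - q ^ (n-k+1)) := by
    rw [h1, qPoch_succ, (pow_succ' q _).symm]
  have E2 : qPoch q q k = qPoch q q (k-1) * (1 - q ^ k) := by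
    conv_lhs => rw [h2]
    rw [qPoch_succ, ← pow_succ' q _, ← h2]
  rw [qBinom, qBinom, E1, E2]
  have d1 := qPoch_ne hq1 (q := q) (k - 1)
  have d2 := qPoch_ne hq1 (q := q) (n - k)
  have d3 := one_sub_ne hq1 (n - k + 1) (by omega)
  have d4 := one_sub_ne hq1 k hk
  field_simp

lemma qBinom_pascal (hq1 : QH q) {k n : ℕ} (hk : 1 ≤ k) (hkn : k ≤ n) :
    qBinom q (n+1) k = qBinom q n k + q ^ (n + 1 - k) * qBinom q n (k-1) := by
  have h3 : n + 1 - k = n - k + 1 := by omega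
  have d3 := one_sub_ne hq1 (n + 1 - k) (by omega)
  apply mul_right_cancel₀ d3
  rw [qBinom_ratio hq1 hkn, add_mul]
  have h4 : q ^ (n + 1 - k) * qBinom q n (k - 1) * (1 - q ^ (n + 1 - k)) =
      q ^ (n + 1 - k) * (qBinom q n (k - 1) * (1 - q ^ (n - k + 1))) := by rw [h3]; ring
  rw [h4, qBinom_pred hq1 hk hkn]
  have hpow : q ^ (n + 1 - k) * q ^ k = q ^ (n+1) := by rw [← pow_add]; congr 1; omega
  linear_combination (qBinom q n k) * hpow

noncomputable def gterm (q x : ℂ) (n k : ℕ) : ℂ :=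
  (-1)^k * qBinom q n k * q^(k*(k-1)/2) * x^k

lemma tri_succ (k : ℕ) : (k+1)*((k+1)-1)/2 = k*(k-1)/2 + k := by
  rw [← Nat.choose_two_right, ← Nat.choose_two_right, Nat.choose_succ_succ,
    Nat.choose_one_right, Nat.add_comm]

lemma gterm_succ_eq (hq1 : QH q) {x : ℂ} {k n : ℕ} (hkn : k < n) :
    gterm q x (n+1) (k+1) = gterm q x n (k+1) - (x*q^n) * gterm q x n k := by
  unfold gterm
  rw [qBinom_pascal hq1 (Nat.le_add_left 1 k) (by omega), tri_succ, pow_add, pow_add]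
  have h1 : n + 1 - (k + 1) = n - k := by omega
  have h2 : q ^ (n - k) * q ^ k = q ^ n := by rw [← pow_add]; congr 1; omega
  rw [h1]
  rw [Nat.add_sub_cancel]
  linear_combination (-1:ℂ)^(k+1) * q^(k*(k-1)/2) * x^k * x * qBinom q n k * h2

lemma gterm_zero (hq1 : QH q) (x : ℂ) (n : ℕ) : gterm q x n 0 = 1 := by
  simp [gterm, qBinom_zero hq1]

lemma gterm_top (hq1 : QH q) (x : ℂ) (n : ℕ) :
    gterm q x (n+1) (n+1) = -(x*q^n) * gterm q x n n := by
  unfold gterm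
  rw [qBinom_self hq1, qBinom_self hq1, tri_succ, pow_add, pow_add]
  ring

/-- q-binomial theorem -/
lemma qbinom_thm (hq1 : QH q) (n : ℕ) (x : ℂ) :
    ∑ k ∈ range (n+1), gterm q x n k = qPoch x q n := by
  induction n generalizing x with
  | zero => simp [gterm_zero hq1, qPoch_zero]
  | succ n ih =>
    rw [Finset.sum_range_succ, Finset.sum_range_succ']
    have h3 : ∀ k ∈ range n, gterm q x (n+1) (k+1)
        = gterm q x n (k+1) - (x*q^n) * gterm q x n k := by
      intro k hk
      exact gterm_succ_eq hq1 (mem_range.mp hk)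
    rw [Finset.sum_congr rfl h3, Finset.sum_sub_distrib, ← Finset.mul_sum]
    rw [gterm_top hq1, gterm_zero hq1]
    have h4 : ∑ k ∈ range n, gterm q x n (k+1) + 1
        = ∑ k ∈ range (n+1), gterm q x n k := by
      rw [Finset.sum_range_succ']
      rw [gterm_zero hq1]
    have h5 : ∑ k ∈ range n, gterm q x n k + gterm q x n n
        = ∑ k ∈ range (n+1), gterm q x n k := (Finset.sum_range_succ _ _).symm
    have : ∑ k ∈ range n, gterm q x n (k + 1) - x * q ^ n * ∑ k ∈ range n, gterm q x n k + 1 +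
        -(x * q ^ n) * gterm q x n n
        = (∑ k ∈ range n, gterm q x n (k+1) + 1)
          - (x*q^n) * (∑ k ∈ range n, gterm q x n k + gterm q x n n) := by ring
    rw [this, h4, h5, ih, qPoch_succ]
    ring

lemma zpow_split (hq : q ≠ 0) (k : ℕ) (a : ℤ) :
    q ^ (((k*(k-1)/2 : ℕ):ℤ) + (k:ℤ) * a) = q ^ (k*(k-1)/2) * (q ^ a) ^ k := by
  rw [zpow_add₀ hq, zpow_natCast]
  congr 1
  rw [← zpow_natCast (q ^ a) k, ← zpow_mul, mul_comm]

lemma neg_one_pred {k : ℕ} (hk : 1 ≤ k) : ((-1 : ℂ)) ^ (k-1) = -(-1:ℂ)^k := by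
  have : k = (k - 1) + 1 := by omega
  rw [this, pow_succ, Nat.add_sub_cancel]
  ring

lemma sum_range_succ_eq_Icc (f : ℕ → ℂ) (n : ℕ) :
    ∑ k ∈ range (n+1), f k = f 0 + ∑ k ∈ Icc 1 n, f k := by
  rw [range_eq_Ico, Finset.sum_eq_sum_Ico_succ_bot (by omega), Finset.Ico_add_one_right_eq_Icc, Nat.zero_add]

lemma Sd_m_zero (hq : q ≠ 0) (hq1 : QH q) {n r : ℕ} (hn : 1 ≤ n) (hr : r ≤ n - 1) :
    ∑ k ∈ Icc 1 n, (-1:ℂ)^(k-1) * qBinom q n k * q ^ (((k*(k-1)/2 : ℕ):ℤ) + (k:ℤ) * (-(r:ℤ))) = 1 := by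
  set x : ℂ := q ^ (-(r:ℤ)) with hx
  have h0 : qPoch x q n = 0 := by
    apply Finset.prod_eq_zero (i := r) (Finset.mem_range.mpr (by omega))
    rw [hx, ← zpow_natCast q r, ← zpow_add₀ hq, neg_add_cancel, zpow_zero, sub_self]
  have hsum := qbinom_thm hq1 n x
  rw [h0, sum_range_succ_eq_Icc, gterm_zero hq1] at hsum
  have hterm : ∀ k ∈ Icc 1 n,
      (-1:ℂ)^(k-1) * qBinom q n k * q ^ (((k*(k-1)/2 : ℕ):ℤ) + (k:ℤ) * (-(r:ℤ)))
      = -(gterm q x n k) := by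
    intro k hk
    have hk1 : 1 ≤ k := (Finset.mem_Icc.mp hk).1
    rw [zpow_split hq, neg_one_pred hk1, gterm]
    ring
  rw [Finset.sum_congr rfl hterm, Finset.sum_neg_distrib]
  have : ∑ k ∈ Icc 1 n, gterm q x n k = -1 := by linear_combination hsum
  rw [this]; norm_num

lemma msup_mem {m : Multiset ℕ} (h : m ≠ 0) : m.sup ∈ m := by
  induction m using Multiset.induction with
  | empty => exact absurd rfl h
  | cons a t ih =>
    rw [Multiset.sup_cons]
    rcases eq_or_ne t 0 with rfl | ht
    · simp
    · rcases le_total t.sup a with hle | hle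
      · rw [sup_eq_left.mpr hle]; exact Multiset.mem_cons_self a t
      · rw [sup_eq_right.mpr hle]; exact Multiset.mem_cons_of_mem (ih ht)

lemma hSym_zero (q : ℂ) (n : ℕ) : hSym q n 0 = 1 := by
  rw [hSym, Finset.sym_zero, Finset.sum_singleton]
  have : ((∅ : Sym ℕ 0) : Multiset ℕ) = 0 := rfl
  rw [this]
  simp

lemma hSym_succ (q : ℂ) (n j : ℕ) :
    hSym q n (j+1) = ∑ l ∈ Icc 1 n, (q ^ l / (1 - q ^ l)) * hSym q l j := by
  classical
  rw [hSym]
  rw [← Finset.sum_fiberwise_of_maps_to (t := Icc 1 n)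
    (g := fun s : Sym ℕ (j+1) => (s : Multiset ℕ).sup) ?hmap]
  case hmap =>
    intro s hs
    have hne : (s : Multiset ℕ) ≠ 0 := by
      intro h
      have h2 : j + 1 = 0 := by rw [← Sym.card_coe (s := s), h]; simp
      omega
    exact Finset.mem_sym_iff.mp hs _ (Sym.mem_coe.mp (msup_mem hne))
  apply Finset.sum_congr rfl
  intro l hl
  rw [hSym, Finset.mul_sum]
  have l_mem : ∀ s ∈ filter (fun s : Sym ℕ (j+1) => (s : Multiset ℕ).sup = l)
      ((Icc 1 n).sym (j+1)), l ∈ s := by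
    intro s hs
    have hs' := Finset.mem_filter.mp hs
    have hne : (s : Multiset ℕ) ≠ 0 := by
      intro h
      have h2 : j + 1 = 0 := by rw [← Sym.card_coe (s := s), h]; simp
      omega
    exact Sym.mem_coe.mp (hs'.2 ▸ msup_mem hne)
  refine Finset.sum_bij' (fun s hs => s.erase l (l_mem s hs))
    (fun t _ => l ::ₛ t) ?_ ?_ ?_ ?_ ?_
  · -- hi : erase lands in (Icc 1 l).sym j
    intro s hs
    have hs' := Finset.mem_filter.mp hs
    rw [Finset.mem_sym_iff]
    intro a ha
    have ha0 : a ∈ ((s.erase l (l_mem s hs)) : Multiset ℕ) := Sym.mem_coe.mpr ha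
    rw [Sym.coe_erase] at ha0
    have ha' : a ∈ (s : Multiset ℕ) := Multiset.mem_of_mem_erase ha0
    have h1 := Finset.mem_Icc.mp (Finset.mem_sym_iff.mp hs'.1 a (Sym.mem_coe.mp ha'))
    have h2 : a ≤ l := hs'.2 ▸ Multiset.le_sup ha'
    exact Finset.mem_Icc.mpr ⟨h1.1, h2⟩
  · -- hj : cons lands in the fiber
    intro t ht
    rw [Finset.mem_filter]
    have hl' := Finset.mem_Icc.mp hl
    constructor
    · rw [Finset.mem_sym_iff]
      intro a ha
      rcases Sym.mem_cons.mp ha with rfl | ha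
      · exact hl
      · have := Finset.mem_Icc.mp (Finset.mem_sym_iff.mp ht a ha)
        exact Finset.mem_Icc.mpr ⟨this.1, le_trans this.2 hl'.2⟩
    · rw [Sym.coe_cons, Multiset.sup_cons]
      have : (t : Multiset ℕ).sup ≤ l := by
        rw [Multiset.sup_le]
        intro b hb
        exact (Finset.mem_Icc.mp (Finset.mem_sym_iff.mp ht b (Sym.mem_coe.mp hb))).2
      exact sup_eq_left.mpr this
  · -- left inverse : cons (erase) = s
    intro s hs
    exact Sym.cons_erase (l_mem s hs)
  · -- right inverse : erase (cons) = t
    intro t ht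
    exact Sym.erase_cons_head t l
  · -- values
    intro s hs
    have hcoe : (s : Multiset ℕ) = l ::ₘ ((s.erase l (l_mem s hs)) : Multiset ℕ) := by
      conv_lhs => rw [← Sym.cons_erase (l_mem s hs)]
      rw [Sym.coe_cons]
    rw [hcoe, Multiset.map_cons, Multiset.prod_cons]

lemma qbinom_weighted_sum (hq1 : QH q) {k n : ℕ} (hk : 1 ≤ k) (hkn : k ≤ n) :
    ∑ l ∈ Icc k n, qBinom q l k * (q ^ l / (1 - q ^ l))
      = qBinom q n k * (q ^ k / (1 - q ^ k)) := by
  induction n, hkn using Nat.le_induction with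
  | base => rw [Finset.Icc_self, Finset.sum_singleton]
  | succ n hn ih =>
    rw [Finset.sum_Icc_succ_top (by omega), ih]
    have hr := qBinom_ratio hq1 hn
    have d1 := one_sub_ne hq1 k hk
    have d2 := one_sub_ne hq1 (n+1) (by omega)
    have hp : q ^ k * q ^ (n + 1 - k) = q ^ (n+1) := by rw [← pow_add]; congr 1; omega
    field_simp
    linear_combination (-(q^k)) * hr - qBinom q (n+1) k * hp

noncomputable def Sd (q : ℂ) (m n : ℕ) (a : ℤ) : ℂ :=
  ∑ k ∈ Finset.Icc 1 n,
    (-1 : ℂ) ^ (k - 1) * qBinom q n k *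
      q ^ (((k * (k - 1) / 2 : ℕ) : ℤ) + (k : ℤ) * a) / (1 - q ^ k) ^ m

lemma dilcher (hq : q ≠ 0) (hq1 : QH q) :
    ∀ m n, 1 ≤ n → Sd q m n (m : ℤ) = hSym q n m := by
  intro m
  induction m with
  | zero =>
    intro n hn
    rw [hSym_zero, Sd]
    have : ∀ k ∈ Icc 1 n,
        (-1:ℂ)^(k-1) * qBinom q n k * q ^ (((k*(k-1)/2 : ℕ):ℤ) + (k:ℤ) * ((0:ℕ):ℤ)) / (1 - q^k)^0
        = (-1:ℂ)^(k-1) * qBinom q n k * q ^ (((k*(k-1)/2 : ℕ):ℤ) + (k:ℤ) * (-((0:ℕ):ℤ))) := by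
      intro k hk
      norm_num
    rw [Finset.sum_congr rfl this]
    exact Sd_m_zero hq hq1 hn (by omega)
  | succ m ih =>
    intro n hn
    have step1 : hSym q n (m+1) = ∑ l ∈ Icc 1 n, (q^l/(1-q^l)) * Sd q m l m := by
      rw [hSym_succ]
      apply Finset.sum_congr rfl
      intro l hl
      rw [ih l (Finset.mem_Icc.mp hl).1]
    rw [step1]
    have step2 : ∀ l ∈ Icc 1 n, (q^l/(1-q^l)) * Sd q m l m
        = ∑ k ∈ Icc 1 l, (q^l/(1-q^l)) *
            ((-1:ℂ)^(k-1) * qBinom q l k * q ^ (((k*(k-1)/2 : ℕ):ℤ) + (k:ℤ) * (m:ℤ)) / (1 - q^k)^m) := by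
      intro l hl
      rw [Sd, Finset.mul_sum]
    rw [Finset.sum_congr rfl step2]
    rw [Finset.sum_comm' (t' := Icc 1 n) (s' := fun k => Icc k n) (by
      intro l k
      simp only [Finset.mem_Icc]
      omega)]
    rw [Sd]
    apply Finset.sum_congr rfl
    intro k hk
    obtain ⟨hk1, hkn⟩ := Finset.mem_Icc.mp hk
    have hfac : ∀ l ∈ Icc k n, (q^l/(1-q^l)) *
        ((-1:ℂ)^(k-1) * qBinom q l k * q ^ (((k*(k-1)/2 : ℕ):ℤ) + (k:ℤ) * (m:ℤ)) / (1 - q^k)^m)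
        = ((-1:ℂ)^(k-1) * q ^ (((k*(k-1)/2 : ℕ):ℤ) + (k:ℤ) * (m:ℤ)) / (1 - q^k)^m) *
          (qBinom q l k * (q^l/(1-q^l))) := by
      intro l hl
      ring
    rw [Finset.sum_congr rfl hfac, ← Finset.mul_sum, qbinom_weighted_sum hq1 hk1 hkn]
    have hz : q ^ (((k*(k-1)/2 : ℕ):ℤ) + (k:ℤ) * ((m:ℕ)+1:ℕ)) =
        q ^ (((k*(k-1)/2 : ℕ):ℤ) + (k:ℤ) * (m:ℤ)) * q ^ k := by
      push_cast
      rw [mul_add, mul_one, ← add_assoc, zpow_add₀ hq]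
      norm_num
    rw [hz, pow_succ]
    have d1 := one_sub_ne hq1 k hk1
    have dm : (1 - q^k)^m ≠ 0 := pow_ne_zero _ d1
    field_simp

lemma Sd_step (hq : q ≠ 0) (hq1 : QH q) (m n : ℕ) (a : ℤ) :
    Sd q (m+1) n (a-1) = Sd q (m+1) n a + Sd q m n (a-1) := by
  rw [Sd, Sd, Sd, ← Finset.sum_add_distrib]
  apply Finset.sum_congr rfl
  intro k hk
  have hk1 := (Finset.mem_Icc.mp hk).1
  have d1 := one_sub_ne hq1 k hk1
  have dm : (1 - q^k)^m ≠ 0 := pow_ne_zero _ d1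
  have hz : q ^ (((k*(k-1)/2 : ℕ):ℤ) + (k:ℤ) * a)
      = q ^ (((k*(k-1)/2 : ℕ):ℤ) + (k:ℤ) * (a-1)) * q ^ k := by
    rw [← zpow_natCast q k, ← zpow_add₀ hq]
    congr 1
    ring
  rw [hz, pow_succ]
  field_simp
  ring

lemma main_ind (hq : q ≠ 0) (hq1 : QH q) :
    ∀ r m n : ℕ, 1 ≤ n → r ≤ m + n - 1 →
      Sd q m n ((m:ℤ) - (r:ℤ)) = ∑ j ∈ range (m+1), ((r.choose (m-j) : ℕ) : ℂ) * hSym q n j := by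
  intro r
  induction r with
  | zero =>
    intro m n hn _
    have h1 : ((m:ℤ) - ((0:ℕ):ℤ)) = (m:ℤ) := by norm_num
    rw [h1, dilcher hq hq1 m n hn, Finset.sum_range_succ]
    have h2 : ∀ j ∈ range m, ((Nat.choose 0 (m-j) : ℕ) : ℂ) * hSym q n j = 0 := by
      intro j hj
      have : m - j ≠ 0 := by have := Finset.mem_range.mp hj; omega
      rw [Nat.choose_eq_zero_of_lt (by omega)]
      norm_num
    rw [Finset.sum_eq_zero h2]
    simp
  | succ r ih =>
    intro m n hn hr
    match m with
    | 0 =>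
      have h1 : ∀ k ∈ Icc 1 n,
          (-1:ℂ)^(k-1) * qBinom q n k * q ^ (((k*(k-1)/2 : ℕ):ℤ) + (k:ℤ) * (((0:ℕ):ℤ) - ((r+1:ℕ):ℤ))) / (1 - q^k)^0
          = (-1:ℂ)^(k-1) * qBinom q n k * q ^ (((k*(k-1)/2 : ℕ):ℤ) + (k:ℤ) * (-(((r+1):ℕ):ℤ))) := by
        intro k hk
        norm_num
      rw [Sd, Finset.sum_congr rfl h1, Sd_m_zero hq hq1 hn (by omega)]
      simp [hSym_zero]
    | m+1 =>
      have e1 : ((m+1:ℕ):ℤ) - ((r+1:ℕ):ℤ) = (((m+1:ℕ):ℤ) - (r:ℤ)) - 1 := by push_cast; ring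
      rw [e1, Sd_step hq hq1 m n]
      have e2 : (((m+1:ℕ):ℤ) - (r:ℤ)) - 1 = ((m:ℕ):ℤ) - (r:ℤ) := by push_cast; ring
      rw [e2, ih (m+1) n hn (by omega), ih m n hn (by omega)]
      rw [Finset.sum_range_succ, Finset.sum_range_succ (n := m+1)]
      have e3 : ∀ j ∈ range (m+1),
          (((r+1).choose (m+1-j) : ℕ) : ℂ) * hSym q n j
          = ((r.choose (m+1-j) : ℕ) : ℂ) * hSym q n j + ((r.choose (m-j) : ℕ) : ℂ) * hSym q n j := by
        intro j hj
        have hjm := Finset.mem_range.mp hj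
        have e4 : m + 1 - j = (m - j) + 1 := by omega
        rw [e4, Nat.choose_succ_succ]
        push_cast
        ring
      rw [Finset.sum_congr rfl e3, Finset.sum_add_distrib]
      simp only [Nat.sub_self, Nat.choose_zero_right]
      push_cast
      ring


/-- Generalized Dilcher identity. -/
theorem stmt9 (m n r : ℕ) (hm : 1 ≤ m) (hn : 1 ≤ n) (hr : r ≤ m + n - 1)
    (q : ℂ) (hq : q ≠ 0) (hq1 : ∀ j, 1 ≤ j → q ^ j ≠ 1) :
    ∑ k ∈ Finset.Icc 1 n,
        (-1 : ℂ) ^ (k - 1) * qBinom q n k *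
          q ^ (((k * (k - 1) / 2 : ℕ) : ℤ) + (k : ℤ) * ((m : ℤ) - r)) / (1 - q ^ k) ^ m
      = ∑ j ∈ Finset.range (m + 1), (r.choose (m - j) : ℂ) * hSym q n j := by
  have := main_ind hq hq1 r m n hn hr
  rw [Sd] at this
  exact this
end

section
/- For m, n ≥ 1 the Dilcher identity holds: ∑_{k=1}^{n} (-1)^{k-1} [n choose k]_q q^{k(k-1)/2 + km} / (1 − q^k)^m = ∑_{1 ≤ k_1 ≤ ⋯ ≤ k_m ≤ n} q^{k_1+⋯+k_m} / ((1−q^{k_1})⋯(1−q^{k_m})), as rational functions in q. -/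
open Finset

noncomputable def lagW (t : ℕ → ℂ) (s : Finset ℕ) (k : ℕ) : ℂ :=
  ∏ i ∈ s.erase k, t k / (t k - t i)

lemma lemC (t : ℕ → ℂ) :
    ∀ s : Finset ℕ, s.Nonempty → (∀ i ∈ s, ∀ j ∈ s, i ≠ j → t i ≠ t j) →
    ∀ x : ℂ, (∀ i ∈ s, x ≠ t i) →
      ∑ k ∈ s, lagW t s k * (x / (x - t k)) = ∏ i ∈ s, (x / (x - t i)) := by
  intro s
  induction s using Finset.induction_on with
  | empty => rintro ⟨a, ha⟩; simp at ha
  | @insert a s ha ih =>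
    intro _ hd x hx
    rcases s.eq_empty_or_nonempty with rfl | hs
    · simp [lagW]
    · have hd' : ∀ i ∈ s, ∀ j ∈ s, i ≠ j → t i ≠ t j := fun i hi j hj hij =>
        hd i (mem_insert_of_mem hi) j (mem_insert_of_mem hj) hij
      have hka : ∀ k ∈ s, t k - t a ≠ 0 := fun k hk => sub_ne_zero.mpr
        (hd k (mem_insert_of_mem hk) a (mem_insert_self a s) (fun h => ha (h ▸ hk)))
      have hxk : ∀ k ∈ s, x - t k ≠ 0 := fun k hk =>
        sub_ne_zero.mpr (hx k (mem_insert_of_mem hk))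
      have hxa : x - t a ≠ 0 := sub_ne_zero.mpr (hx a (mem_insert_self a s))
      have hta : ∀ i ∈ s, t a ≠ t i := fun i hi =>
        hd a (mem_insert_self a s) i (mem_insert_of_mem hi) (fun h => ha (h ▸ hi))
      have hlagA : lagW t (insert a s) a = ∏ i ∈ s, t a / (t a - t i) := by
        rw [lagW, Finset.erase_insert ha]
      have hlagK : ∀ k ∈ s, lagW t (insert a s) k = t k / (t k - t a) * lagW t s k := by
        intro k hk
        have hak : a ≠ k := fun h => ha (h ▸ hk)
        rw [lagW, lagW, Finset.erase_insert_of_ne hak,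
          Finset.prod_insert (fun h => ha (Finset.mem_of_mem_erase h))]
      rw [Finset.sum_insert ha, Finset.prod_insert ha, ← ih hs hd' x
        (fun i hi => hx i (mem_insert_of_mem hi)), Finset.mul_sum, hlagA]
      have key : ∀ k ∈ s, x / (x - t a) * (lagW t s k * (x / (x - t k)))
          = lagW t (insert a s) k * (x / (x - t k))
            + lagW t s k * (t a / (t a - t k)) * (x / (x - t a)) := by
        intro k hk
        rw [hlagK k hk]
        have h1 := hka k hk
        have h2 := hxk k hk
        have h3 : t a - t k ≠ 0 := sub_ne_zero.mpr (hta k hk)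
        field_simp
        ring
      rw [Finset.sum_congr rfl key, Finset.sum_add_distrib, ← Finset.sum_mul,
        ih hs hd' (t a) hta]
      ring

noncomputable def hh (t : ℕ → ℂ) (s : Finset ℕ) (m : ℕ) : ℂ :=
  ∑ u ∈ s.sym m, (Multiset.map t (u : Multiset ℕ)).prod

lemma hh_zero (t : ℕ → ℂ) (s : Finset ℕ) : hh t s 0 = 1 := by
  rw [hh, Finset.sym_zero, Finset.sum_singleton]
  rfl

lemma hh_singleton (t : ℕ → ℂ) (a : ℕ) (m : ℕ) : hh t {a} m = t a ^ m := by
  induction m with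
  | zero => simp [hh_zero]
  | succ m ih =>
    rw [hh, Finset.sym_succ]
    simp only [Finset.sup_singleton]
    rw [Finset.sum_image (fun u _ v _ h => (Sym.cons_inj_right a u v).mp h)]
    simp only [Sym.coe_cons, Multiset.map_cons, Multiset.prod_cons]
    rw [← Finset.mul_sum, ← hh, ih, pow_succ, mul_comm]

lemma hh_insert (t : ℕ → ℂ) (s : Finset ℕ) (a : ℕ) (ha : a ∉ s) (m : ℕ) :
    hh t (insert a s) (m + 1) = hh t s (m + 1) + t a * hh t (insert a s) m := by
  classical
  have h1 : ((insert a s).sym (m+1)).filter (fun u => a ∉ u) = s.sym (m+1) := by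
    ext u
    simp only [Finset.mem_filter, Finset.mem_sym_iff, Finset.mem_insert]
    constructor
    · rintro ⟨h, hau⟩ b hb
      rcases h b hb with rfl | hbs
      · exact absurd hb hau
      · exact hbs
    · intro h
      exact ⟨fun b hb => Or.inr (h b hb), fun hau => ha (h a hau)⟩
  have h2 : ((insert a s).sym (m+1)).filter (fun u => a ∈ u)
      = ((insert a s).sym m).image (Sym.cons a) := by
    ext u
    simp only [Finset.mem_filter, Finset.mem_sym_iff, Finset.mem_image]
    constructor
    · rintro ⟨h, hau⟩
      refine ⟨u.erase a hau, fun b hb => h b ?_, Sym.cons_erase hau⟩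
      have : (b : ℕ) ∈ (u : Multiset ℕ).erase a := by
        rwa [← Sym.coe_erase hau]
      exact Multiset.mem_of_mem_erase this
    · rintro ⟨v, hv, rfl⟩
      constructor
      · intro b hb
        rw [Sym.mem_cons] at hb
        rcases hb with h | hb
        · rw [h]; exact Finset.mem_insert_self a s
        · exact hv b hb
      · exact Sym.mem_cons_self a v
  rw [hh, ← Finset.sum_filter_add_sum_filter_not ((insert a s).sym (m+1)) (fun u => a ∈ u),
    h2]
  have h1' : ((insert a s).sym (m+1)).filter (fun u => ¬ a ∈ u) = s.sym (m+1) := by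
    rw [← h1]
  rw [h1', Finset.sum_image (fun u _ v _ h => (Sym.cons_inj_right a u v).mp h)]
  simp only [Sym.coe_cons, Multiset.map_cons, Multiset.prod_cons]
  rw [← Finset.mul_sum, ← hh, ← hh]
  ring

lemma lemB (t : ℕ → ℂ) :
    ∀ s : Finset ℕ, s.Nonempty → (∀ i ∈ s, ∀ j ∈ s, i ≠ j → t i ≠ t j) →
    ∀ m : ℕ, hh t s m = ∑ k ∈ s, lagW t s k * t k ^ m := by
  intro s
  induction s using Finset.induction_on with
  | empty => rintro ⟨a, ha⟩; simp at ha
  | @insert a s ha ih =>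
    intro _ hd m
    rcases s.eq_empty_or_nonempty with rfl | hs
    · rw [show insert a (∅ : Finset ℕ) = {a} from rfl, hh_singleton]
      simp [lagW]
    · have hd' : ∀ i ∈ s, ∀ j ∈ s, i ≠ j → t i ≠ t j := fun i hi j hj hij =>
        hd i (mem_insert_of_mem hi) j (mem_insert_of_mem hj) hij
      have hka : ∀ k ∈ s, t k - t a ≠ 0 := fun k hk => sub_ne_zero.mpr
        (hd k (mem_insert_of_mem hk) a (mem_insert_self a s) (fun h => ha (h ▸ hk)))
      have hta : ∀ i ∈ s, t a ≠ t i := fun i hi =>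
        hd a (mem_insert_self a s) i (mem_insert_of_mem hi) (fun h => ha (h ▸ hi))
      have hlagA : lagW t (insert a s) a = ∏ i ∈ s, t a / (t a - t i) := by
        rw [lagW, Finset.erase_insert ha]
      have hlagK : ∀ k ∈ s, lagW t (insert a s) k = t k / (t k - t a) * lagW t s k := by
        intro k hk
        have hak : a ≠ k := fun h => ha (h ▸ hk)
        rw [lagW, lagW, Finset.erase_insert_of_ne hak,
          Finset.prod_insert (fun h => ha (Finset.mem_of_mem_erase h))]
      induction m with
      | zero =>
        rw [hh_zero, Finset.sum_insert ha, hlagA]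
        have e1 : ∀ k ∈ s, lagW t (insert a s) k * t k ^ 0
            = lagW t s k * t k ^ 0 - lagW t s k * (t a / (t a - t k)) := by
          intro k hk
          rw [hlagK k hk]
          have h1 := hka k hk
          have h2 : t a - t k ≠ 0 := sub_ne_zero.mpr (hta k hk)
          field_simp
          ring
        rw [Finset.sum_congr rfl e1, Finset.sum_sub_distrib,
          lemC t s hs hd' (t a) hta]
        have h0 := ih hs hd' 0
        rw [hh_zero] at h0
        rw [← h0]
        ring
      | succ m ihm =>
        rw [hh_insert t s a ha m, ihm, ih hs hd' (m+1), Finset.mul_sum,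
          Finset.sum_insert ha, Finset.sum_insert ha]
        have key : ∀ k ∈ s, lagW t (insert a s) k * t k ^ (m+1)
            = lagW t s k * t k ^ (m+1) + t a * (lagW t (insert a s) k * t k ^ m) := by
          intro k hk
          rw [hlagK k hk]
          have h1 := hka k hk
          field_simp
          ring
        rw [Finset.sum_congr rfl key, Finset.sum_add_distrib]
        ring

-- reindex helpers
lemma prod_reflect (f : ℕ → ℂ) (k : ℕ) :
    ∏ i ∈ Finset.Icc 1 (k-1), f (k - i) = ∏ i ∈ Finset.Icc 1 (k-1), f i :=
  Finset.prod_bij' (fun i _ => k - i) (fun i _ => k - i)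
    (fun a ha => by simp only [Finset.mem_Icc] at ha ⊢; omega)
    (fun a ha => by simp only [Finset.mem_Icc] at ha ⊢; omega)
    (fun a ha => by simp only [Finset.mem_Icc] at ha; omega)
    (fun a ha => by simp only [Finset.mem_Icc] at ha; omega)
    (fun a ha => rfl)

lemma sum_reflect (k : ℕ) :
    ∑ i ∈ Finset.Icc 1 (k-1), (k - i) = ∑ i ∈ Finset.Icc 1 (k-1), i :=
  Finset.sum_bij' (fun i _ => k - i) (fun i _ => k - i)
    (fun a ha => by simp only [Finset.mem_Icc] at ha ⊢; omega)
    (fun a ha => by simp only [Finset.mem_Icc] at ha ⊢; omega)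
    (fun a ha => by simp only [Finset.mem_Icc] at ha; omega)
    (fun a ha => by simp only [Finset.mem_Icc] at ha; omega)
    (fun a ha => rfl)

lemma gauss_icc (k : ℕ) (hk : 1 ≤ k) : ∑ i ∈ Finset.Icc 1 (k-1), i = k * (k-1) / 2 := by
  have h : Finset.range k = insert 0 (Finset.Icc 1 (k-1)) := by
    ext i; simp only [Finset.mem_range, Finset.mem_insert, Finset.mem_Icc]; omega
  have := Finset.sum_range_id k
  rw [h, Finset.sum_insert (by simp), zero_add] at this
  exact this

lemma prod_shift (f : ℕ → ℂ) (k n : ℕ) :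
    ∏ i ∈ Finset.Icc (k+1) n, f (i - k) = ∏ i ∈ Finset.Icc 1 (n-k), f i :=
  Finset.prod_bij' (fun i _ => i - k) (fun i _ => i + k)
    (fun a ha => by simp only [Finset.mem_Icc] at ha ⊢; omega)
    (fun a ha => by simp only [Finset.mem_Icc] at ha ⊢; omega)
    (fun a ha => by simp only [Finset.mem_Icc] at ha; omega)
    (fun a ha => by simp only [Finset.mem_Icc] at ha; omega)
    (fun a ha => rfl)

lemma qPoch_eq (q : ℂ) (n : ℕ) : qPoch q q n = ∏ i ∈ Finset.Icc 1 n, (1 - q ^ i) := by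
  induction n with
  | zero => simp [qPoch]
  | succ n ih =>
    rw [qPoch, Finset.prod_range_succ, ← qPoch, ih,
      show Finset.Icc 1 (n+1) = insert (n+1) (Finset.Icc 1 n) by
        ext i; simp [Finset.mem_Icc]; omega,
      Finset.prod_insert (by simp), ← pow_succ']
    ring


section
variable (q : ℂ) (hq : q ≠ 0) (hq1 : ∀ j, 1 ≤ j → q ^ j ≠ 1)

include hq hq1 in
lemma pow_ne_pow : ∀ i j : ℕ, i < j → (q : ℂ) ^ i ≠ q ^ j := by
  intro i j hij h
  have h2 : q ^ i * q ^ (j - i) = q ^ i * 1 := by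
    rw [← pow_add, mul_one, show i + (j - i) = j by omega, h]
  have := mul_left_cancel₀ (pow_ne_zero i hq) h2
  exact hq1 (j - i) (by omega) this

include hq1 in
lemma one_sub_ne_s10 (i : ℕ) (hi : 1 ≤ i) : (1 : ℂ) - q ^ i ≠ 0 :=
  sub_ne_zero.mpr (fun h => hq1 i hi h.symm)

include hq hq1 in
lemma qpow_sub_ne (i j : ℕ) (hij : i ≠ j) : (q : ℂ) ^ i - q ^ j ≠ 0 := by
  rcases lt_or_gt_of_ne hij with h | h
  · exact sub_ne_zero.mpr (pow_ne_pow q hq hq1 i j h)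
  · exact sub_ne_zero.mpr (Ne.symm (pow_ne_pow q hq hq1 j i h))

end


lemma lemA (q : ℂ) (hq : q ≠ 0) (hq1 : ∀ j, 1 ≤ j → q ^ j ≠ 1) (n k : ℕ)
    (hk1 : 1 ≤ k) (hkn : k ≤ n) :
    lagW (fun i => q ^ i / (1 - q ^ i)) (Finset.Icc 1 n) k
      = (-1 : ℂ) ^ (k - 1) * qBinom q n k * q ^ (k * (k - 1) / 2) := by
  have hsub := one_sub_ne_s10 q hq1
  have hpne := qpow_sub_ne q hq hq1
  have step1 : ∀ i ∈ (Finset.Icc 1 n).erase k,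
      (fun i => q ^ i / (1 - q ^ i)) k / ((fun i => q ^ i / (1 - q ^ i)) k
        - (fun i => q ^ i / (1 - q ^ i)) i)
      = q ^ k * (1 - q ^ i) / (q ^ k - q ^ i) := by
    intro i hi
    obtain ⟨hik, hi'⟩ := Finset.mem_erase.mp hi
    rw [Finset.mem_Icc] at hi'
    have h1 := hsub k hk1
    have h2 := hsub i hi'.1
    have h3 := hpne k i (Ne.symm hik)
    have hd : q ^ k / (1 - q ^ k) - q ^ i / (1 - q ^ i)
        = (q ^ k - q ^ i) / ((1 - q ^ k) * (1 - q ^ i)) := by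
      field_simp
      ring
    simp only
    rw [hd]
    field_simp
  have hsplit : (Finset.Icc 1 n).erase k = Finset.Icc 1 (k-1) ∪ Finset.Icc (k+1) n := by
    ext i
    simp only [Finset.mem_erase, Finset.mem_Icc, Finset.mem_union]
    omega
  have hdisj : Disjoint (Finset.Icc 1 (k-1)) (Finset.Icc (k+1) n) := by
    rw [Finset.disjoint_left]
    intro i hi hi2
    simp only [Finset.mem_Icc] at hi hi2
    omega
  rw [lagW, Finset.prod_congr rfl step1, hsplit, Finset.prod_union hdisj]
  have part1 : ∏ i ∈ Finset.Icc 1 (k-1), q ^ k * (1 - q ^ i) / (q ^ k - q ^ i)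
      = (-1 : ℂ) ^ (k-1) * q ^ (k*(k-1)/2) := by
    have e : ∀ i ∈ Finset.Icc 1 (k-1), q ^ k * (1 - q ^ i) / (q ^ k - q ^ i)
        = (-1 : ℂ) * (q ^ (k - i) * ((1 - q ^ i) / (1 - q ^ (k - i)))) := by
      intro i hi
      rw [Finset.mem_Icc] at hi
      have hqk : (q : ℂ) ^ k = q ^ i * q ^ (k - i) := by
        rw [← pow_add]; congr 1; omega
      have h2 := hsub i hi.1
      have h3 := hsub (k - i) (by omega : 1 ≤ k - i)
      have h4 := hpne k i (by omega)
      rw [hqk] at h4 ⊢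
      have h5 := pow_ne_zero i hq
      field_simp
      ring_nf
      have h6 : -1 + q ^ (k - i) ≠ 0 := by
        intro h; apply h3; linear_combination -h
      field_simp
      ring
    rw [Finset.prod_congr rfl e, Finset.prod_mul_distrib, Finset.prod_mul_distrib,
      Finset.prod_const, Finset.prod_pow_eq_pow_sum, Finset.prod_div_distrib,
      prod_reflect (fun j => 1 - q ^ j) k, Nat.card_Icc, sum_reflect, gauss_icc k hk1]
    rw [div_self (Finset.prod_ne_zero_iff.mpr
      (fun i hi => hsub i (Finset.mem_Icc.mp hi).1))]
    simp
  have part2 : ∏ i ∈ Finset.Icc (k+1) n, q ^ k * (1 - q ^ i) / (q ^ k - q ^ i)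
      = qBinom q n k := by
    have e : ∀ i ∈ Finset.Icc (k+1) n, q ^ k * (1 - q ^ i) / (q ^ k - q ^ i)
        = (1 - q ^ i) / (1 - q ^ (i - k)) := by
      intro i hi
      rw [Finset.mem_Icc] at hi
      have hqi : (q : ℂ) ^ i = q ^ k * q ^ (i - k) := by
        rw [← pow_add]; congr 1; omega
      have h2 := hsub (i - k) (by omega : 1 ≤ i - k)
      have h4 := hpne k i (by omega)
      rw [hqi] at h4 ⊢
      have h5 := pow_ne_zero k hq
      field_simp
    rw [Finset.prod_congr rfl e, Finset.prod_div_distrib,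
      prod_shift (fun j => 1 - q ^ j) k n, ← qPoch_eq]
    have hIccsplit : Finset.Icc 1 n = Finset.Icc 1 k ∪ Finset.Icc (k+1) n := by
      ext i
      simp only [Finset.mem_Icc, Finset.mem_union]
      omega
    have hdisj2 : Disjoint (Finset.Icc 1 k) (Finset.Icc (k+1) n) := by
      rw [Finset.disjoint_left]
      intro i hi hi2
      simp only [Finset.mem_Icc] at hi hi2
      omega
    have hknz : qPoch q q k ≠ 0 := by
      rw [qPoch_eq]
      exact Finset.prod_ne_zero_iff.mpr (fun i hi => hsub i (Finset.mem_Icc.mp hi).1)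
    have r2 : ∏ i ∈ Finset.Icc (k+1) n, (1 - q ^ i) = qPoch q q n / qPoch q q k := by
      rw [eq_div_iff hknz, qPoch_eq, qPoch_eq, mul_comm, ← Finset.prod_union hdisj2,
        ← hIccsplit]
    rw [r2, qBinom, div_div]
  rw [part1, part2]
  ring


/-- Dilcher's identity. -/
theorem stmt10 (m n : ℕ) (hm : 1 ≤ m) (hn : 1 ≤ n)
    (q : ℂ) (hq : q ≠ 0) (hq1 : ∀ j, 1 ≤ j → q ^ j ≠ 1) :
    ∑ k ∈ Finset.Icc 1 n,
        (-1 : ℂ) ^ (k - 1) * qBinom q n k * q ^ (k * (k - 1) / 2 + k * m) / (1 - q ^ k) ^ m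
      = hSym q n m := by
  have hsub := one_sub_ne_s10 q hq1
  have hpne := qpow_sub_ne q hq hq1
  have hd : ∀ i ∈ Finset.Icc 1 n, ∀ j ∈ Finset.Icc 1 n, i ≠ j →
      (fun i => q ^ i / (1 - q ^ i)) i ≠ (fun i => q ^ i / (1 - q ^ i)) j := by
    intro i hi j hj hij h
    rw [Finset.mem_Icc] at hi hj
    have h1 := hsub i hi.1
    have h2 := hsub j hj.1
    simp only at h
    rw [div_eq_div_iff h1 h2] at h
    exact hpne i j hij (by linear_combination h)
  have hne0 : (Finset.Icc 1 n).Nonempty := ⟨1, Finset.mem_Icc.mpr ⟨le_refl 1, hn⟩⟩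
  have hRHS : hSym q n m = hh (fun i => q ^ i / (1 - q ^ i)) (Finset.Icc 1 n) m := rfl
  rw [hRHS, lemB _ _ hne0 hd m]
  apply Finset.sum_congr rfl
  intro k hk
  rw [Finset.mem_Icc] at hk
  rw [lemA q hq hq1 n k hk.1 hk.2]
  rw [pow_add, div_pow, ← pow_mul]
  ring
end

section
/- Partial fraction decomposition: for n ≥ 0, 1/∏_{i=1}^{n+1}(z − x q^i) = ∑_{k=0}^{n} (−1)^k q^{\binom{n−k}{2} − \binom{n+1}{2}} x^{−n} / ((q;q)_k (q;q)_{n−k} (z − x q^{k+1})), as an identity of rational functions in z, x, q. -/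
open Finset

lemma pf_lemma {ι : Type*} [DecidableEq ι] (s : Finset ι) (hs : s.Nonempty) (v : ι → ℂ) (z : ℂ)
    (hinj : Set.InjOn v s) (hz : ∀ i ∈ s, z - v i ≠ 0) :
    1 / ∏ i ∈ s, (z - v i)
      = ∑ j ∈ s, 1 / ((z - v j) * ∏ i ∈ s.erase j, (v j - v i)) := by
  have h := congrArg (Polynomial.eval z) (Lagrange.sum_basis hinj hs)
  simp only [Polynomial.eval_finset_sum, Polynomial.eval_one, Lagrange.basis,
    Lagrange.basisDivisor, Polynomial.eval_prod, Polynomial.eval_mul, Polynomial.eval_C,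
    Polynomial.eval_sub, Polynomial.eval_X] at h
  conv_lhs => rw [← h, Finset.sum_div]
  refine Finset.sum_congr rfl fun j hj => ?_
  have hPj : ∏ i ∈ s, (z - v i) = (z - v j) * ∏ i ∈ s.erase j, (z - v i) :=
    (Finset.mul_prod_erase s _ hj).symm
  have hne : ∏ i ∈ s.erase j, (z - v i) ≠ 0 :=
    Finset.prod_ne_zero_iff.2 fun i hi => hz i (Finset.mem_of_mem_erase hi)
  have hvne : ∏ i ∈ s.erase j, (v j - v i) ≠ 0 := by
    refine Finset.prod_ne_zero_iff.2 fun i hi => ?_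
    have := Finset.mem_erase.1 hi
    intro hc
    exact this.1 ((hinj hj this.2 (by linear_combination hc)).symm)
  rw [Finset.prod_mul_distrib, Finset.prod_inv_distrib, hPj]
  rw [inv_mul_eq_div, div_div, div_eq_div_iff
    (mul_ne_zero hvne (mul_ne_zero (hz j hj) hne)) (mul_ne_zero (hz j hj) hvne)]
  ring

lemma qPoch_ne_zero (q : ℂ) (hq1 : ∀ j, 1 ≤ j → q ^ j ≠ 1) (m : ℕ) : qPoch q q m ≠ 0 := by
  refine Finset.prod_ne_zero_iff.2 fun j _ => ?_
  intro hc
  exact hq1 (j + 1) (by omega) (by rw [pow_succ']; linear_combination -hc)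

lemma sum_helper (k : ℕ) : ∑ j ∈ Finset.range k, (1 + j) = k * (k + 1) / 2 := by
  have e1 : ∑ j ∈ range k, (1 + j) = ∑ i ∈ range (k + 1), i := by
    rw [Finset.sum_range_succ']
    simp [add_comm]
  have e2 := Finset.sum_range_id_mul_two (k + 1)
  rw [e1, mul_comm k (k + 1)]
  simp only [Nat.add_sub_cancel] at e2
  rw [← e2, Nat.mul_div_cancel _ (by norm_num : 0 < 2)]

lemma prodA (q x : ℂ) (k : ℕ) :
    ∏ i ∈ Icc 1 k, (x * q ^ (k + 1) - x * q ^ i)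
      = (-1) ^ k * x ^ k * q ^ (k * (k + 1) / 2) * qPoch q q k := by
  rw [← Finset.Ico_add_one_right_eq_Icc, Finset.prod_Ico_eq_prod_range, Nat.add_sub_cancel]
  have h1 : ∀ j ∈ range k, x * q ^ (k + 1) - x * q ^ (1 + j)
      = (-x * q ^ (1 + j)) * (1 - q ^ (k - j)) := by
    intro j hj
    have hj' : j < k := by simpa using hj
    have hp : q ^ (k + 1) = q ^ (1 + j) * q ^ (k - j) := by rw [← pow_add]; congr 1; omega
    rw [hp]; ring
  rw [Finset.prod_congr rfl h1, Finset.prod_mul_distrib]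
  have h3 : ∏ j ∈ range k, (-x * q ^ (1 + j) : ℂ)
      = (-1) ^ k * x ^ k * q ^ (k * (k + 1) / 2) := by
    have hc : ∀ j ∈ range k, (-x * q ^ (1 + j) : ℂ) = (-1) * x * q ^ (1 + j) :=
      fun _ _ => by ring
    rw [Finset.prod_congr rfl hc]
    rw [Finset.prod_mul_distrib, Finset.prod_mul_distrib, Finset.prod_const,
      Finset.prod_const, Finset.prod_pow_eq_pow_sum, Finset.card_range, sum_helper]
  have h4 : ∏ j ∈ range k, (1 - q ^ (k - j) : ℂ) = qPoch q q k := by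
    have hc : ∀ j ∈ range k, (1 - q ^ (k - j) : ℂ) = 1 - q ^ (k - 1 - j + 1) := by
      intro j hj
      have hj' : j < k := by simpa using hj
      congr 2
      omega
    rw [Finset.prod_congr rfl hc]
    have hrefl : ∏ j ∈ range k, (1 - q ^ (k - 1 - j + 1) : ℂ)
        = ∏ j ∈ range k, (1 - q ^ (j + 1) : ℂ) :=
      Finset.prod_range_reflect (fun j => 1 - q ^ (j + 1)) k
    rw [hrefl]
    unfold qPoch
    refine Finset.prod_congr rfl fun j _ => ?_
    rw [pow_succ']
  rw [h3, h4]

lemma prodB (q x : ℂ) (n k : ℕ) (hk : k ≤ n) :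
    ∏ i ∈ Icc (k + 2) (n + 1), (x * q ^ (k + 1) - x * q ^ i)
      = x ^ (n - k) * q ^ ((k + 1) * (n - k)) * qPoch q q (n - k) := by
  rw [← Finset.Ico_add_one_right_eq_Icc, Finset.prod_Ico_eq_prod_range]
  have hcard : n + 1 + 1 - (k + 2) = n - k := by omega
  rw [hcard]
  have h1 : ∀ j ∈ range (n - k), x * q ^ (k + 1) - x * q ^ (k + 2 + j)
      = (x * q ^ (k + 1)) * (1 - q * q ^ j) := by
    intro j _
    have hp : q ^ (k + 2 + j) = q ^ (k + 1) * (q * q ^ j) := by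
      rw [← pow_succ', ← pow_add]
      congr 1
      omega
    rw [hp]; ring
  rw [Finset.prod_congr rfl h1, Finset.prod_mul_distrib, Finset.prod_const, Finset.card_range,
    mul_pow, ← pow_mul]
  rfl

lemma exp_key (n k : ℕ) (hk : k ≤ n) :
    (((n - k) * (n - k - 1) / 2 : ℕ) : ℤ) - (((n + 1) * n / 2 : ℕ) : ℤ)
      = -((k * (k + 1) / 2 + (k + 1) * (n - k) : ℕ) : ℤ) := by
  obtain ⟨w, rfl⟩ : ∃ w, n = k + w := ⟨n - k, by omega⟩
  have hw1 : k + w - k = w := by omega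
  rw [hw1]
  have he1 : Even (k * (k + 1)) := Nat.even_mul_succ_self k
  have he2 : Even (w * (w - 1)) := by
    rcases Nat.even_or_odd w with h | h
    · exact h.mul_right _
    · exact (Nat.Odd.sub_odd h odd_one).mul_left _
  have he3 : Even ((k + w + 1) * (k + w)) := by
    rw [mul_comm]; exact Nat.even_mul_succ_self _
  obtain ⟨d, hd⟩ : ∃ d, (k + 1) * w = d := ⟨_, rfl⟩
  have hring : (k + w + 1) * (k + w) = k * (k + 1) + 2 * d + w * (w - 1) := by
    rcases w with _ | w'
    · rw [← hd]
      norm_num [Nat.mul_comm]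
    · rw [← hd]
      simp only [Nat.succ_sub_one]
      ring
  obtain ⟨a, ha⟩ := he1
  obtain ⟨b, hb⟩ := he2
  obtain ⟨c, hc⟩ := he3
  rw [ha, hb] at hring
  rw [hc] at hring
  rw [ha, hb, hc, hd]
  omega

/-- Partial fraction decomposition of `1/∏_{i=1}^{n+1}(z - x q^i)`. -/
theorem stmt13 (n : ℕ) (z x q : ℂ) (hx : x ≠ 0) (hq : q ≠ 0)
    (hq1 : ∀ j, 1 ≤ j → q ^ j ≠ 1)
    (hz : ∀ i ∈ Finset.Icc 1 (n + 1), z - x * q ^ i ≠ 0) :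
    1 / ∏ i ∈ Finset.Icc 1 (n + 1), (z - x * q ^ i)
      = ∑ k ∈ Finset.range (n + 1),
          (-1 : ℂ) ^ k *
            q ^ ((((n - k) * (n - k - 1) / 2 : ℕ) : ℤ) - (((n + 1) * n / 2 : ℕ) : ℤ)) *
            x ^ (-(n : ℤ)) /
            (qPoch q q k * qPoch q q (n - k) * (z - x * q ^ (k + 1))) := by
  classical
  have hqinj : ∀ i j : ℕ, q ^ i = q ^ j → i = j := by
    have key : ∀ i j : ℕ, i ≤ j → q ^ i = q ^ j → i = j := by
      intro i j hle h
      have hp : q ^ j = q ^ i * q ^ (j - i) := by rw [← pow_add]; congr 1; omega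
      have h1 : q ^ i * q ^ (j - i) = q ^ i * 1 := by rw [mul_one, ← hp, h]
      have h2 : q ^ (j - i) = 1 := mul_left_cancel₀ (pow_ne_zero i hq) h1
      by_contra hne
      exact hq1 (j - i) (by omega) h2
    intro i j h
    rcases le_total i j with hle | hle
    · exact key i j hle h
    · exact (key j i hle h.symm).symm
  have hv : Set.InjOn (fun i : ℕ => x * q ^ i) (Icc 1 (n + 1) : Finset ℕ) := by
    intro i _ j _ h
    simp only at h
    exact hqinj i j (mul_left_cancel₀ hx h)
  have key := pf_lemma (Icc 1 (n + 1)) ⟨1, by simp⟩ (fun i : ℕ => x * q ^ i) z hv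
    (by simpa using hz)
  rw [key]
  have hre : ∀ f : ℕ → ℂ, ∑ j ∈ Icc 1 (n + 1), f j = ∑ k ∈ range (n + 1), f (k + 1) := by
    intro f
    rw [← Finset.Ico_add_one_right_eq_Icc, Finset.sum_Ico_eq_sum_range, Nat.add_sub_cancel]
    exact Finset.sum_congr rfl fun i _ => by rw [add_comm]
  rw [hre]
  refine Finset.sum_congr rfl fun k hk => ?_
  have hkn : k ≤ n := by have := Finset.mem_range.1 hk; omega
  have herase : (Icc 1 (n + 1)).erase (k + 1) = Icc 1 k ∪ Icc (k + 2) (n + 1) := by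
    ext i
    simp only [Finset.mem_erase, Finset.mem_Icc, Finset.mem_union]
    omega
  have hdisj : Disjoint (Icc 1 k) (Icc (k + 2) (n + 1)) := by
    refine Finset.disjoint_left.2 fun a ha hb => ?_
    simp only [Finset.mem_Icc] at ha hb
    omega
  rw [herase, Finset.prod_union hdisj, prodA, prodB q x n k hkn]
  rw [exp_key n k hkn, zpow_neg, zpow_natCast]
  have hxz : (x : ℂ) ^ (-(n : ℤ)) = (x ^ n)⁻¹ := by
    rw [zpow_neg, zpow_natCast]
  rw [hxz]
  set A := k * (k + 1) / 2 with hA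
  set B := (k + 1) * (n - k) with hB
  have hzk : z - x * q ^ (k + 1) ≠ 0 := by
    refine hz (k + 1) ?_
    simp only [Finset.mem_Icc]
    omega
  have hP1 := qPoch_ne_zero q hq1 k
  have hP2 := qPoch_ne_zero q hq1 (n - k)
  have hxk : (x : ℂ) ^ k * x ^ (n - k) = x ^ n := by rw [← pow_add]; congr 1; omega
  have hqn : (q : ℂ) ^ (A + B) ≠ 0 := pow_ne_zero _ hq
  have hxn : (x : ℂ) ^ n ≠ 0 := pow_ne_zero _ hx
  have hnum : (-1 : ℂ) ^ k * (q ^ (A + B))⁻¹ * (x ^ n)⁻¹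
      = ((-1) ^ k * q ^ (A + B) * x ^ n)⁻¹ := by
    have hneg : ((-1 : ℂ) ^ k)⁻¹ = (-1) ^ k := by
      rw [← inv_pow, inv_neg, inv_one]
    rw [mul_inv, mul_inv, hneg]
  rw [hnum, inv_eq_one_div, div_div]
  congr 1
  rw [pow_add q A B, ← hxk]
  ring
end

section
/- Partial fraction identity: for n ≥ 0 and 0 ≤ r ≤ n, ∑_{k=0}^{n} (−1)^k q^{k(k+1)/2 − rk} / ((q;q)_k (q;q)_{n−k} (1 − x q^k)) = x^r / (x;q)_{n+1}, as rational functions in x and q. -/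
lemma qPoch_q_ne_zero {q : ℂ} (hq1 : ∀ j, 1 ≤ j → q ^ j ≠ 1) (m : ℕ) :
    qPoch q q m ≠ 0 := by
  refine Finset.prod_ne_zero_iff.2 fun j _ h => ?_
  apply hq1 (j+1) (by omega)
  have h1 := sub_eq_zero.mp h
  rw [pow_succ']
  exact h1.symm

lemma prodneg (q : ℂ) (hq : q ≠ 0) (m : ℕ) :
    ∏ i ∈ Finset.range m, (1 - (q⁻¹) ^ (i+1))
      = (-1) ^ m * (q⁻¹) ^ (m * (m+1) / 2) * qPoch q q m := by
  induction m with
  | zero => simp [qPoch]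
  | succ m ih =>
    have key : (q⁻¹ : ℂ)^(m+1) * q^(m+1) = 1 := by
      rw [← mul_pow, inv_mul_cancel₀ hq, one_pow]
    have hstep : (1:ℂ) - (q⁻¹)^(m+1) = -(q⁻¹)^(m+1) * (1 - q^(m+1)) := by
      linear_combination -key
    have h2 : (m+1) * (m+2) / 2 = m * (m+1) / 2 + (m+1) := by
      have : (m+1) * (m+2) = m*(m+1) + 2*(m+1) := by ring
      omega
    rw [Finset.prod_range_succ, ih, hstep, h2, pow_add]
    simp only [qPoch]
    rw [Finset.prod_range_succ]
    ring

lemma pow_inv_inj {q : ℂ} (hq : q ≠ 0) (hq1 : ∀ j, 1 ≤ j → q ^ j ≠ 1) :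
    ∀ a b : ℕ, (q⁻¹:ℂ)^a = (q⁻¹)^b → a = b := by
  have key : ∀ a b : ℕ, a < b → (q⁻¹:ℂ)^a ≠ (q⁻¹)^b := by
    intro a b hlt h
    have h' : q ^ a = q ^ b := by
      have := congrArg (·⁻¹) h
      simpa [← inv_pow] using this
    have hb : q^a * q^(b-a) = q^a * 1 := by
      rw [mul_one, ← pow_add, show a + (b-a) = b by omega]; exact h'.symm
    exact hq1 (b-a) (by omega) (mul_left_cancel₀ (pow_ne_zero a hq) hb)
  intro a b h
  rcases lt_trichotomy a b with h1|h1|h1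
  · exact absurd h (key a b h1)
  · exact h1
  · exact absurd h.symm (key b a h1)

lemma node_eval (n r : ℕ) (q : ℂ) (hq : q ≠ 0)
    (hq1 : ∀ j, 1 ≤ j → q ^ j ≠ 1) (m : ℕ) (hm : m ≤ n) :
    ∑ k ∈ Finset.range (n+1),
      ((-1 : ℂ) ^ k * q ^ (((k * (k + 1) / 2 : ℕ) : ℤ) - (r : ℤ) * k) /
          (qPoch q q k * qPoch q q (n - k))) *
        ∏ j ∈ (Finset.range (n+1)).erase k, (1 - q ^ j * (q⁻¹) ^ m)
      = ((q⁻¹) ^ m) ^ r := by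
  rw [Finset.sum_eq_single m]
  · -- main term
    have hsplit : (Finset.range (n+1)).erase m
        = Finset.range m ∪ Finset.Ico (m+1) (n+1) := by
      ext j
      simp only [Finset.mem_erase, Finset.mem_range, Finset.mem_union, Finset.mem_Ico]
      omega
    have hdisj : Disjoint (Finset.range m) (Finset.Ico (m+1) (n+1)) := by
      simp only [Finset.disjoint_left, Finset.mem_range, Finset.mem_Ico]
      omega
    have part1 : ∏ j ∈ Finset.range m, (1 - q ^ j * (q⁻¹) ^ m)
        = (-1) ^ m * (q⁻¹) ^ (m * (m+1) / 2) * qPoch q q m := by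
      rw [← prodneg q hq m]
      conv_lhs => rw [← Finset.prod_range_reflect (fun j => 1 - q ^ j * (q⁻¹) ^ m) m]
      refine Finset.prod_congr rfl fun j hj => ?_
      simp only [Finset.mem_range] at hj
      have h : (m - 1 - j) + (j + 1) = m := by omega
      have : q ^ (m-1-j) * (q⁻¹)^m = (q⁻¹)^(j+1) := by
        calc q ^ (m-1-j) * (q⁻¹)^m
            = q^(m-1-j) * ((q⁻¹)^(m-1-j) * (q⁻¹)^(j+1)) := by rw [← pow_add, h]
          _ = (q^(m-1-j) * (q⁻¹)^(m-1-j)) * (q⁻¹)^(j+1) := by ring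
          _ = (q⁻¹)^(j+1) := by rw [← mul_pow, mul_inv_cancel₀ hq, one_pow, one_mul]
      rw [this]
    have part2 : ∏ j ∈ Finset.Ico (m+1) (n+1), (1 - q ^ j * (q⁻¹) ^ m)
        = qPoch q q (n - m) := by
      rw [Finset.prod_Ico_eq_prod_range, show n + 1 - (m+1) = n - m by omega]
      refine Finset.prod_congr rfl fun i hi => ?_
      congr 1
      rw [show m + 1 + i = m + (i + 1) by omega, pow_add, mul_comm (q ^ m), mul_assoc,
        ← mul_pow, mul_inv_cancel₀ hq, one_pow, mul_one, pow_succ']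
    rw [hsplit, Finset.prod_union hdisj, part1, part2]
    have hE : q ^ (((m*(m+1)/2 : ℕ):ℤ) - (r:ℤ)*m)
        = q ^ (m*(m+1)/2) * (q⁻¹) ^ (r*m) := by
      have h1 : ((m*(m+1)/2 : ℕ):ℤ) - (r:ℤ)*m
          = ((m*(m+1)/2 : ℕ) : ℤ) + (-((r*m : ℕ) : ℤ)) := by push_cast; ring
      rw [h1, zpow_add₀ hq, zpow_natCast, zpow_neg, zpow_natCast, inv_pow]
    rw [hE]
    have hqq : q ^ (m*(m+1)/2) * (q⁻¹) ^ (m*(m+1)/2) = 1 := by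
      rw [← mul_pow, mul_inv_cancel₀ hq, one_pow]
    have hrm : ((q⁻¹ : ℂ) ^ m) ^ r = (q⁻¹) ^ (r*m) := by
      rw [← pow_mul, mul_comm]
    have hPm := qPoch_q_ne_zero hq1 m
    have hPnm := qPoch_q_ne_zero hq1 (n - m)
    have hneg : ((-1:ℂ))^m * (-1)^m = 1 := by rw [← mul_pow]; norm_num
    rw [hrm, div_mul_eq_mul_div, div_eq_iff (mul_ne_zero hPm hPnm)]
    linear_combination ((q⁻¹:ℂ)^(r*m) * qPoch q q m * qPoch q q (n-m) * ((-1:ℂ)^m * (-1)^m)) * hqq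
      + ((q⁻¹:ℂ)^(r*m) * qPoch q q m * qPoch q q (n-m)) * hneg
  · -- other terms vanish
    intro k hk hkm
    have hmem : m ∈ (Finset.range (n+1)).erase k := by
      simp only [Finset.mem_erase, Finset.mem_range]
      exact ⟨fun h => hkm h.symm, by omega⟩
    rw [Finset.prod_eq_zero hmem, mul_zero]
    rw [← mul_pow, mul_inv_cancel₀ hq, one_pow, sub_self]
  · intro h
    exact absurd (Finset.mem_range.mpr (by omega)) h

open Polynomial in
lemma poly_id (n r : ℕ) (hr : r ≤ n) (q : ℂ) (hq : q ≠ 0)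
    (hq1 : ∀ j, 1 ≤ j → q ^ j ≠ 1) (x : ℂ) :
    ∑ k ∈ Finset.range (n+1),
      ((-1 : ℂ) ^ k * q ^ (((k * (k + 1) / 2 : ℕ) : ℤ) - (r : ℤ) * k) /
          (qPoch q q k * qPoch q q (n - k))) *
        ∏ j ∈ (Finset.range (n+1)).erase k, (1 - q ^ j * x)
      = x ^ r := by
  set c : ℕ → ℂ := fun k => (-1 : ℂ) ^ k * q ^ (((k * (k + 1) / 2 : ℕ) : ℤ) - (r : ℤ) * k) /
      (qPoch q q k * qPoch q q (n - k)) with hc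
  set P : ℂ[X] := (∑ k ∈ Finset.range (n+1), C (c k) *
      ∏ j ∈ (Finset.range (n+1)).erase k, (1 - C (q ^ j) * X)) - X ^ r with hP
  have heval : ∀ y : ℂ, P.eval y
      = (∑ k ∈ Finset.range (n+1), c k *
          ∏ j ∈ (Finset.range (n+1)).erase k, (1 - q ^ j * y)) - y ^ r := by
    intro y
    simp [hP, eval_finset_sum, eval_prod]
  have hzero : P = 0 := by
    apply Polynomial.eq_zero_of_natDegree_lt_card_of_eval_eq_zero P
      (f := fun m : Fin (n+1) => (q⁻¹ : ℂ) ^ (m : ℕ))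
    · intro a b hab
      exact Fin.ext (pow_inv_inj hq hq1 _ _ hab)
    · intro i
      rw [heval]
      rw [node_eval n r q hq hq1 i (by omega)]
      ring
    · have hdeg : P.natDegree ≤ n := by
        refine le_trans (Polynomial.natDegree_sub_le _ _) (max_le ?_ ?_)
        · refine le_trans (Polynomial.natDegree_sum_le_of_forall_le _ _ fun k hk => ?_) le_rfl
          refine le_trans (Polynomial.natDegree_mul_le) ?_
          rw [Polynomial.natDegree_C, zero_add]
          refine le_trans (Polynomial.natDegree_prod_le _ _) ?_
          calc ∑ j ∈ (Finset.range (n+1)).erase k, (1 - C (q ^ j) * X).natDegree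
              ≤ ∑ j ∈ (Finset.range (n+1)).erase k, 1 := by
                refine Finset.sum_le_sum fun j _ => ?_
                refine le_trans (Polynomial.natDegree_sub_le _ _)
                  (max_le (le_trans (le_of_eq Polynomial.natDegree_one) (Nat.zero_le 1)) ?_)
                exact le_trans (Polynomial.natDegree_C_mul_le _ _) (by simp)
            _ ≤ n := by
                rw [Finset.sum_const, smul_eq_mul, mul_one,
                  Finset.card_erase_of_mem hk, Finset.card_range]
                omega
        · simpa using hr
      calc P.natDegree ≤ n := hdeg
        _ < Fintype.card (Fin (n+1)) := by simp
  have := heval x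
  rw [hzero] at this
  simp only [Polynomial.eval_zero] at this
  linear_combination -this

theorem stmt14 (n r : ℕ) (hr : r ≤ n) (x q : ℂ) (hq : q ≠ 0)
    (hq1 : ∀ j, 1 ≤ j → q ^ j ≠ 1)
    (hx : ∀ k ≤ n, 1 - x * q ^ k ≠ 0) :
    ∑ k ∈ Finset.range (n + 1),
        (-1 : ℂ) ^ k * q ^ (((k * (k + 1) / 2 : ℕ) : ℤ) - (r : ℤ) * k) /
          (qPoch q q k * qPoch q q (n - k) * (1 - x * q ^ k))
      = x ^ r / qPoch x q (n + 1) := by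
  have hQdef : qPoch x q (n+1) = ∏ j ∈ Finset.range (n+1), (1 - q ^ j * x) :=
    Finset.prod_congr rfl fun j _ => by ring
  have hQ : qPoch x q (n+1) ≠ 0 := by
    refine Finset.prod_ne_zero_iff.2 fun j hj => ?_
    exact hx j (by simpa using Nat.lt_succ_iff.mp (Finset.mem_range.mp hj))
  rw [eq_div_iff hQ, ← poly_id n r hr q hq hq1 x, Finset.sum_mul]
  refine Finset.sum_congr rfl fun k hk => ?_
  have hk' : k ≤ n := Nat.lt_succ_iff.mp (Finset.mem_range.mp hk)
  have hfac : qPoch x q (n+1) = (1 - q ^ k * x) * ∏ j ∈ (Finset.range (n+1)).erase k,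
      (1 - q ^ j * x) := by
    rw [hQdef]; exact (Finset.mul_prod_erase _ _ hk).symm
  have hPk := qPoch_q_ne_zero hq1 k
  have hPnk := qPoch_q_ne_zero hq1 (n - k)
  have hD : qPoch q q k * qPoch q q (n - k) * (1 - x * q ^ k) ≠ 0 :=
    mul_ne_zero (mul_ne_zero hPk hPnk) (hx k hk')
  rw [hfac, div_mul_eq_mul_div, div_mul_eq_mul_div, div_eq_div_iff hD (mul_ne_zero hPk hPnk)]
  ring
end

section
/- Agarwal's identity: for |q| < 1 and |x|, |t| < 1, ∑_{n=0}^∞ t^n / (1 − x q^n) = ∑_{n=0}^∞ (1 − x t q^{2n}) x^n t^n q^{n^2} / ((1 − x q^n)(1 − t q^n)). -/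
/-- Agarwal's identity. -/
theorem stmt15 (q x t : ℂ) (hq : ‖q‖ < 1) (hx : ‖x‖ < 1) (ht : ‖t‖ < 1)
    (hx1 : ∀ n : ℕ, x * q ^ n ≠ 1) (ht1 : ∀ n : ℕ, t * q ^ n ≠ 1) :
    ∑' n : ℕ, t ^ n / (1 - x * q ^ n)
      = ∑' n : ℕ, (1 - x * t * q ^ (2 * n)) * x ^ n * t ^ n * q ^ (n ^ 2) /
          ((1 - x * q ^ n) * (1 - t * q ^ n)) := by
  have hqn : ∀ n : ℕ, ‖q‖ ^ n ≤ 1 := fun n => pow_le_one₀ (norm_nonneg q) hq.le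
  have hxq : ∀ n : ℕ, ‖x * q ^ n‖ < 1 := by
    intro n
    rw [norm_mul, norm_pow]
    calc ‖x‖ * ‖q‖ ^ n ≤ ‖x‖ * 1 := mul_le_mul_of_nonneg_left (hqn n) (norm_nonneg x)
      _ = ‖x‖ := mul_one _
      _ < 1 := hx
  have htq : ∀ n : ℕ, ‖t * q ^ n‖ < 1 := by
    intro n
    rw [norm_mul, norm_pow]
    calc ‖t‖ * ‖q‖ ^ n ≤ ‖t‖ * 1 := mul_le_mul_of_nonneg_left (hqn n) (norm_nonneg t)
      _ = ‖t‖ := mul_one _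
      _ < 1 := ht
  have hd1 : ∀ n : ℕ, (1 : ℂ) - x * q ^ n ≠ 0 := fun n => sub_ne_zero.mpr (Ne.symm (hx1 n))
  have hd2 : ∀ n : ℕ, (1 : ℂ) - t * q ^ n ≠ 0 := fun n => sub_ne_zero.mpr (Ne.symm (ht1 n))
  set g : ℕ × ℕ → ℂ := fun p => x ^ p.1 * t ^ p.2 * q ^ (p.1 * p.2) with hgdef
  -- summability of the double series
  have Sg : Summable g := by
    apply Summable.of_norm
    have hb : Summable (fun p : ℕ × ℕ => ‖x‖ ^ p.1 * ‖t‖ ^ p.2) :=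
      (summable_geometric_of_lt_one (norm_nonneg x) hx).mul_of_nonneg
        (summable_geometric_of_lt_one (norm_nonneg t) ht)
        (fun n => pow_nonneg (norm_nonneg x) n) (fun n => pow_nonneg (norm_nonneg t) n)
    refine hb.of_nonneg_of_le (fun p => norm_nonneg _) (fun p => ?_)
    simp only [hgdef, norm_mul, norm_pow]
    calc ‖x‖ ^ p.1 * ‖t‖ ^ p.2 * ‖q‖ ^ (p.1 * p.2)
        ≤ ‖x‖ ^ p.1 * ‖t‖ ^ p.2 * 1 :=
          mul_le_mul_of_nonneg_left (hqn _)
            (mul_nonneg (pow_nonneg (norm_nonneg x) _) (pow_nonneg (norm_nonneg t) _))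
      _ = ‖x‖ ^ p.1 * ‖t‖ ^ p.2 := mul_one _
  -- the two half-plane pieces
  set f1 : ℕ × ℕ → ℂ := fun p => g (p.1 + p.2, p.1) with hf1def
  set f2 : ℕ × ℕ → ℂ := fun p => g (p.1, p.1 + p.2 + 1) with hf2def
  have hi1 : Function.Injective (fun p : ℕ × ℕ => (p.1 + p.2, p.1)) := by
    rintro ⟨a, b⟩ ⟨c, d⟩ h
    simp only [Prod.mk.injEq] at h ⊢
    omega
  have hi2 : Function.Injective (fun p : ℕ × ℕ => (p.1, p.1 + p.2 + 1)) := by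
    rintro ⟨a, b⟩ ⟨c, d⟩ h
    simp only [Prod.mk.injEq] at h ⊢
    omega
  have Sf1 : Summable f1 := Sg.comp_injective hi1
  have Sf2 : Summable f2 := Sg.comp_injective hi2
  -- closed forms for the fibers
  have hA : ∀ n : ℕ, HasSum (fun k => f1 (n, k))
      (x ^ n * t ^ n * q ^ (n ^ 2) * (1 - x * q ^ n)⁻¹) := by
    intro n
    have h := (hasSum_geometric_of_norm_lt_one (hxq n)).mul_left (x ^ n * t ^ n * q ^ (n ^ 2))
    convert h using 2 with k
    show x ^ (n + k) * t ^ n * q ^ ((n + k) * n) = _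
    rw [show (n + k) * n = n ^ 2 + n * k by ring, pow_add, pow_add, mul_pow, pow_mul]
    ring
    rfl
  have hB : ∀ n : ℕ, HasSum (fun k => f2 (n, k))
      (x ^ n * t ^ (n + 1) * q ^ (n ^ 2 + n) * (1 - t * q ^ n)⁻¹) := by
    intro n
    have h := (hasSum_geometric_of_norm_lt_one (htq n)).mul_left
      (x ^ n * t ^ (n + 1) * q ^ (n ^ 2 + n))
    convert h using 2 with k
    show x ^ n * t ^ (n + k + 1) * q ^ (n * (n + k + 1)) = _
    rw [show n * (n + k + 1) = n ^ 2 + n + n * k by ring, pow_add, pow_add, pow_add,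
      mul_pow, pow_mul]
    ring
    rfl
  -- marginals have sums ∑' f1 and ∑' f2
  have hAsum : HasSum (fun n => x ^ n * t ^ n * q ^ (n ^ 2) * (1 - x * q ^ n)⁻¹)
      (∑' p, f1 p) := Sf1.hasSum.prod_fiberwise hA
  have hBsum : HasSum (fun n => x ^ n * t ^ (n + 1) * q ^ (n ^ 2 + n) * (1 - t * q ^ n)⁻¹)
      (∑' p, f2 p) := Sf2.hasSum.prod_fiberwise hB
  -- g has sum ∑' f1 + ∑' f2 via complementary sets
  set s : Set (ℕ × ℕ) := Set.range (fun p : ℕ × ℕ => (p.1 + p.2, p.1)) with hsdef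
  have hcompl : sᶜ = Set.range (fun p : ℕ × ℕ => (p.1, p.1 + p.2 + 1)) := by
    ext ⟨m, n⟩
    constructor
    · intro h
      have hmn : m < n := by
        by_contra hc
        exact h ⟨(n, m - n), Prod.ext_iff.mpr ⟨by simp; omega, rfl⟩⟩
      exact ⟨(m, n - m - 1), Prod.ext_iff.mpr ⟨rfl, by simp; omega⟩⟩
    · rintro ⟨⟨a, b⟩, hab⟩ ⟨⟨c, d⟩, hcd⟩
      have hab' : a = m ∧ a + b + 1 = n := by simpa [Prod.ext_iff] using hab
      have hcd' : c + d = m ∧ c = n := by simpa [Prod.ext_iff] using hcd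
      omega
  have hgs : HasSum (g ∘ ((↑) : s → ℕ × ℕ)) (∑' p, f1 p) :=
    (hi1.hasSum_range_iff).mpr Sf1.hasSum
  have hgsc : HasSum (g ∘ ((↑) : (sᶜ : Set (ℕ × ℕ)) → ℕ × ℕ)) (∑' p, f2 p) := by
    have h2 := (hi2.hasSum_range_iff (f := g)).mpr Sf2.hasSum
    rw [← hcompl] at h2
    exact h2
  have hgtot : HasSum g (∑' p, f1 p + ∑' p, f2 p) := hgs.add_compl hgsc
  -- RHS equals the total sum
  have hRHS : ∑' n : ℕ, (1 - x * t * q ^ (2 * n)) * x ^ n * t ^ n * q ^ (n ^ 2) /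
      ((1 - x * q ^ n) * (1 - t * q ^ n)) = ∑' p, g p := by
    rw [hgtot.tsum_eq]
    rw [← (hAsum.add hBsum).tsum_eq]
    congr 1
    funext n
    have h1 := hd1 n
    have h2 := hd2 n
    rw [show (2 * n) = n + n by ring, show n ^ 2 + n = n ^ 2 + n from rfl, pow_add, pow_add]
    field_simp
    ring
  -- LHS equals the total sum
  have hLHS : ∑' n : ℕ, t ^ n / (1 - x * q ^ n) = ∑' p, g p := by
    have hfib : ∀ n : ℕ, HasSum (fun m => g (m, n)) (t ^ n * (1 - x * q ^ n)⁻¹) := by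
      intro n
      have h := (hasSum_geometric_of_norm_lt_one (hxq n)).mul_left (t ^ n)
      convert h using 2 with m
      show x ^ m * t ^ n * q ^ (m * n) = _
      rw [mul_pow, mul_comm m n, pow_mul]
      ring
      rfl
    have hswap : Summable (fun p : ℕ × ℕ => g p.swap) := Sg.prod_symm
    have := hswap.hasSum.prod_fiberwise (fun n => hfib n)
    rw [show (fun n : ℕ => t ^ n / (1 - x * q ^ n))
        = fun n : ℕ => t ^ n * (1 - x * q ^ n)⁻¹ by funext n; rw [div_eq_mul_inv]]
    rw [this.tsum_eq]
    exact ((Equiv.prodComm ℕ ℕ).tsum_eq g).symm ▸ rfl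
  rw [hLHS, hRHS]
end

section
/- Liu's identity: for |q| < 1 and |a| ≤ 1 with a q^n ≠ 1 for all n ≥ 1, ∑_{n=1}^∞ a q^n / (1 − a q^n) = ∑_{n=1}^∞ (1 − a q^{2n}) a^n q^{n^2} / ((1 − q^n)(1 − a q^n)). -/
set_option maxHeartbeats 1000000

open Function Set

/-- Liu's identity. -/
theorem stmt16 (q a : ℂ) (hq : ‖q‖ < 1) (ha : ‖a‖ ≤ 1)
    (ha1 : ∀ n : ℕ, 1 ≤ n → a * q ^ n ≠ 1) :
    ∑' n : ℕ, a * q ^ (n + 1) / (1 - a * q ^ (n + 1))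
      = ∑' n : ℕ, (1 - a * q ^ (2 * (n + 1))) * a ^ (n + 1) * q ^ ((n + 1) ^ 2) /
          ((1 - q ^ (n + 1)) * (1 - a * q ^ (n + 1))) := by
  have hq0 : (0:ℝ) ≤ ‖q‖ := norm_nonneg q
  have hqn : ∀ n : ℕ, ‖q ^ (n+1)‖ < 1 := fun n => by
    rw [norm_pow]; exact pow_lt_one₀ hq0 hq (Nat.succ_ne_zero n)
  have haqn : ∀ n : ℕ, ‖a * q ^ (n+1)‖ < 1 := fun n => by
    rw [norm_mul]
    calc ‖a‖ * ‖q ^ (n+1)‖ ≤ 1 * ‖q ^ (n+1)‖ :=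
          mul_le_mul_of_nonneg_right ha (norm_nonneg _)
      _ = ‖q ^ (n+1)‖ := one_mul _
      _ < 1 := hqn n
  set f : ℕ × ℕ → ℂ := fun p => a ^ (p.2+1) * q ^ ((p.1+1)*(p.2+1)) with hfdef
  -- summability of the double series
  have hf : Summable f := by
    apply Summable.of_norm_bounded
      (g := fun p : ℕ × ℕ => ‖q‖ ^ p.1 * (‖q‖ ^ p.2 * ‖q‖))
    · exact (summable_geometric_of_lt_one hq0 hq).mul_of_nonneg
        ((summable_geometric_of_lt_one hq0 hq).mul_right ‖q‖)
        (fun n => pow_nonneg hq0 n)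
        (fun n => mul_nonneg (pow_nonneg hq0 n) hq0)
    · intro p
      simp only [hfdef, norm_mul, norm_pow]
      calc ‖a‖ ^ (p.2+1) * ‖q‖ ^ ((p.1+1)*(p.2+1))
          ≤ 1 * ‖q‖ ^ ((p.1+1)*(p.2+1)) := by
            apply mul_le_mul_of_nonneg_right _ (pow_nonneg hq0 _)
            exact pow_le_one₀ (norm_nonneg a) ha
        _ = ‖q‖ ^ ((p.1+1)*(p.2+1)) := one_mul _
        _ ≤ ‖q‖ ^ (p.1 + p.2 + 1) :=
            pow_le_pow_of_le_one hq0 hq.le (by nlinarith)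
        _ = ‖q‖ ^ p.1 * (‖q‖ ^ p.2 * ‖q‖) := by
            rw [pow_add, pow_add, pow_one, mul_assoc]
  -- injections covering ℕ × ℕ
  set e1 : ℕ × ℕ → ℕ × ℕ := fun p => (p.1, p.1 + p.2) with he1def
  set e2 : ℕ × ℕ → ℕ × ℕ := fun p => (p.1 + 1 + p.2, p.1) with he2def
  have he1 : Injective e1 := by
    intro p p' h
    simp only [he1def, Prod.mk.injEq] at h
    obtain ⟨h1, h2⟩ := h
    exact Prod.ext h1 (by omega)
  have he2 : Injective e2 := by
    intro p p' h
    simp only [he2def, Prod.mk.injEq] at h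
    obtain ⟨h1, h2⟩ := h
    exact Prod.ext h2 (by omega)
  have hu : range e1 ∪ range e2 = univ := by
    ext ⟨i, j⟩
    simp only [mem_union, mem_range, mem_univ, iff_true, he1def, he2def, Prod.mk.injEq,
      Prod.exists]
    rcases le_or_gt i j with h | h
    · exact Or.inl ⟨i, j - i, rfl, by omega⟩
    · exact Or.inr ⟨j, i - j - 1, by omega, rfl⟩
  have hd : Disjoint (range e1) (range e2) := by
    rw [disjoint_iff_inter_eq_empty]
    ext ⟨i, j⟩
    simp only [mem_inter_iff, mem_range, mem_empty_iff_false, iff_false, he1def, he2def,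
      Prod.mk.injEq, Prod.exists, not_and]
    rintro ⟨n, m, rfl, rfl⟩ ⟨n', m', h1, h2⟩
    omega
  -- splitting of the double sum
  have key : ∑' p : ℕ × ℕ, f p = (∑' p : ℕ × ℕ, f (e1 p)) + (∑' p : ℕ × ℕ, f (e2 p)) := by
    rw [← tsum_univ f, ← hu,
      Summable.tsum_union_disjoint hd (hf.subtype _) (hf.subtype _),
      tsum_range f he1, tsum_range f he2]
  -- LHS equals the double sum
  have hL : HasSum (fun n : ℕ => a * q ^ (n + 1) / (1 - a * q ^ (n + 1)))
      (∑' p : ℕ × ℕ, f p) := by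
    apply hf.hasSum.prod_fiberwise
    intro n
    have hx := (hasSum_geometric_of_norm_lt_one (haqn n)).mul_left (a * q ^ (n+1))
    have heq : (fun m : ℕ => a * q ^ (n+1) * (a * q ^ (n+1)) ^ m) = fun m => f (n, m) := by
      funext m
      simp only [hfdef]
      ring
    rw [div_eq_mul_inv]
    exact heq ▸ hx
  -- first RHS piece
  have hA : HasSum (fun n : ℕ => a ^ (n+1) * q ^ ((n+1)^2) * (1 - a * q ^ (n+1))⁻¹)
      (∑' p : ℕ × ℕ, f (e1 p)) := by
    apply (hf.comp_injective he1).hasSum.prod_fiberwise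
    intro n
    have hx := (hasSum_geometric_of_norm_lt_one (haqn n)).mul_left
      (a ^ (n+1) * q ^ ((n+1)^2))
    have heq : (fun m : ℕ => a ^ (n+1) * q ^ ((n+1)^2) * (a * q ^ (n+1)) ^ m)
        = fun m => f (e1 (n, m)) := by
      funext m
      simp only [hfdef, he1def]
      ring
    exact heq ▸ hx
  -- second RHS piece
  have hB : HasSum (fun n : ℕ => a ^ (n+1) * q ^ ((n+1)*(n+2)) * (1 - q ^ (n+1))⁻¹)
      (∑' p : ℕ × ℕ, f (e2 p)) := by
    apply (hf.comp_injective he2).hasSum.prod_fiberwise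
    intro n
    have hx := (hasSum_geometric_of_norm_lt_one (hqn n)).mul_left
      (a ^ (n+1) * q ^ ((n+1)*(n+2)))
    have heq : (fun m : ℕ => a ^ (n+1) * q ^ ((n+1)*(n+2)) * (q ^ (n+1)) ^ m)
        = fun m => f (e2 (n, m)) := by
      funext m
      simp only [hfdef, he2def]
      ring
    exact heq ▸ hx
  have hAB := hA.add hB
  rw [hL.tsum_eq, key, ← hAB.tsum_eq]
  apply tsum_congr
  intro n
  have h1 : (1:ℂ) - q ^ (n+1) ≠ 0 := by
    intro h
    have hq1 := hqn n
    rw [show q ^ (n+1) = 1 by linear_combination -h] at hq1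
    simp at hq1
  have h2 : (1:ℂ) - a * q ^ (n+1) ≠ 0 := by
    intro h
    have hq2 := haqn n
    rw [show a * q ^ (n+1) = 1 by linear_combination -h] at hq2
    simp at hq2
  field_simp
  ring
end

section
/- For m ≥ 0, |q| < 1, and |a| ≤ 1: ∑_{n=1}^∞ a n^m q^n / (1 − a q^n) = ∑_{n=1}^∞ n^m (1 − a q^{2n}) a^n q^{n^2} / ((1 − q^n)(1 − a q^n)) + ∑_{k=1}^{m} C(m,k) ∑_{n=1}^∞ n^{m−k} a^n q^{n^2+n} A_k(q^n) / (1 − q^n)^{k+1}, where A_k is the k-th Eulerian polynomial. -/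
/-- Eulerian numbers `A(n,k)` counting permutations of `{1,…,n}` with `k` descents. -/
def eulerianNum : ℕ → ℕ → ℕ
  | 0, 0 => 1
  | 0, _ + 1 => 0
  | n + 1, 0 => eulerianNum n 0
  | n + 1, k + 1 => (k + 2) * eulerianNum n (k + 1) + (n + 1 - (k + 1)) * eulerianNum n k

/-- The Eulerian polynomial `A_k(t)`. -/
noncomputable def eulerianPoly (k : ℕ) (t : ℂ) : ℂ :=
  ∑ i ∈ Finset.range (k + 1), (eulerianNum k i : ℂ) * t ^ i

lemma eulerianNum_eq_zero : ∀ {n i : ℕ}, n ≤ i → eulerianNum n (i + 1) = 0 := by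
  intro n
  induction n with
  | zero => intro i _; rfl
  | succ n ih =>
    intro i h
    show (i + 2) * eulerianNum n (i + 1) + (n + 1 - (i + 1)) * eulerianNum n i = 0
    rw [ih (by omega), Nat.sub_eq_zero_of_le (by omega)]
    ring

lemma choose_key (k i j : ℕ) (hik : i ≤ k) :
    (j + 1) * (j + k - i).choose k
      = (i + 1) * (j + k - i + 1).choose (k + 1) + (k - i) * (j + k - i).choose (k + 1) := by
  rcases le_or_gt i j with h | h
  · obtain ⟨s, rfl⟩ := Nat.exists_eq_add_of_le hik
    obtain ⟨t, rfl⟩ := Nat.exists_eq_add_of_le h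
    have e : i + t + (i + s) - i = i + s + t := by omega
    rw [e, show i + s - i = s from by omega]
    set C := (i + s + t).choose (i + s) with hC
    set D := (i + s + t).choose (i + s + 1) with hD
    have h1 : D * (i + s + 1) = C * t := by
      simpa [hC, hD, show i + s + t - (i + s) = t from by omega] using
        Nat.choose_succ_right_eq (i + s + t) (i + s)
    have h2 : (i + s + t + 1).choose (i + s + 1) = C + D := Nat.choose_succ_succ _ _
    rw [h2]
    have : (i + 1) * (C + D) + s * D = (i + 1) * C + D * (i + s + 1) := by ring
    rw [this, h1]
    ring
  · rw [Nat.choose_eq_zero_of_lt (by omega), Nat.choose_eq_zero_of_lt (by omega),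
      Nat.choose_eq_zero_of_lt (by omega)]
    ring

lemma worpitzky (k j : ℕ) :
    (j + 1) ^ k = ∑ i ∈ Finset.range (k + 1), eulerianNum k i * (j + k - i).choose k := by
  induction k with
  | zero => simp [eulerianNum]
  | succ k ih =>
    have step1 : (j + 1) ^ (k + 1) = ∑ i ∈ Finset.range (k + 1),
        (eulerianNum k i * ((i + 1) * (j + k - i + 1).choose (k + 1))
          + eulerianNum k i * ((k - i) * (j + k - i).choose (k + 1))) := by
      rw [pow_succ, ih, Finset.sum_mul]
      refine Finset.sum_congr rfl fun i hi => ?_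
      have hik : i ≤ k := by have := Finset.mem_range.mp hi; omega
      rw [mul_assoc, mul_comm ((j + k - i).choose k) (j + 1), choose_key k i j hik, mul_add]
    rw [step1, Finset.sum_add_distrib]
    -- handle the first summand: extend to range (k+2) and re-shift
    have hA : ∑ i ∈ Finset.range (k + 1),
        eulerianNum k i * ((i + 1) * (j + k - i + 1).choose (k + 1))
        = ∑ i ∈ Finset.range (k + 2),
        eulerianNum k i * ((i + 1) * (j + k - i + 1).choose (k + 1)) := by
      conv_rhs => rw [Finset.sum_range_succ]
      rw [eulerianNum_eq_zero (le_refl k)]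
      simp
    rw [hA, Finset.sum_range_succ'
      (fun i => eulerianNum k i * ((i + 1) * (j + k - i + 1).choose (k + 1))) (k + 1)]
    -- now the RHS
    rw [Finset.sum_range_succ'
      (fun i => eulerianNum (k + 1) i * (j + (k + 1) - i).choose (k + 1)) (k + 1)]
    have hre : ∀ i, eulerianNum (k + 1) (i + 1)
        = (i + 2) * eulerianNum k (i + 1) + (k - i) * eulerianNum k i := by
      intro i
      show (i + 2) * eulerianNum k (i + 1) + (k + 1 - (i + 1)) * eulerianNum k i = _
      rw [show k + 1 - (i + 1) = k - i from by omega]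
    have hre0 : eulerianNum (k + 1) 0 = eulerianNum k 0 := rfl
    rw [hre0]
    have hidx0 : j + (k + 1) - 0 = j + k - 0 + 1 := by omega
    rw [hidx0]
    -- remaining: match the shifted sums
    have key : ∀ i ∈ Finset.range (k + 1),
        eulerianNum k (i + 1) * ((i + 1 + 1) * (j + k - (i + 1) + 1).choose (k + 1))
          + eulerianNum k i * ((k - i) * (j + k - i).choose (k + 1))
        = eulerianNum (k + 1) (i + 1) * (j + (k + 1) - (i + 1)).choose (k + 1) := by
      intro i hi
      have hik : i ≤ k := by have := Finset.mem_range.mp hi; omega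
      rw [hre i]
      rcases lt_or_eq_of_le hik with hlt | rfl
      · rw [show j + k - (i + 1) + 1 = j + k - i from by omega,
          show j + (k + 1) - (i + 1) = j + k - i from by omega]
        ring
      · rw [eulerianNum_eq_zero (le_refl i), Nat.sub_self]
        simp
    calc ∑ i ∈ Finset.range (k + 1),
          eulerianNum k (i + 1) * ((i + 1 + 1) * (j + k - (i + 1) + 1).choose (k + 1))
          + eulerianNum k 0 * ((0 + 1) * (j + k - 0 + 1).choose (k + 1))
        + ∑ i ∈ Finset.range (k + 1),
          eulerianNum k i * ((k - i) * (j + k - i).choose (k + 1))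
        = (∑ i ∈ Finset.range (k + 1),
            (eulerianNum k (i + 1) * ((i + 1 + 1) * (j + k - (i + 1) + 1).choose (k + 1))
              + eulerianNum k i * ((k - i) * (j + k - i).choose (k + 1))))
          + eulerianNum k 0 * ((0 + 1) * (j + k - 0 + 1).choose (k + 1)) := by
          rw [Finset.sum_add_distrib]; ring
      _ = (∑ i ∈ Finset.range (k + 1),
            eulerianNum (k + 1) (i + 1) * (j + (k + 1) - (i + 1)).choose (k + 1))
          + eulerianNum k 0 * (j + k - 0 + 1).choose (k + 1) := by
          rw [Finset.sum_congr rfl key]; ring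

lemma hs_choose_shift {x : ℂ} (hx : ‖x‖ < 1) (k i : ℕ) (hik : i ≤ k) :
    HasSum (fun j : ℕ => ((j + k - i).choose k : ℂ) * x ^ j) (x ^ i / (1 - x) ^ (k + 1)) := by
  have h0 := hasSum_choose_mul_geometric_of_norm_lt_one (𝕜 := ℂ) k hx
  have h1 := h0.mul_left (x ^ i)
  have h2 : HasSum (fun n : ℕ => ((n + i + k - i).choose k : ℂ) * x ^ (n + i))
      (x ^ i / (1 - x) ^ (k + 1)) := by
    rw [show x ^ i / (1 - x) ^ (k + 1) = x ^ i * (1 / (1 - x) ^ (k + 1)) from (mul_one_div (x ^ i) ((1 - x) ^ (k + 1))).symm]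
    convert h1 using 1
    · exact rfl
    funext n
    rw [show n + i + k - i = n + k from by omega, pow_add]
    ring
  have h3 := (hasSum_nat_add_iff (f := fun j : ℕ => ((j + k - i).choose k : ℂ) * x ^ j) i).mp h2
  have h4 : ∑ j ∈ Finset.range i, ((j + k - i).choose k : ℂ) * x ^ j = 0 := by
    refine Finset.sum_eq_zero fun j hj => ?_
    have : j + k - i < k := by have := Finset.mem_range.mp hj; omega
    rw [Nat.choose_eq_zero_of_lt this]
    simp
  rwa [h4, add_zero] at h3

lemma hs_eulerian {x : ℂ} (hx : ‖x‖ < 1) (k : ℕ) :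
    HasSum (fun j : ℕ => ((j : ℂ) + 1) ^ k * x ^ j)
      (eulerianPoly k x / (1 - x) ^ (k + 1)) := by
  have h0 : HasSum (fun j : ℕ => ∑ i ∈ Finset.range (k + 1),
      (eulerianNum k i : ℂ) * (((j + k - i).choose k : ℂ) * x ^ j))
      (∑ i ∈ Finset.range (k + 1), (eulerianNum k i : ℂ) * (x ^ i / (1 - x) ^ (k + 1))) := by
    refine hasSum_sum fun i hi => ?_
    exact (hs_choose_shift hx k i (by have := Finset.mem_range.mp hi; omega)).mul_left _
  convert h0 using 1
  · funext j
    have hw := worpitzky k j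
    have : ((j : ℂ) + 1) ^ k = ∑ i ∈ Finset.range (k + 1),
        (eulerianNum k i : ℂ) * ((j + k - i).choose k : ℂ) := by
      exact_mod_cast congrArg (Nat.cast : ℕ → ℂ) hw
    rw [this, Finset.sum_mul]
    exact Finset.sum_congr rfl fun i _ => by ring
  · rw [eulerianPoly, Finset.sum_div]
    exact Finset.sum_congr rfl fun i _ => by rw [mul_div_assoc]

lemma aux_summable (m : ℕ) {r : ℝ} (h0 : 0 ≤ r) (h1 : r < 1) :
    Summable (fun n : ℕ => ((n : ℝ) + 1) ^ m * r ^ n) := by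
  have he : ∀ n : ℕ, ((n : ℝ) + 1) ^ m
      = ∑ k ∈ Finset.range (m + 1), (n : ℝ) ^ k * 1 ^ (m - k) * (m.choose k : ℝ) :=
    fun n => add_pow _ _ _
  have : (fun n : ℕ => ((n : ℝ) + 1) ^ m * r ^ n)
      = fun n : ℕ => ∑ k ∈ Finset.range (m + 1), (m.choose k : ℝ) * ((n : ℝ) ^ k * r ^ n) := by
    funext n
    rw [he n, Finset.sum_mul]
    exact Finset.sum_congr rfl fun k _ => by ring
  rw [this]
  refine summable_sum fun k _ => ?_
  exact (summable_pow_mul_geometric_of_norm_lt_one (R := ℝ) k (by rwa [Real.norm_eq_abs, abs_of_nonneg h0])).mul_left _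

lemma eulerianPoly_norm_le {x : ℂ} (hx : ‖x‖ ≤ 1) (k : ℕ) :
    ‖eulerianPoly k x‖ ≤ ∑ i ∈ Finset.range (k + 1), (eulerianNum k i : ℝ) := by
  refine (norm_sum_le _ _).trans (Finset.sum_le_sum fun i _ => ?_)
  rw [norm_mul, norm_pow, Complex.norm_natCast]
  calc (eulerianNum k i : ℝ) * ‖x‖ ^ i ≤ (eulerianNum k i : ℝ) * 1 := by
        gcongr
        exact pow_le_one₀ (norm_nonneg _) hx
    _ = _ := mul_one _

lemma norm_natCast_add_one (n : ℕ) : ‖((n : ℂ) + 1)‖ = (n : ℝ) + 1 := by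
  have h : ((n : ℂ) + 1) = ((n + 1 : ℕ) : ℂ) := by push_cast; ring
  rw [h, Complex.norm_natCast]
  push_cast; ring

lemma eulerianPoly_zero (t : ℂ) : eulerianPoly 0 t = 1 := by
  simp [eulerianPoly]
  rfl


noncomputable def FF (m : ℕ) (q a : ℂ) (p : ℕ × ℕ) : ℂ :=
  ((p.1 : ℂ) + 1) ^ m * (a * q ^ (p.1 + 1)) ^ (p.2 + 1)

def eqv1 : ℕ × ℕ ≃ ↥{p : ℕ × ℕ | p.1 ≤ p.2} where
  toFun p := ⟨(p.1, p.1 + p.2), Nat.le_add_right _ _⟩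
  invFun p := (p.1.1, p.1.2 - p.1.1)
  left_inv p := by simp
  right_inv p := by
    obtain ⟨⟨x, y⟩, hxy⟩ := p
    have hxy' : x ≤ y := hxy
    exact Subtype.ext (by simp only [Prod.mk.injEq]; exact ⟨trivial, by omega⟩)

def eqv2 : ℕ × ℕ ≃ ↥{x : ℕ × ℕ | x ∉ {p : ℕ × ℕ | p.1 ≤ p.2}} where
  toFun p := ⟨(p.1 + p.2 + 1, p.1), by simp only [Set.mem_setOf_eq]; omega⟩
  invFun p := (p.1.2, p.1.1 - p.1.2 - 1)
  left_inv p := by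
    obtain ⟨x, y⟩ := p
    simp only [Prod.mk.injEq]
    exact ⟨trivial, by omega⟩
  right_inv p := by
    obtain ⟨⟨x, y⟩, hxy⟩ := p
    have hxy' : ¬ (x ≤ y) := hxy
    exact Subtype.ext (by simp only [Prod.mk.injEq]; exact ⟨by omega, trivial⟩)

set_option maxHeartbeats 2000000 in
theorem stmt17 (m : ℕ) (q a : ℂ) (hq : ‖q‖ < 1) (ha : ‖a‖ ≤ 1)
    (ha1 : ∀ n : ℕ, 1 ≤ n → a * q ^ n ≠ 1) :
    ∑' n : ℕ, a * ((n : ℂ) + 1) ^ m * q ^ (n + 1) / (1 - a * q ^ (n + 1))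
      = (∑' n : ℕ, ((n : ℂ) + 1) ^ m * (1 - a * q ^ (2 * (n + 1))) * a ^ (n + 1) *
            q ^ ((n + 1) ^ 2) / ((1 - q ^ (n + 1)) * (1 - a * q ^ (n + 1))))
        + ∑ k ∈ Finset.Icc 1 m, (m.choose k : ℂ) *
            ∑' n : ℕ, ((n : ℂ) + 1) ^ (m - k) * a ^ (n + 1) * q ^ ((n + 1) ^ 2 + (n + 1)) *
              eulerianPoly k (q ^ (n + 1)) / (1 - q ^ (n + 1)) ^ (k + 1) := by
  have hr0 : (0 : ℝ) ≤ ‖q‖ := norm_nonneg q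
  have hqn : ∀ n : ℕ, ‖q ^ (n + 1)‖ ≤ ‖q‖ := by
    intro n
    rw [norm_pow]
    calc ‖q‖ ^ (n + 1) ≤ ‖q‖ ^ 1 := pow_le_pow_of_le_one hr0 hq.le (by omega)
      _ = ‖q‖ := pow_one _
  have hqn1 : ∀ n : ℕ, ‖q ^ (n + 1)‖ < 1 := fun n => lt_of_le_of_lt (hqn n) hq
  have hbnd : ∀ n : ℕ, ‖a * q ^ (n + 1)‖ ≤ ‖q‖ ^ (n + 1) := by
    intro n
    rw [norm_mul, norm_pow]
    calc ‖a‖ * ‖q‖ ^ (n + 1) ≤ 1 * ‖q‖ ^ (n + 1) :=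
          mul_le_mul_of_nonneg_right ha (by positivity)
      _ = _ := one_mul _
  have haqn : ∀ n : ℕ, ‖a * q ^ (n + 1)‖ < 1 := by
    intro n
    calc ‖a * q ^ (n + 1)‖ ≤ ‖q‖ ^ (n + 1) := hbnd n
      _ < 1 := by rw [← norm_pow]; exact hqn1 n
  have hden1 : ∀ n : ℕ, (1 : ℂ) - q ^ (n + 1) ≠ 0 := by
    intro n
    refine sub_ne_zero.mpr fun h => ?_
    have h2 := hqn1 n
    rw [← h, norm_one] at h2
    exact lt_irrefl 1 h2
  have hden2 : ∀ n : ℕ, (1 : ℂ) - a * q ^ (n + 1) ≠ 0 := by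
    intro n
    exact sub_ne_zero.mpr fun h => ha1 (n + 1) (by omega) h.symm
  have h1r : (0 : ℝ) < 1 - ‖q‖ := by linarith
  have hlow1 : ∀ n : ℕ, 1 - ‖q‖ ≤ ‖1 - q ^ (n + 1)‖ := by
    intro n
    calc 1 - ‖q‖ ≤ 1 - ‖q ^ (n + 1)‖ := by have := hqn n; linarith
      _ = ‖(1 : ℂ)‖ - ‖q ^ (n + 1)‖ := by rw [norm_one]
      _ ≤ ‖1 - q ^ (n + 1)‖ := norm_sub_norm_le _ _
  -- the double-indexed function
  have hFsum : Summable (fun p : ℕ × ℕ => ((p.1 : ℂ) + 1) ^ m * (a * q ^ (p.1 + 1)) ^ (p.2 + 1)) := by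
    have hgsum : Summable (fun p : ℕ × ℕ => (((p.1 : ℝ) + 1) ^ m * ‖q‖ ^ p.1) * ‖q‖ ^ p.2) :=
      Summable.mul_of_nonneg (aux_summable m hr0 hq) (summable_geometric_of_lt_one hr0 hq)
        (fun n => by positivity) (fun n => by positivity)
    refine Summable.of_norm_bounded hgsum ?_
    rintro ⟨n, j⟩
    simp only
    rw [norm_mul, norm_pow, norm_pow, norm_natCast_add_one]
    have e1 : (‖q‖ ^ (n + 1)) ^ (j + 1) = ‖q‖ ^ ((n + 1) * (j + 1)) := (pow_mul _ _ _).symm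
    have hexp : n + j ≤ (n + 1) * (j + 1) := by
      have : (n + 1) * (j + 1) = n * j + (n + j) + 1 := by ring
      omega
    calc ((n : ℝ) + 1) ^ m * ‖a * q ^ (n + 1)‖ ^ (j + 1)
        ≤ ((n : ℝ) + 1) ^ m * (‖q‖ ^ (n + 1)) ^ (j + 1) := by
          refine mul_le_mul_of_nonneg_left ?_ (by positivity)
          exact pow_le_pow_left₀ (norm_nonneg _) (hbnd n) _
      _ = ((n : ℝ) + 1) ^ m * ‖q‖ ^ ((n + 1) * (j + 1)) := by rw [e1]
      _ ≤ ((n : ℝ) + 1) ^ m * ‖q‖ ^ (n + j) := by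
          refine mul_le_mul_of_nonneg_left ?_ (by positivity)
          exact pow_le_pow_of_le_one hr0 hq.le hexp
      _ = ((n : ℝ) + 1) ^ m * ‖q‖ ^ n * ‖q‖ ^ j := by rw [pow_add]; ring
  -- summability of the k-th tail series
  have htermk : ∀ k : ℕ, Summable (fun j : ℕ => ((j : ℂ) + 1) ^ (m - k) * a ^ (j + 1) *
      q ^ ((j + 1) ^ 2 + (j + 1)) * eulerianPoly k (q ^ (j + 1)) / (1 - q ^ (j + 1)) ^ (k + 1)) := by
    intro k
    set Ck := ∑ i ∈ Finset.range (k + 1), (eulerianNum k i : ℝ) with hCkdef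
    have hCk : 0 ≤ Ck := by positivity
    refine Summable.of_norm_bounded
      ((aux_summable m hr0 hq).mul_left (Ck / (1 - ‖q‖) ^ (k + 1))) ?_
    intro j
    rw [norm_div, norm_mul, norm_mul, norm_mul, norm_pow, norm_pow, norm_pow, norm_pow,
      norm_natCast_add_one]
    have b1 : ((j : ℝ) + 1) ^ (m - k) ≤ ((j : ℝ) + 1) ^ m := by
      refine pow_le_pow_right₀ ?_ (Nat.sub_le m k)
      have : (0 : ℝ) ≤ (j : ℝ) := Nat.cast_nonneg j
      linarith
    have b2 : ‖a‖ ^ (j + 1) ≤ 1 := pow_le_one₀ (norm_nonneg a) ha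
    have b3 : ‖q‖ ^ ((j + 1) ^ 2 + (j + 1)) ≤ ‖q‖ ^ j :=
      pow_le_pow_of_le_one hr0 hq.le (le_trans (Nat.le_succ j) (Nat.le_add_left _ _))
    have b4 : ‖eulerianPoly k (q ^ (j + 1))‖ ≤ Ck := eulerianPoly_norm_le (hqn1 j).le k
    have hnum : ((j : ℝ) + 1) ^ (m - k) * ‖a‖ ^ (j + 1) * ‖q‖ ^ ((j + 1) ^ 2 + (j + 1)) *
        ‖eulerianPoly k (q ^ (j + 1))‖ ≤ Ck * (((j : ℝ) + 1) ^ m * ‖q‖ ^ j) := by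
      calc ((j : ℝ) + 1) ^ (m - k) * ‖a‖ ^ (j + 1) * ‖q‖ ^ ((j + 1) ^ 2 + (j + 1)) *
          ‖eulerianPoly k (q ^ (j + 1))‖
          ≤ ((j : ℝ) + 1) ^ m * 1 * ‖q‖ ^ j * Ck := by
            refine mul_le_mul (mul_le_mul (mul_le_mul b1 b2 (by positivity) (by positivity))
              b3 (by positivity) (by positivity)) b4 (norm_nonneg _) (by positivity)
        _ = Ck * (((j : ℝ) + 1) ^ m * ‖q‖ ^ j) := by ring
    have hdenb : (1 - ‖q‖) ^ (k + 1) ≤ ‖1 - q ^ (j + 1)‖ ^ (k + 1) :=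
      pow_le_pow_left₀ h1r.le (hlow1 j) _
    calc ((j : ℝ) + 1) ^ (m - k) * ‖a‖ ^ (j + 1) * ‖q‖ ^ ((j + 1) ^ 2 + (j + 1)) *
        ‖eulerianPoly k (q ^ (j + 1))‖ / ‖1 - q ^ (j + 1)‖ ^ (k + 1)
        ≤ (Ck * (((j : ℝ) + 1) ^ m * ‖q‖ ^ j)) / (1 - ‖q‖) ^ (k + 1) :=
          div_le_div₀ (by positivity) hnum (by positivity) hdenb
      _ = Ck / (1 - ‖q‖) ^ (k + 1) * (((j : ℝ) + 1) ^ m * ‖q‖ ^ j) := by ring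
  -- the double sum function
  have hFF : Summable (FF m q a) := by
    refine hFsum.congr fun p => ?_
    simp [FF]
  -- rows give the LHS
  have hrow : ∀ n : ℕ, HasSum (fun j : ℕ => FF m q a (n, j))
      (a * ((n : ℂ) + 1) ^ m * q ^ (n + 1) / (1 - a * q ^ (n + 1))) := by
    intro n
    have hg := (hasSum_geometric_of_norm_lt_one (haqn n)).mul_left
      (((n : ℂ) + 1) ^ m * (a * q ^ (n + 1)))
    convert hg using 1
    · exact rfl
    · funext j
      show ((n : ℂ) + 1) ^ m * (a * q ^ (n + 1)) ^ (j + 1) = _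
      rw [pow_succ']
      ring
    · rw [div_eq_mul_inv]
      ring
  have hLHS : (∑' n : ℕ, a * ((n : ℂ) + 1) ^ m * q ^ (n + 1) / (1 - a * q ^ (n + 1)))
      = ∑' p : ℕ × ℕ, FF m q a p := by
    rw [hFF.tsum_prod' (fun n => (hrow n).summable)]
    exact tsum_congr fun n => ((hrow n).tsum_eq).symm
  -- split into the two regions
  have key1 : (∑' (x : ↥{p : ℕ × ℕ | p.1 ≤ p.2}), FF m q a x)
      + (∑' (x : ↥{x : ℕ × ℕ | x ∉ {p : ℕ × ℕ | p.1 ≤ p.2}}), FF m q a x)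
      = ∑' p : ℕ × ℕ, FF m q a p :=
    hFF.tsum_subtype_add_tsum_subtype_compl {p : ℕ × ℕ | p.1 ≤ p.2}
  -- the diagonal-and-above part
  have hG1 : Summable (fun p : ℕ × ℕ => FF m q a (p.1, p.1 + p.2)) := by
    have h1 := hFF.subtype {p : ℕ × ℕ | p.1 ≤ p.2}
    exact ((eqv1.summable_iff
      (f := FF m q a ∘ ((↑) : ↥{p : ℕ × ℕ | p.1 ≤ p.2} → ℕ × ℕ))).mpr h1).congr fun p => rfl
  have hS1eq : (∑' (x : ↥{p : ℕ × ℕ | p.1 ≤ p.2}), FF m q a x)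
      = ∑' p : ℕ × ℕ, FF m q a (p.1, p.1 + p.2) :=
    ((eqv1.tsum_eq (fun x : ↥{p : ℕ × ℕ | p.1 ≤ p.2} => FF m q a x)).symm).trans
      (tsum_congr fun p => rfl)
  have hrow1 : ∀ n : ℕ, HasSum (fun d : ℕ => FF m q a (n, n + d))
      (((n : ℂ) + 1) ^ m * a ^ (n + 1) * q ^ ((n + 1) ^ 2) / (1 - a * q ^ (n + 1))) := by
    intro n
    have hg := (hasSum_geometric_of_norm_lt_one (haqn n)).mul_left
      (((n : ℂ) + 1) ^ m * (a * q ^ (n + 1)) ^ (n + 1))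
    convert hg using 1
    · exact rfl
    · funext d
      show ((n : ℂ) + 1) ^ m * (a * q ^ (n + 1)) ^ ((n + d) + 1) = _
      rw [show (n + d) + 1 = (n + 1) + d from by omega, pow_add]
      ring
    · rw [mul_pow, ← pow_mul, show (n + 1) * (n + 1) = (n + 1) ^ 2 from (pow_two _).symm,
        div_eq_mul_inv]
      ring
  have hS1 : (∑' (x : ↥{p : ℕ × ℕ | p.1 ≤ p.2}), FF m q a x) = ∑' n : ℕ,
      ((n : ℂ) + 1) ^ m * a ^ (n + 1) * q ^ ((n + 1) ^ 2) / (1 - a * q ^ (n + 1)) := by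
    rw [hS1eq]
    exact (hG1.hasSum.prod_fiberwise hrow1).tsum_eq.symm
  have hsum1 : Summable (fun n : ℕ =>
      ((n : ℂ) + 1) ^ m * a ^ (n + 1) * q ^ ((n + 1) ^ 2) / (1 - a * q ^ (n + 1))) :=
    (hG1.hasSum.prod_fiberwise hrow1).summable
  -- the below-diagonal part
  have hG2 : Summable (fun p : ℕ × ℕ => FF m q a (p.1 + p.2 + 1, p.1)) := by
    have h1 := hFF.subtype {x : ℕ × ℕ | x ∉ {p : ℕ × ℕ | p.1 ≤ p.2}}
    exact ((eqv2.summable_iff (f := FF m q a ∘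
      ((↑) : ↥{x : ℕ × ℕ | x ∉ {p : ℕ × ℕ | p.1 ≤ p.2}} → ℕ × ℕ))).mpr h1).congr fun p => rfl
  have hS2eq : (∑' (x : ↥{x : ℕ × ℕ | x ∉ {p : ℕ × ℕ | p.1 ≤ p.2}}), FF m q a x)
      = ∑' p : ℕ × ℕ, FF m q a (p.1 + p.2 + 1, p.1) :=
    ((eqv2.tsum_eq
      (fun x : ↥{x : ℕ × ℕ | x ∉ {p : ℕ × ℕ | p.1 ≤ p.2}} => FF m q a x)).symm).trans
      (tsum_congr fun p => rfl)
  have hrow2 : ∀ j : ℕ, HasSum (fun d : ℕ => FF m q a (j + d + 1, j))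
      (∑ k ∈ Finset.range (m + 1), (m.choose k : ℂ) *
        (((j : ℂ) + 1) ^ (m - k) * a ^ (j + 1) * q ^ ((j + 1) ^ 2 + (j + 1)) *
          eulerianPoly k (q ^ (j + 1)) / (1 - q ^ (j + 1)) ^ (k + 1))) := by
    intro j
    have hx : ‖q ^ (j + 1)‖ < 1 := hqn1 j
    have hek : ∀ k ∈ Finset.range (m + 1), HasSum
        (fun d : ℕ => ((m.choose k : ℂ) * (((j : ℂ) + 1) ^ (m - k) *
            (a ^ (j + 1) * q ^ ((j + 1) ^ 2 + (j + 1))))) * (((d : ℂ) + 1) ^ k * (q ^ (j + 1)) ^ d))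
        ((m.choose k : ℂ) * (((j : ℂ) + 1) ^ (m - k) * a ^ (j + 1) * q ^ ((j + 1) ^ 2 + (j + 1)) *
          eulerianPoly k (q ^ (j + 1)) / (1 - q ^ (j + 1)) ^ (k + 1))) := by
      intro k _
      have h3 := (hs_eulerian hx k).mul_left ((m.choose k : ℂ) * (((j : ℂ) + 1) ^ (m - k) *
        (a ^ (j + 1) * q ^ ((j + 1) ^ 2 + (j + 1)))))
      convert h3 using 1
      · exact rfl
      ring
    have h0 := hasSum_sum hek
    convert h0 using 1
    funext d
    show (((j + d + 1 : ℕ) : ℂ) + 1) ^ m * (a * q ^ ((j + d + 1) + 1)) ^ (j + 1) = _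
    have hcast : (((j + d + 1 : ℕ) : ℂ) + 1) = ((d : ℂ) + 1) + ((j : ℂ) + 1) := by
      push_cast; ring
    have hqpow : (a * q ^ (j + d + 1 + 1)) ^ (j + 1)
        = a ^ (j + 1) * (q ^ ((j + 1) ^ 2 + (j + 1)) * (q ^ (j + 1)) ^ d) := by
      calc (a * q ^ (j + d + 1 + 1)) ^ (j + 1)
          = a ^ (j + 1) * q ^ ((j + d + 1 + 1) * (j + 1)) := by rw [mul_pow, ← pow_mul]
        _ = a ^ (j + 1) * (q ^ ((j + 1) ^ 2 + (j + 1)) * (q ^ (j + 1)) ^ d) := by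
            rw [show (j + d + 1 + 1) * (j + 1) = ((j + 1) ^ 2 + (j + 1)) + (j + 1) * d
              from by ring, pow_add q ((j + 1) ^ 2 + (j + 1)) ((j + 1) * d), pow_mul q (j + 1) d]
    rw [hcast, hqpow, add_pow, Finset.sum_mul]
    exact Finset.sum_congr rfl fun k _ => by ring
  have hS2 : (∑' (x : ↥{x : ℕ × ℕ | x ∉ {p : ℕ × ℕ | p.1 ≤ p.2}}), FF m q a x)
      = ∑ k ∈ Finset.range (m + 1), (m.choose k : ℂ) *
        ∑' j : ℕ, ((j : ℂ) + 1) ^ (m - k) * a ^ (j + 1) * q ^ ((j + 1) ^ 2 + (j + 1)) *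
          eulerianPoly k (q ^ (j + 1)) / (1 - q ^ (j + 1)) ^ (k + 1) := by
    rw [hS2eq, ← (hG2.hasSum.prod_fiberwise hrow2).tsum_eq]
    rw [Summable.tsum_finsetSum (fun k _ => (htermk k).mul_left ((m.choose k : ℂ)))]
    exact Finset.sum_congr rfl fun k _ => tsum_mul_left
  -- assemble
  rw [hLHS, ← key1, hS1, hS2]
  rw [show Finset.range (m + 1) = insert 0 (Finset.Icc 1 m) from by
    ext x; simp only [Finset.mem_range, Finset.mem_insert, Finset.mem_Icc]; omega,
    Finset.sum_insert (by simp)]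
  rw [Nat.choose_zero_right, Nat.cast_one, one_mul, ← add_assoc]
  congr 1
  rw [← Summable.tsum_add hsum1 (htermk 0)]
  refine tsum_congr fun n => ?_
  have h1 := hden1 n
  have h2 := hden2 n
  rw [eulerianPoly_zero, Nat.sub_zero, pow_one]
  field_simp
  ring
end

section
/- For m ≥ 0, |q| < 1, and |a| ≤ 1: ∑_{n=1}^∞ C(n,m) a q^n / (1 − a q^n) = ∑_{n=1}^∞ C(n,m) (1 − a q^{2n}) a^n q^{n^2} / ((1 − q^n)(1 − a q^n)) + ∑_{k=1}^{m} ∑_{n=1}^∞ C(n, m−k) a^n q^{n(n+k)} / (1 − q^n)^{k+1}. -/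
open Finset Function Set

lemma auxGeom {x : ℂ} (hx : ‖x‖ < 1) : ∑' j : ℕ, x ^ (j + 1) = x / (1 - x) := by
  have h := tsum_geometric_of_norm_lt_one hx
  have h2 : ∑' j : ℕ, x ^ (j + 1) = ∑' j : ℕ, x * x ^ j := by
    refine tsum_congr fun j => ?_; ring
  rw [h2, tsum_mul_left, h, div_eq_mul_inv]

lemma auxChooseSummable (k : ℕ) {x : ℂ} (hx : ‖x‖ < 1) :
    Summable (fun i : ℕ => (i.choose k : ℂ) * x ^ i) := by
  have hinj : Function.Injective (fun i : ℕ => i + k) := add_left_injective k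
  have hsupp : Function.support (fun i : ℕ => (i.choose k : ℂ) * x ^ i)
      ⊆ Set.range (fun i : ℕ => i + k) := by
    intro i hi
    rcases le_or_gt k i with h | h
    · exact ⟨i - k, by simp [Nat.sub_add_cancel h]⟩
    · exfalso; apply hi; simp [Nat.choose_eq_zero_of_lt h]
  rw [← hinj.summable_iff (fun i hi => by
    by_contra h
    exact hi (hsupp h))]
  refine ((summable_choose_mul_geometric_of_norm_lt_one k hx).mul_right (x ^ k)).congr fun i => ?_
  simp only [Function.comp]
  rw [pow_add]; ring

lemma auxChooseGeom (k : ℕ) {x : ℂ} (hx : ‖x‖ < 1) :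
    ∑' i : ℕ, (i.choose k : ℂ) * x ^ i = x ^ k / (1 - x) ^ (k + 1) := by
  have hinj : Function.Injective (fun i : ℕ => i + k) := add_left_injective k
  have hsupp : Function.support (fun i : ℕ => (i.choose k : ℂ) * x ^ i)
      ⊆ Set.range (fun i : ℕ => i + k) := by
    intro i hi
    rcases le_or_gt k i with h | h
    · exact ⟨i - k, by simp [Nat.sub_add_cancel h]⟩
    · exfalso; apply hi; simp [Nat.choose_eq_zero_of_lt h]
  rw [← hinj.tsum_eq hsupp]
  have h2 : ∑' i : ℕ, (((i + k).choose k : ℂ)) * x ^ (i + k)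
      = ∑' i : ℕ, (((i + k).choose k : ℂ) * x ^ i) * x ^ k := by
    refine tsum_congr fun i => ?_; rw [pow_add]; ring
  rw [h2, tsum_mul_right, tsum_choose_mul_geometric_of_norm_lt_one k hx]
  ring

lemma auxChooseGeom' (k : ℕ) {x : ℂ} (hx : ‖x‖ < 1) :
    ∑' i : ℕ, ((i + 1).choose k : ℂ) * x ^ (i + 1)
      = x ^ k / (1 - x) ^ (k + 1) - if k = 0 then 1 else 0 := by
  have hs := auxChooseSummable k hx
  have h0 := Summable.tsum_eq_zero_add hs
  have hv : ((Nat.choose 0 k : ℂ)) * x ^ 0 = if k = 0 then 1 else 0 := by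
    rcases Nat.eq_zero_or_pos k with rfl | hk
    · simp
    · rw [if_neg hk.ne', Nat.choose_eq_zero_of_lt hk]; simp
  rw [auxChooseGeom k hx] at h0
  rw [eq_sub_iff_add_eq, add_comm, ← hv, ← h0]

lemma auxChooseSummable' (k : ℕ) {x : ℂ} (hx : ‖x‖ < 1) :
    Summable (fun i : ℕ => ((i + 1).choose k : ℂ) * x ^ (i + 1)) :=
  ((auxChooseSummable k hx).comp_injective Nat.succ_injective).congr fun _ => rfl

lemma auxSummablePow (m : ℕ) {r : ℝ} (h0 : 0 ≤ r) (hr : r < 1) :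
    Summable (fun n : ℕ => ((n + 1 : ℕ) : ℝ) ^ m * r ^ (n + 1)) := by
  have h := summable_pow_mul_geometric_of_norm_lt_one (R := ℝ) m
    (r := r) (by rwa [Real.norm_eq_abs, abs_of_nonneg h0])
  exact (h.comp_injective Nat.succ_injective).congr fun n => rfl

theorem stmt18 (m : ℕ) (q a : ℂ) (hq : ‖q‖ < 1) (ha : ‖a‖ ≤ 1)
    (ha1 : ∀ n : ℕ, 1 ≤ n → a * q ^ n ≠ 1) :
    ∑' n : ℕ, ((n + 1).choose m : ℂ) * a * q ^ (n + 1) / (1 - a * q ^ (n + 1))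
      = (∑' n : ℕ, ((n + 1).choose m : ℂ) * (1 - a * q ^ (2 * (n + 1))) * a ^ (n + 1) *
            q ^ ((n + 1) ^ 2) / ((1 - q ^ (n + 1)) * (1 - a * q ^ (n + 1))))
        + ∑ k ∈ Finset.Icc 1 m,
            ∑' n : ℕ, ((n + 1).choose (m - k) : ℂ) * a ^ (n + 1) *
              q ^ ((n + 1) * (n + 1 + k)) / (1 - q ^ (n + 1)) ^ (k + 1) := by
  classical
  have hr0 : (0:ℝ) ≤ ‖q‖ := norm_nonneg q
  have hrlt : (0:ℝ) < 1 - ‖q‖ := by linarith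
  have hqn : ∀ n : ℕ, ‖q ^ (n+1)‖ < 1 := fun n => by
    rw [norm_pow]; exact pow_lt_one₀ hr0 hq n.succ_ne_zero
  have han : ∀ n : ℕ, ‖a * q ^ (n+1)‖ < 1 := fun n => by
    rw [norm_mul]
    calc ‖a‖ * ‖q ^ (n+1)‖ ≤ 1 * ‖q ^ (n+1)‖ :=
          mul_le_mul_of_nonneg_right ha (norm_nonneg _)
      _ = ‖q ^ (n+1)‖ := one_mul _
      _ < 1 := hqn n
  have hne : ∀ x : ℂ, ‖x‖ < 1 → (1 : ℂ) - x ≠ 0 := fun x hx h => by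
    have hx1 : x = 1 := by linear_combination -h
    rw [hx1] at hx; simp at hx
  have hQne : ∀ n : ℕ, (1 : ℂ) - q ^ (n+1) ≠ 0 := fun n => hne _ (hqn n)
  have hAne : ∀ n : ℕ, (1 : ℂ) - a * q ^ (n+1) ≠ 0 := fun n => hne _ (han n)
  have hQlow : ∀ n : ℕ, 1 - ‖q‖ ≤ ‖(1:ℂ) - q ^ (n+1)‖ := fun n => by
    calc 1 - ‖q‖ ≤ 1 - ‖q ^ (n+1)‖ := by
          rw [norm_pow]
          have h1 : ‖q‖ ^ (n+1) ≤ ‖q‖ ^ 1 := pow_le_pow_of_le_one hr0 hq.le (by omega)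
          rw [pow_one] at h1; linarith
      _ = ‖(1:ℂ)‖ - ‖q ^ (n+1)‖ := by simp
      _ ≤ ‖(1:ℂ) - q ^ (n+1)‖ := norm_sub_norm_le _ _
  -- the master double series
  set F : ℕ × ℕ → ℂ := fun p => (((p.1 + 1).choose m : ℕ) : ℂ) * (a * q ^ (p.1 + 1)) ^ (p.2 + 1)
    with hF_def
  have hchoosebound : ∀ (j n : ℕ), j ≤ m → ((n+1).choose j : ℝ) ≤ ((n+1 : ℕ) : ℝ) ^ m := by
    intro j n hj
    calc ((n+1).choose j : ℝ) ≤ ((n+1 : ℕ) : ℝ) ^ j := by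
          exact_mod_cast Nat.choose_le_pow (n+1) j
      _ ≤ ((n+1 : ℕ) : ℝ) ^ m :=
          pow_le_pow_right₀ (by exact_mod_cast Nat.succ_le_succ n.zero_le) hj
    -- summability of the master series
  have hFsum : Summable F := by
    refine Summable.of_norm_bounded (g :=
      fun p : ℕ × ℕ => (((p.1 + 1 : ℕ) : ℝ) ^ m * ‖q‖ ^ (p.1 + 1)) * ‖q‖ ^ p.2) ?_ ?_
    · exact (auxSummablePow m hr0 hq).mul_of_nonneg
        (summable_geometric_of_lt_one hr0 hq)
        (fun n => mul_nonneg (by positivity) (pow_nonneg hr0 _))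
        (fun j => pow_nonneg hr0 _)
    · rintro ⟨n, j⟩
      have h1 : ‖F (n, j)‖ = ((n+1).choose m : ℝ) * ‖a * q ^ (n+1)‖ ^ (j+1) := by
        simp [hF_def, norm_mul, norm_pow]
      rw [h1]
      have h2 : ‖a * q ^ (n+1)‖ ^ (j+1) ≤ (‖q‖ ^ (n+1)) ^ (j+1) := by
        apply pow_le_pow_left₀ (norm_nonneg _)
        rw [norm_mul, norm_pow]
        calc ‖a‖ * ‖q‖ ^ (n+1) ≤ 1 * ‖q‖ ^ (n+1) :=
              mul_le_mul_of_nonneg_right ha (pow_nonneg hr0 _)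
          _ = ‖q‖ ^ (n+1) := one_mul _
      have h3 : (‖q‖ ^ (n+1)) ^ (j+1) ≤ ‖q‖ ^ (n+1) * ‖q‖ ^ j := by
        rw [← pow_mul, ← pow_add]
        apply pow_le_pow_of_le_one hr0 hq.le
        nlinarith
      calc ((n+1).choose m : ℝ) * ‖a * q ^ (n+1)‖ ^ (j+1)
          ≤ ((n+1 : ℕ) : ℝ) ^ m * (‖q‖ ^ (n+1) * ‖q‖ ^ j) := by
            apply mul_le_mul (hchoosebound m n le_rfl) (h2.trans h3)
              (pow_nonneg (norm_nonneg _) _) (by positivity)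
        _ = (((n+1 : ℕ) : ℝ) ^ m * ‖q‖ ^ (n+1)) * ‖q‖ ^ j := by ring
  -- Step 1 : LHS as a double sum
  have step1 : ∑' n : ℕ, ((n + 1).choose m : ℂ) * a * q ^ (n + 1) / (1 - a * q ^ (n + 1))
      = ∑' p : ℕ × ℕ, F p := by
    rw [Summable.tsum_prod hFsum]
    refine tsum_congr fun n => ?_
    have : ∑' j : ℕ, F (n, j)
        = ((n + 1).choose m : ℂ) * ∑' j : ℕ, (a * q ^ (n+1)) ^ (j+1) := by
      simp only [hF_def]
      exact tsum_mul_left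
    rw [this, auxGeom (han n)]
    ring
    -- Step 2 : split the double sum along the diagonal
  set S : Set (ℕ × ℕ) := {p | p.1 ≤ p.2} with hS_def
  have hup : Summable (S.indicator F) := hFsum.indicator S
  have hlo : Summable (Sᶜ.indicator F) := hFsum.indicator Sᶜ
  have hsplit : ∑' p, F p = (∑' p, S.indicator F p) + ∑' p, Sᶜ.indicator F p := by
    rw [← Summable.tsum_add hup hlo]
    exact tsum_congr fun p => (congrFun (S.indicator_self_add_compl F) p).symm
  -- reindex the upper part
  have gLinj : Function.Injective (fun c : ℕ × ℕ => (c.1, c.1 + c.2)) := by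
    rintro ⟨n, i⟩ ⟨n', i'⟩ h
    simp only [Prod.mk.injEq] at h
    obtain ⟨h1, h2⟩ := h
    subst h1; simp at h2; subst h2; rfl
  have hLsupp : Function.support (S.indicator F)
      ⊆ Set.range (fun c : ℕ × ℕ => (c.1, c.1 + c.2)) := by
    intro p hp
    have hpS : p ∈ S := by
      by_contra h
      exact hp (Set.indicator_of_notMem h F)
    exact ⟨(p.1, p.2 - p.1), by
      simp only [Prod.mk.injEq]
      exact Prod.ext rfl (by simp [Nat.add_sub_cancel' hpS])⟩
  have hLre : ∑' c : ℕ × ℕ, F (c.1, c.1 + c.2) = ∑' p, S.indicator F p := by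
    rw [← gLinj.tsum_eq hLsupp]
    exact tsum_congr fun c => (Set.indicator_of_mem (by simp [hS_def] : (c.1, c.1 + c.2) ∈ S) F).symm
  -- reindex the lower part
  have gRinj : Function.Injective (fun c : ℕ × ℕ => (c.1 + 1 + c.2, c.1)) := by
    rintro ⟨n, i⟩ ⟨n', i'⟩ h
    simp only [Prod.mk.injEq] at h
    obtain ⟨h1, h2⟩ := h
    subst h2; simp at h1; subst h1; rfl
  have hRsupp : Function.support (Sᶜ.indicator F)
      ⊆ Set.range (fun c : ℕ × ℕ => (c.1 + 1 + c.2, c.1)) := by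
    intro p hp
    have hpS : p ∈ Sᶜ := by
      by_contra h
      exact hp (Set.indicator_of_notMem h F)
    have hlt : p.2 < p.1 := by
      simpa [hS_def, Set.mem_compl_iff] using hpS
    exact ⟨(p.2, p.1 - p.2 - 1), by
      simp only [Prod.mk.injEq]
      exact Prod.ext (by simp; omega) rfl⟩
  have hRre : ∑' c : ℕ × ℕ, F (c.1 + 1 + c.2, c.1) = ∑' p, Sᶜ.indicator F p := by
    rw [← gRinj.tsum_eq hRsupp]
    refine tsum_congr fun c => (Set.indicator_of_mem ?_ F).symm
    simp [hS_def, Set.mem_compl_iff]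
    omega
  have hLsum : Summable (fun c : ℕ × ℕ => F (c.1, c.1 + c.2)) :=
    hFsum.comp_injective gLinj
  have hRsum : Summable (fun c : ℕ × ℕ => F (c.1 + 1 + c.2, c.1)) :=
    hFsum.comp_injective gRinj
    -- Step 3 : evaluate the upper (left) part
  have hLeval : ∀ n : ℕ, ∑' i : ℕ, F (n, n + i)
      = ((n + 1).choose m : ℂ) * (a ^ (n+1) * q ^ ((n+1)^2)) / (1 - a * q ^ (n+1)) := by
    intro n
    have h1 : ∀ i : ℕ, F (n, n + i)
        = (((n + 1).choose m : ℂ) * (a * q ^ (n+1)) ^ (n+1)) * (a * q ^ (n+1)) ^ i := by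
      intro i
      simp only [hF_def]
      rw [show (n + i) + 1 = (n + 1) + i by ring, pow_add]
      ring
    rw [tsum_congr h1, tsum_mul_left, tsum_geometric_of_norm_lt_one (han n)]
    have h2 : (a * q ^ (n+1)) ^ (n+1) = a ^ (n+1) * q ^ ((n+1)^2) := by
      rw [mul_pow, ← pow_mul, sq]
    rw [h2]
    ring
  have hLtotal : ∑' c : ℕ × ℕ, F (c.1, c.1 + c.2)
      = ∑' n : ℕ, ((n + 1).choose m : ℂ) * (a ^ (n+1) * q ^ ((n+1)^2)) / (1 - a * q ^ (n+1)) := by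
    rw [Summable.tsum_prod hLsum]
    exact tsum_congr hLeval
  have hlsum : Summable (fun n : ℕ =>
      ((n + 1).choose m : ℂ) * (a ^ (n+1) * q ^ ((n+1)^2)) / (1 - a * q ^ (n+1))) :=
    (hLsum.prod).congr hLeval
    -- Step 4 : evaluate the lower (right) part
  have hReval : ∀ n : ℕ, ∑' i : ℕ, F (n + 1 + i, n)
      = ((n + 1).choose m : ℂ) * (a ^ (n+1) * q ^ ((n+1)^2)) * (q ^ (n+1) / (1 - q ^ (n+1)))
        + ∑ k ∈ Finset.Icc 1 m, ((n + 1).choose (m - k) : ℂ) * a ^ (n + 1) *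
            q ^ ((n + 1) * (n + 1 + k)) / (1 - q ^ (n + 1)) ^ (k + 1) := by
    intro n
    have hterm : ∀ i : ℕ, F (n + 1 + i, n) = ∑ k ∈ Finset.range (m+1),
        (((n+1).choose k : ℂ) * (a ^ (n+1) * q ^ ((n+1)^2)))
          * (((i+1).choose (m-k) : ℂ) * (q ^ (n+1)) ^ (i+1)) := by
      intro i
      simp only [hF_def]
      rw [show n + 1 + i + 1 = (n+1) + (i+1) by ring]
      rw [Nat.add_choose_eq]
      rw [Finset.Nat.sum_antidiagonal_eq_sum_range_succ_mk]
      push_cast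
      rw [Finset.sum_mul]
      refine Finset.sum_congr rfl fun k hk => ?_
      rw [mul_pow, ← pow_mul]
      ring
    have hsum_i : ∑' i : ℕ, F (n + 1 + i, n) = ∑ k ∈ Finset.range (m+1),
        (((n+1).choose k : ℂ) * (a ^ (n+1) * q ^ ((n+1)^2)))
          * ((q ^ (n+1)) ^ (m-k) / (1 - q ^ (n+1)) ^ ((m-k)+1) - if m - k = 0 then 1 else 0) := by
      rw [tsum_congr hterm,
        Summable.tsum_finsetSum (fun k _ => ((auxChooseSummable' (m-k) (hqn n)).mul_left _))]
      refine Finset.sum_congr rfl fun k hk => ?_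
      rw [tsum_mul_left, auxChooseGeom' (m-k) (hqn n)]
    rw [hsum_i, Finset.sum_range_succ]
    rw [add_comm]
    congr 1
    · -- the k = m term
      rw [Nat.sub_self, if_pos rfl, pow_zero, pow_one]
      rw [div_sub_one (hQne n), show (1:ℂ) - (1 - q ^ (n+1)) = q ^ (n+1) by ring]
    · -- the k < m part
      rw [show Finset.Icc 1 m = Finset.Ico 1 (m+1) by rw [Finset.Ico_add_one_right_eq_Icc],
        Finset.sum_Ico_eq_sum_range]
      simp only [Nat.add_sub_cancel]
      rw [← Finset.sum_range_reflect]
      refine Finset.sum_congr rfl fun i hi => ?_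
      rw [Finset.mem_range] at hi
      have e1 : m - (m - 1 - i) = i + 1 := by omega
      have e2 : m - 1 - i = m - (1 + i) := by omega
      rw [e1, e2, if_neg (Nat.succ_ne_zero i), sub_zero]
      rw [div_eq_mul_inv, div_eq_mul_inv, ← pow_mul]
      ring_nf
  have hrsum := hRsum.prod
  have hws : Summable (fun n : ℕ =>
      ((n + 1).choose m : ℂ) * (a ^ (n+1) * q ^ ((n+1)^2)) * (q ^ (n+1) / (1 - q ^ (n+1)))
        + ∑ k ∈ Finset.Icc 1 m, ((n + 1).choose (m - k) : ℂ) * a ^ (n + 1) *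
            q ^ ((n + 1) * (n + 1 + k)) / (1 - q ^ (n + 1)) ^ (k + 1)) :=
    hrsum.congr hReval
  have hRtotal : ∑' c : ℕ × ℕ, F (c.1 + 1 + c.2, c.1) = ∑' n : ℕ,
      (((n + 1).choose m : ℂ) * (a ^ (n+1) * q ^ ((n+1)^2)) * (q ^ (n+1) / (1 - q ^ (n+1)))
        + ∑ k ∈ Finset.Icc 1 m, ((n + 1).choose (m - k) : ℂ) * a ^ (n + 1) *
            q ^ ((n + 1) * (n + 1 + k)) / (1 - q ^ (n + 1)) ^ (k + 1)) := by
    rw [Summable.tsum_prod hRsum]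
    exact tsum_congr hReval
  have hT : ∀ k : ℕ, Summable (fun n : ℕ => ((n + 1).choose (m - k) : ℂ) * a ^ (n + 1) *
      q ^ ((n + 1) * (n + 1 + k)) / (1 - q ^ (n + 1)) ^ (k + 1)) := by
    intro k
    refine Summable.of_norm_bounded (g :=
      fun n => (((n + 1 : ℕ) : ℝ) ^ m * ‖q‖ ^ (n + 1)) / (1 - ‖q‖) ^ (k + 1))
      ((auxSummablePow m hr0 hq).div_const _) ?_
    intro n
    rw [norm_div]
    have hnum : ‖((n + 1).choose (m - k) : ℂ) * a ^ (n + 1) * q ^ ((n + 1) * (n + 1 + k))‖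
        ≤ ((n + 1 : ℕ) : ℝ) ^ m * ‖q‖ ^ (n + 1) := by
      rw [norm_mul, norm_mul, norm_pow, norm_pow]
      have c1 : ‖((n + 1).choose (m - k) : ℂ)‖ = (((n + 1).choose (m - k) : ℕ) : ℝ) := by
        rw [Complex.norm_natCast]
      rw [c1]
      have b1 := hchoosebound (m - k) n (Nat.sub_le m k)
      have b2 : ‖a‖ ^ (n + 1) ≤ 1 := pow_le_one₀ (norm_nonneg a) ha
      have b3 : ‖q‖ ^ ((n + 1) * (n + 1 + k)) ≤ ‖q‖ ^ (n + 1) :=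
        pow_le_pow_of_le_one hr0 hq.le (Nat.le_mul_of_pos_right _ (by omega))
      calc (((n + 1).choose (m - k) : ℕ) : ℝ) * ‖a‖ ^ (n + 1) * ‖q‖ ^ ((n + 1) * (n + 1 + k))
          ≤ ((n + 1 : ℕ) : ℝ) ^ m * 1 * ‖q‖ ^ (n + 1) := by
            apply mul_le_mul (mul_le_mul b1 b2 (by positivity) (by positivity)) b3
              (by positivity) (by positivity)
        _ = ((n + 1 : ℕ) : ℝ) ^ m * ‖q‖ ^ (n + 1) := by ring
    have hden : (1 - ‖q‖) ^ (k + 1) ≤ ‖(1 - q ^ (n + 1)) ^ (k + 1)‖ := by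
      rw [norm_pow]
      exact pow_le_pow_left₀ hrlt.le (hQlow n) _
    exact div_le_div₀ (by positivity) hnum (by positivity) hden
  have hS : Summable (fun n : ℕ => ∑ k ∈ Finset.Icc 1 m,
      ((n + 1).choose (m - k) : ℂ) * a ^ (n + 1) *
        q ^ ((n + 1) * (n + 1 + k)) / (1 - q ^ (n + 1)) ^ (k + 1)) :=
    summable_sum fun k _ => hT k
  have hw : Summable (fun n : ℕ =>
      ((n + 1).choose m : ℂ) * (a ^ (n+1) * q ^ ((n+1)^2)) * (q ^ (n+1) / (1 - q ^ (n+1)))) :=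
    (hws.sub hS).congr fun n => by ring
  have halg : ∀ n : ℕ,
      ((n + 1).choose m : ℂ) * (a ^ (n+1) * q ^ ((n+1)^2)) / (1 - a * q ^ (n+1))
        + ((n + 1).choose m : ℂ) * (a ^ (n+1) * q ^ ((n+1)^2)) * (q ^ (n+1) / (1 - q ^ (n+1)))
      = ((n + 1).choose m : ℂ) * (1 - a * q ^ (2 * (n + 1))) * a ^ (n + 1) *
          q ^ ((n + 1) ^ 2) / ((1 - q ^ (n + 1)) * (1 - a * q ^ (n + 1))) := by
    intro n
    have h2 : q ^ (2 * (n + 1)) = q ^ (n + 1) * q ^ (n + 1) := by rw [two_mul, pow_add]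
    rw [mul_div_assoc', div_add_div _ _ (hAne n) (hQne n), h2]
    rw [div_eq_div_iff (mul_ne_zero (hAne n) (hQne n)) (mul_ne_zero (hQne n) (hAne n))]
    ring
  rw [step1, hsplit, ← hLre, ← hRre, hLtotal, hRtotal]
  rw [Summable.tsum_add hw hS]
  rw [← add_assoc, ← Summable.tsum_add hlsum hw]
  rw [tsum_congr halg]
  congr 1
  exact Summable.tsum_finsetSum fun k _ => hT k
end

section
/- For all natural numbers n ≥ 1 and N ≥ 1, d(n, N) = t(n, N) − t(n − N, N), where d(n, N) is the number of positive divisors of n that are ≤ N, and t(m, N) is the sum over partitions π of m into distinct parts with largest part minus smallest part ≤ N − 1 of (−1)^{ℓ(π)−1} · s(π), with ℓ(π) the number of parts and s(π) the smallest part (and t(m, N) = 0 if m ≤ 0). -/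
open Finset

/-- `d n N`: the number of positive divisors of `n` that are at most `N`. -/
def dCount (n N : ℕ) : ℕ := ((Finset.Icc 1 N).filter (fun d => d ∣ n)).card

/-- `tSum m N`: the alternating sum `∑ (-1)^{ℓ(π)-1} s(π)` over partitions `π` of `m`
into distinct parts whose largest part minus smallest part is at most `N - 1`.
Such a partition is identified with the finset of its parts. -/
def tSum (m N : ℕ) : ℤ :=
  ∑ S ∈ (Finset.Icc 1 m).powerset.filter
      (fun S => S.sum id = m ∧ ∀ x ∈ S, ∀ y ∈ S, x - y ≤ N - 1),
    if h : S.Nonempty then (-1 : ℤ) ^ (S.card - 1) * (S.min' h : ℤ) else 0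

namespace Stmt19Aux

/-- integer sum of a finset of naturals -/
def σ (T : Finset ℕ) : ℤ := ((∑ t ∈ T, t : ℕ) : ℤ)

lemma σ_nonneg (T : Finset ℕ) : 0 ≤ σ T := Int.natCast_nonneg _

lemma σ_insert {T : Finset ℕ} {a : ℕ} (h : a ∉ T) : σ (insert a T) = a + σ T := by
  rw [σ, σ, Finset.sum_insert h]
  push_cast
  ring

/-- The master signed count: pairs `(j, T)` with `j ≥ 1`, `T ⊆ {0,…,M-1}`,
`j * (|T| + r) + Σ T = m`, weighted by `(-1)^{|T|}`. -/
def Hf (r M : ℕ) (m : ℤ) : ℤ :=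
  ∑ T ∈ (Finset.range M).powerset,
    if ((T.card + r : ℤ) ∣ (m - σ T) ∧ (T.card + r : ℤ) ≤ m - σ T)
    then (-1 : ℤ) ^ T.card else 0

lemma Hf_nonpos {r M : ℕ} (hr : 1 ≤ r) {m : ℤ} (hm : m ≤ 0) : Hf r M m = 0 := by
  apply Finset.sum_eq_zero
  intro T _
  rw [if_neg]
  rintro ⟨-, h2⟩
  have h3 := σ_nonneg T
  have h4 : (1 : ℤ) ≤ r := by exact_mod_cast hr
  have h5 : (0 : ℤ) ≤ T.card := Int.natCast_nonneg _
  omega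

/-- summing over the powerset of an image -/
lemma sum_powerset_image {g : ℕ → ℕ} (hg : Function.Injective g) (s : Finset ℕ)
    (f : Finset ℕ → ℤ) :
    ∑ T ∈ (s.image g).powerset, f T = ∑ V ∈ s.powerset, f (V.image g) := by
  have key : ∀ T ∈ (s.image g).powerset, (T.preimage g hg.injOn).image g = T := by
    intro T hT
    rw [Finset.mem_powerset] at hT
    ext x
    simp only [Finset.mem_image, Finset.mem_preimage]
    constructor
    · rintro ⟨y, hy, rfl⟩; exact hy
    · intro hx
      obtain ⟨y, -, rfl⟩ := Finset.mem_image.mp (hT hx)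
      exact ⟨y, hx, rfl⟩
  refine Finset.sum_nbij' (i := fun T => T.preimage g hg.injOn)
      (j := fun V => V.image g) ?_ ?_ ?_ ?_ ?_
  · intro T hT
    rw [Finset.mem_powerset] at hT ⊢
    intro x hx
    rw [Finset.mem_preimage] at hx
    obtain ⟨y, hy, hxy⟩ := Finset.mem_image.mp (hT hx)
    rwa [← hg hxy]
  · intro V hV
    rw [Finset.mem_powerset] at hV ⊢
    exact Finset.image_subset_image hV
  · exact key
  · intro V hV
    ext x
    simp only [Finset.mem_preimage, Finset.mem_image]
    exact ⟨fun ⟨y, hy, hxy⟩ => by rwa [← hg hxy], fun hx => ⟨x, hx, rfl⟩⟩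
  · intro T hT
    rw [key T hT]
lemma ite_and_eq_sub (c : ℤ) (X : ℤ) (hc : 1 ≤ c) (s : ℤ) :
    (if (c ∣ X ∧ c ≤ X) then s else 0)
      = (if (c ∣ X ∧ 2 * c ≤ X) then s else 0) + (if X = c then s else 0) := by
  by_cases hd : c ∣ X
  · by_cases he : X = c
    · subst he
      rw [if_pos ⟨hd, le_refl _⟩, if_neg, if_pos rfl]
      · omega
      · rintro ⟨-, h⟩; omega
    · by_cases hle : c ≤ X
      · have h2 : 2 * c ≤ X := by
          have hpos : 0 < X - c := by omega
          have hdvd : c ∣ X - c := (Int.dvd_sub hd (dvd_refl c))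
          have := Int.le_of_dvd hpos hdvd
          omega
        rw [if_pos ⟨hd, hle⟩, if_pos ⟨hd, h2⟩, if_neg he]; ring
      · rw [if_neg, if_neg, if_neg he]
        · ring
        · rintro ⟨-, h⟩; omega
        · rintro ⟨-, h⟩; omega
  · rw [if_neg, if_neg, if_neg]
    · ring
    · intro h; subst h; exact hd (dvd_refl _)
    · rintro ⟨h, -⟩; exact hd h
    · rintro ⟨h, -⟩; exact hd h

/-- Toggling the largest element `M`. -/
lemma Hf_L1 (r M : ℕ) (m : ℤ) :
    Hf r (M + 1) m = Hf r M m - Hf (r + 1) M (m - M) := by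
  unfold Hf
  rw [Finset.range_add_one, Finset.sum_powerset_insert Finset.notMem_range_self]
  congr 1
  rw [← Finset.sum_neg_distrib]
  apply Finset.sum_congr rfl
  intro T hT
  rw [Finset.mem_powerset] at hT
  have hM : M ∉ T := fun h => Finset.notMem_range_self (hT h)
  rw [Finset.card_insert_of_notMem hM, σ_insert hM]
  have h1 : m - (↑M + σ T) = m - ↑M - σ T := by ring
  have h2 : ((T.card + 1 : ℕ) + (r : ℤ)) = (T.card : ℤ) + ((r + 1 : ℕ) : ℤ) := by
    push_cast; ring
  rw [h1, h2, pow_succ]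
  split
  · ring
  · ring

/-- boundary term for the toggle-0 identity -/
def Pi0 (M : ℕ) (m : ℤ) : ℤ :=
  ∑ V ∈ (Finset.range M).powerset,
    if (σ V + V.card = m) then (-1 : ℤ) ^ V.card else 0

lemma dvd_shift {c X : ℤ} : c ∣ (X - c) ↔ c ∣ X := by
  constructor
  · intro h
    have := dvd_add h (dvd_refl c)
    rwa [sub_add_cancel] at this
  · intro h
    exact dvd_sub h (dvd_refl c)

/-- Toggling the element `0` (with re-anchoring shift). -/
lemma Hf_L2 (r M : ℕ) (hr : 1 ≤ r) (m : ℤ) :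
    Hf r (M + 1) m = Hf r M (m + r) - Hf (r + 1) M (m + r + 1) := by
  have hg : Function.Injective (fun v : ℕ => v + 1) := fun a b h => by
    simpa using h
  have hrange : Finset.range (M + 1)
      = insert 0 ((Finset.range M).image (fun v => v + 1)) := by
    ext x
    simp only [Finset.mem_range, Finset.mem_insert, Finset.mem_image]
    constructor
    · intro h
      rcases Nat.eq_zero_or_pos x with h0 | h0
      · exact Or.inl h0
      · exact Or.inr ⟨x - 1, by omega, by omega⟩
    · rintro (rfl | ⟨a, ha, rfl⟩) <;> omega
  have h0 : (0 : ℕ) ∉ (Finset.range M).image (fun v => v + 1) := by simp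
  have hcard : ∀ V : Finset ℕ, (V.image (fun v => v + 1)).card = V.card :=
    fun V => Finset.card_image_of_injective _ hg
  have hσ : ∀ V : Finset ℕ, σ (V.image (fun v => v + 1)) = σ V + V.card := by
    intro V
    rw [σ, σ, Finset.sum_image (fun a _ b _ h => hg h), Finset.sum_add_distrib]
    push_cast
    simp
  have h0img : ∀ V : Finset ℕ, (0 : ℕ) ∉ V.image (fun v => v + 1) := by simp
  conv_lhs => rw [Hf, hrange, Finset.sum_powerset_insert h0, sum_powerset_image hg,
    sum_powerset_image hg]
  have step1 : (∑ V ∈ (Finset.range M).powerset,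
      if (((V.image (fun v => v + 1)).card + r : ℤ) ∣ (m - σ (V.image (fun v => v + 1)))
          ∧ ((V.image (fun v => v + 1)).card + r : ℤ) ≤ m - σ (V.image (fun v => v + 1)))
      then (-1 : ℤ) ^ (V.image (fun v => v + 1)).card else 0)
      = Hf r M (m + r) - Pi0 M m := by
    rw [Hf, Pi0, ← Finset.sum_sub_distrib]
    apply Finset.sum_congr rfl
    intro V _
    rw [hcard, hσ]
    set k : ℤ := (V.card : ℤ) with hk
    set c : ℤ := k + r with hc
    set X : ℤ := m + r - σ V with hX
    have hc1 : 1 ≤ c := by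
      have h1 : (0 : ℤ) ≤ k := Int.natCast_nonneg _
      have h2 : (1 : ℤ) ≤ r := by exact_mod_cast hr
      omega
    have he1 : m - (σ V + k) = X - c := by rw [hX, hc]; ring
    have hiff : ((c ∣ (m - (σ V + k))) ∧ c ≤ m - (σ V + k)) ↔ ((c ∣ X) ∧ 2 * c ≤ X) := by
      rw [he1]
      exact and_congr dvd_shift (by omega)
    rw [if_congr hiff rfl rfl]
    have hiff2 : (σ V + (V.card : ℤ) = m) ↔ (X = c) := by
      rw [hX, hc, hk]; omega
    rw [if_congr hiff2 rfl rfl]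
    have := ite_and_eq_sub c X hc1 ((-1 : ℤ) ^ V.card)
    linarith
  have step2 : (∑ V ∈ (Finset.range M).powerset,
      if (((insert 0 (V.image (fun v => v + 1))).card + r : ℤ)
            ∣ (m - σ (insert 0 (V.image (fun v => v + 1))))
          ∧ ((insert 0 (V.image (fun v => v + 1))).card + r : ℤ)
            ≤ m - σ (insert 0 (V.image (fun v => v + 1))))
      then (-1 : ℤ) ^ (insert 0 (V.image (fun v => v + 1))).card else 0)
      = -(Hf (r + 1) M (m + r + 1) - Pi0 M m) := by
    rw [Hf, Pi0, ← Finset.sum_sub_distrib, ← Finset.sum_neg_distrib]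
    apply Finset.sum_congr rfl
    intro V _
    rw [Finset.card_insert_of_notMem (h0img V), σ_insert (h0img V), hcard, hσ]
    set k : ℤ := (V.card : ℤ) with hk
    set c : ℤ := k + r + 1 with hc
    set X : ℤ := m + r + 1 - σ V with hX
    have hc1 : 1 ≤ c := by
      have h1 : (0 : ℤ) ≤ k := Int.natCast_nonneg _
      have h2 : (1 : ℤ) ≤ r := by exact_mod_cast hr
      omega
    have he1 : m - ((0 : ℕ) + (σ V + k)) = X - c := by rw [hX, hc]; ring
    have hcast : ((V.card + 1 : ℕ) + (r : ℤ)) = c := by rw [hc, hk]; push_cast; ring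
    rw [hcast, he1]
    have hiff : ((c ∣ (X - c)) ∧ c ≤ X - c) ↔ ((c ∣ X) ∧ 2 * c ≤ X) :=
      and_congr dvd_shift (by omega)
    rw [if_congr hiff rfl rfl]
    have hcast2 : (k + ((r + 1 : ℕ) : ℤ)) = c := by rw [hc]; push_cast; ring
    rw [hcast2]
    have hiff2 : (σ V + (V.card : ℤ) = m) ↔ (X = c) := by
      rw [hX, hc, hk]; omega
    rw [if_congr hiff2 rfl rfl, pow_succ]
    have := ite_and_eq_sub c X hc1 ((-1 : ℤ) ^ V.card)
    have hneg : (if ((c ∣ X) ∧ 2 * c ≤ X) then (-1 : ℤ) ^ V.card * (-1) else 0)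
        = -(if ((c ∣ X) ∧ 2 * c ≤ X) then (-1 : ℤ) ^ V.card else 0) := by
      split <;> ring
    rw [hneg]
    linarith
  rw [step1, step2]
  ring

lemma Hf_star (r M : ℕ) (hr : 1 ≤ r) (m : ℤ) :
    Hf r M m - Hf (r + 1) M (m - M) = Hf r M (m + r) - Hf (r + 1) M (m + r + 1) := by
  have h1 := Hf_L1 r M m
  have h2 := Hf_L2 r M hr m
  linarith

lemma Hf_RR (r M : ℕ) (hr : 1 ≤ r) (m : ℤ) :
    Hf r (M + 1) m - Hf r (M + 1) (m - ((M : ℤ) + 1 + r))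
      = Hf r M m - Hf r M (m - ((M : ℤ) + 1)) := by
  have h1 := Hf_L1 r M m
  have h2 := Hf_L1 r M (m - ((M : ℤ) + 1 + r))
  have h3 := Hf_star r M hr (m - ((M : ℤ) + 1 + r))
  have e1 : m - ((M : ℤ) + 1 + r) + r = m - ((M : ℤ) + 1) := by ring
  have e2 : m - ((M : ℤ) + 1 + r) + r + 1 = m - (M : ℤ) := by ring
  rw [e2] at h3
  rw [e1] at h3
  linarith

lemma Hf_main : ∀ (M : ℕ) (m : ℤ),
    Hf 1 M m = if (1 ≤ m ∧ ((M : ℤ) + 1) ∣ (m - 1)) then 1 else 0 := by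
  intro M
  induction M with
  | zero =>
    intro m
    rw [Hf]
    simp only [Finset.range_zero, Finset.powerset_empty, Finset.sum_singleton,
      Finset.card_empty, Nat.cast_zero, Nat.cast_one, zero_add]
    have hσ : σ (∅ : Finset ℕ) = 0 := by simp [σ]
    rw [hσ]
    have h1 : ((1 : ℤ) ∣ (m - 0) ∧ (1 : ℤ) ≤ m - 0) ↔ (1 ≤ m ∧ ((0 : ℤ) + 1) ∣ (m - 1)) := by
      constructor
      · rintro ⟨-, h⟩; exact ⟨by omega, by simpa using one_dvd _⟩
      · rintro ⟨h, -⟩; exact ⟨one_dvd _, by omega⟩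
    rw [if_congr h1 rfl rfl]
    simp
  | succ M ih =>
    have recur : ∀ m : ℤ, Hf 1 (M + 1) m
        = Hf 1 (M + 1) (m - ((M : ℤ) + 2)) + (if m = 1 then 1 else 0) := by
      intro m
      have h := Hf_RR 1 M le_rfl m
      have e1 : m - ((M : ℤ) + 1 + (1 : ℕ)) = m - ((M : ℤ) + 2) := by push_cast; ring
      rw [e1, ih m, ih (m - ((M : ℤ) + 1))] at h
      have hbr : (if (1 ≤ m ∧ ((M : ℤ) + 1) ∣ (m - 1)) then (1 : ℤ) else 0)
          - (if (1 ≤ m - ((M : ℤ) + 1) ∧ ((M : ℤ) + 1) ∣ (m - ((M : ℤ) + 1) - 1)) then 1 else 0)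
          = if m = 1 then 1 else 0 := by
        have hdiff : ((M : ℤ) + 1) ∣ (m - ((M : ℤ) + 1) - 1) ↔ ((M : ℤ) + 1) ∣ (m - 1) := by
          constructor
          · intro hdvd
            have := dvd_add hdvd (dvd_refl ((M : ℤ) + 1))
            have e : m - ((M : ℤ) + 1) - 1 + ((M : ℤ) + 1) = m - 1 := by ring
            rwa [e] at this
          · intro hdvd
            have := dvd_sub hdvd (dvd_refl ((M : ℤ) + 1))
            have e : m - 1 - ((M : ℤ) + 1) = m - ((M : ℤ) + 1) - 1 := by ring
            rwa [e] at this
        have hM0 : (0 : ℤ) ≤ M := Int.natCast_nonneg _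
        by_cases hd : ((M : ℤ) + 1) ∣ (m - 1)
        · by_cases h1 : m = 1
          · subst h1
            rw [if_pos ⟨le_refl _, hd⟩, if_neg, if_pos rfl]
            · ring
            · rintro ⟨hh, -⟩; omega
          · by_cases h2 : 1 ≤ m
            · have hm2 : 2 ≤ m := by omega
              have := Int.le_of_dvd (by omega : (0 : ℤ) < m - 1) hd
              rw [if_pos ⟨h2, hd⟩, if_pos ⟨by omega, hdiff.mpr hd⟩, if_neg h1]
              ring
            · rw [if_neg, if_neg, if_neg h1]
              · ring
              · rintro ⟨hh, -⟩; omega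
              · rintro ⟨hh, -⟩; omega
        · rw [if_neg, if_neg, if_neg]
          · ring
          · intro h1; subst h1; simp at hd
          · rintro ⟨-, hh⟩; exact hd (hdiff.mp hh)
          · rintro ⟨-, hh⟩; exact hd hh
      rw [hbr] at h
      linarith
    have key : ∀ (n : ℕ) (m : ℤ), m ≤ n →
        Hf 1 (M + 1) m = if (1 ≤ m ∧ (((M + 1 : ℕ) : ℤ) + 1) ∣ (m - 1)) then 1 else 0 := by
      intro n
      induction n with
      | zero =>
        intro m hm
        rw [Hf_nonpos le_rfl (by exact_mod_cast hm), if_neg]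
        rintro ⟨h1, -⟩
        have : (0 : ℤ) ≤ 0 := le_refl _
        omega
      | succ n ihn =>
        intro m hm
        by_cases hm' : m ≤ n
        · exact ihn m hm'
        · have hm1 : 1 ≤ m := by
            push_cast at hm hm' ⊢
            omega
          rw [recur m, ihn (m - ((M : ℤ) + 2)) (by push_cast at hm ⊢; omega)]
          push_cast
          have hdiff : ((M : ℤ) + 2) ∣ (m - ((M : ℤ) + 2) - 1) ↔ ((M : ℤ) + 2) ∣ (m - 1) := by
            constructor
            · intro hdvd
              have := dvd_add hdvd (dvd_refl ((M : ℤ) + 2))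
              have e : m - ((M : ℤ) + 2) - 1 + ((M : ℤ) + 2) = m - 1 := by ring
              rwa [e] at this
            · intro hdvd
              have := dvd_sub hdvd (dvd_refl ((M : ℤ) + 2))
              have e : m - 1 - ((M : ℤ) + 2) = m - ((M : ℤ) + 2) - 1 := by ring
              rwa [e] at this
          have hM0 : (0 : ℤ) ≤ M := Int.natCast_nonneg _
          by_cases h1 : m = 1
          · subst h1
            rw [if_neg, if_pos rfl, if_pos ⟨le_refl _, by simp⟩]
            · ring
            · rintro ⟨hh, -⟩; omega
          · rw [if_neg h1]
            by_cases hd : ((M : ℤ) + 2) ∣ (m - 1)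
            · have hm2 : 2 ≤ m := by omega
              have := Int.le_of_dvd (by omega : (0 : ℤ) < m - 1) hd
              rw [if_pos ⟨by omega, hdiff.mpr hd⟩, if_pos ⟨hm1, hd⟩]
              ring
            · rw [if_neg, if_neg]
              · ring
              · rintro ⟨-, hh⟩; exact hd hh
              · rintro ⟨-, hh⟩; exact hd (hdiff.mp hh)
    intro m
    by_cases hm : 1 ≤ m
    · exact key m.toNat m (by omega)
    · rw [Hf_nonpos le_rfl (by omega), if_neg]
      rintro ⟨h1, -⟩; omega

/-- Signed count of subsets `T ⊆ {0,…,N-1}` (shifted parts `j+t`) with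
`ΣT + j·|T| = n`. -/
def Pf (j N n : ℕ) : ℤ :=
  ∑ T ∈ (Finset.range N).powerset,
    if (∑ t ∈ T, t) + j * T.card = n then (-1 : ℤ) ^ T.card else 0

lemma Pf_one {j n : ℕ} (hn : 1 ≤ n) : Pf j 1 n = if j = n then -1 else 0 := by
  rw [Pf, show Finset.range 1 = insert 0 (∅ : Finset ℕ) from rfl,
    Finset.sum_powerset_insert (Finset.notMem_empty 0), Finset.powerset_empty,
    Finset.sum_singleton, Finset.sum_singleton]
  simp only [Finset.sum_empty, Finset.card_empty, mul_zero, add_zero, pow_zero,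
    Finset.sum_insert (Finset.notMem_empty 0),
    Finset.card_insert_of_notMem (Finset.notMem_empty 0), zero_add, mul_one, pow_one]
  rw [if_neg (by omega : ¬(0 = n)), zero_add]

lemma dCount_succ (n N : ℕ) :
    dCount n (N + 1) = dCount n N + (if (N + 1) ∣ n then 1 else 0) := by
  rw [dCount, dCount]
  have h : Finset.Icc 1 (N + 1) = insert (N + 1) (Finset.Icc 1 N) := by
    ext x
    simp only [Finset.mem_Icc, Finset.mem_insert]
    omega
  have hnm : (N + 1) ∉ (Finset.Icc 1 N).filter (fun d => d ∣ n) := by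
    intro hmem
    have := Finset.mem_of_mem_filter _ hmem
    simp only [Finset.mem_Icc] at this
    omega
  rw [h, Finset.filter_insert]
  by_cases hd : (N + 1) ∣ n
  · rw [if_pos hd, if_pos hd, Finset.card_insert_of_notMem hnm]
  · rw [if_neg hd, if_neg hd, add_zero]

lemma sum_ite_mul_eq (n N : ℕ) (hn : 1 ≤ n) (T : Finset ℕ) :
    (∑ j ∈ Finset.Icc 1 n,
      if (∑ t ∈ T, t) + N + j * (T.card + 1) = n then (-1 : ℤ) ^ T.card else 0)
    = if ((T.card + 1 : ℤ) ∣ (((n : ℤ) - N) - σ T) ∧ (T.card + 1 : ℤ) ≤ ((n : ℤ) - N) - σ T)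
      then (-1 : ℤ) ^ T.card else 0 := by
  have hσa : σ T = ((∑ t ∈ T, t : ℕ) : ℤ) := rfl
  have hk0 : (0 : ℤ) ≤ (T.card : ℤ) := Int.natCast_nonneg _
  have hσ0 : (0 : ℤ) ≤ σ T := σ_nonneg T
  have hcond : ∀ j : ℕ, ((∑ t ∈ T, t) + N + j * (T.card + 1) = n)
      ↔ ((j : ℤ) * ((T.card : ℤ) + 1) = ((n : ℤ) - N) - σ T) := by
    intro j
    rw [hσa]
    constructor
    · intro h
      have h2 := congrArg (Nat.cast : ℕ → ℤ) h
      push_cast [-Nat.cast_sum] at h2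
      linarith
    · intro h
      have h2 : (((∑ t ∈ T, t) + N + j * (T.card + 1) : ℕ) : ℤ) = ((n : ℕ) : ℤ) := by
        push_cast [-Nat.cast_sum]
        linarith
      exact_mod_cast h2
  by_cases h : (((T.card : ℤ) + 1) ∣ (((n : ℤ) - N) - σ T)
      ∧ ((T.card : ℤ) + 1) ≤ ((n : ℤ) - N) - σ T)
  · obtain ⟨⟨c, hc⟩, hle⟩ := h
    have hc1 : 1 ≤ c := by
      rcases le_or_gt 1 c with h1 | h1
      · exact h1
      · exfalso
        have hc0 : c ≤ 0 := by omega
        have : ((T.card : ℤ) + 1) * c ≤ 0 :=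
          mul_nonpos_of_nonneg_of_nonpos (by omega) hc0
        omega
    have hcn : c ≤ (n : ℤ) := by
      have h1 : c * 1 ≤ c * ((T.card : ℤ) + 1) :=
        mul_le_mul_of_nonneg_left (by omega) (by omega)
      have h2 : ((T.card : ℤ) + 1) * c = c * ((T.card : ℤ) + 1) := by ring
      have h3 : (0 : ℤ) ≤ N := Int.natCast_nonneg _
      omega
    set j₀ : ℕ := c.toNat with hj₀
    have hj₀c : (j₀ : ℤ) = c := Int.toNat_of_nonneg (by omega)
    rw [if_pos ⟨⟨c, hc⟩, hle⟩]
    rw [Finset.sum_eq_single_of_mem j₀ ?_ ?_]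
    · rw [if_pos ((hcond j₀).mpr (by rw [hj₀c]; linarith))]
    · rw [Finset.mem_Icc]
      refine ⟨by omega, ?_⟩
      exact_mod_cast (hj₀c ▸ hcn : (j₀ : ℤ) ≤ (n : ℤ))
    · intro b _ hne
      rw [if_neg]
      intro heq
      apply hne
      have hb := (hcond b).mp heq
      have : (b : ℤ) = c := by
        have h1 : (b : ℤ) * ((T.card : ℤ) + 1) = c * ((T.card : ℤ) + 1) := by
          rw [hb, hc]; ring
        exact mul_right_cancel₀ (by omega) h1
      omega
  · rw [if_neg h]
    apply Finset.sum_eq_zero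
    intro j hj
    rw [Finset.mem_Icc] at hj
    rw [if_neg]
    intro heq
    apply h
    have hb := (hcond j).mp heq
    constructor
    · exact ⟨j, by rw [← hb]; ring⟩
    · have hj1 : (1 : ℤ) ≤ (j : ℤ) := by exact_mod_cast hj.1
      calc (T.card : ℤ) + 1 = 1 * ((T.card : ℤ) + 1) := by ring
        _ ≤ (j : ℤ) * ((T.card : ℤ) + 1) :=
            mul_le_mul_of_nonneg_right hj1 (by omega)
        _ = ((n : ℤ) - N) - σ T := hb

lemma dCount_one {n : ℕ} (hn : 1 ≤ n) : dCount n 1 = 1 := by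
  rw [dCount, show Finset.Icc 1 1 = {1} from rfl, Finset.filter_singleton, if_pos (one_dvd n)]
  rfl

lemma Pf_toggle (j N n : ℕ) :
    Pf j (N + 1) n = Pf j N n - (∑ T ∈ (Finset.range N).powerset,
      if (∑ t ∈ T, t) + N + j * (T.card + 1) = n then (-1 : ℤ) ^ T.card else 0) := by
  rw [Pf, Pf, Finset.range_add_one, Finset.sum_powerset_insert Finset.notMem_range_self]
  congr 1
  rw [← Finset.sum_neg_distrib]
  apply Finset.sum_congr rfl
  intro T hT
  rw [Finset.mem_powerset] at hT
  have hN : N ∉ T := fun h => Finset.notMem_range_self (hT h)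
  rw [Finset.card_insert_of_notMem hN, Finset.sum_insert hN, pow_succ]
  have he : N + (∑ t ∈ T, t) + j * (T.card + 1) = (∑ t ∈ T, t) + N + j * (T.card + 1) := by ring
  rw [he]
  split
  · ring
  · ring

lemma Hf_value (N n : ℕ) (hn : 1 ≤ n) :
    Hf 1 N ((n : ℤ) - N) = if (N + 1) ∣ n then 1 else 0 := by
  rw [Hf_main]
  have e : (n : ℤ) - N - 1 = (n : ℤ) - ((N : ℤ) + 1) := by ring
  have hdvd : ((N : ℤ) + 1) ∣ ((n : ℤ) - N - 1) ↔ ((N : ℤ) + 1) ∣ (n : ℤ) := by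
    rw [e]; exact dvd_shift
  by_cases hd : (N + 1) ∣ n
  · have hdz : ((N : ℤ) + 1) ∣ (n : ℤ) := by exact_mod_cast hd
    have hge : (N : ℤ) + 1 ≤ (n : ℤ) := by
      have := Int.le_of_dvd (by exact_mod_cast hn) hdz
      omega
    rw [if_pos ⟨by omega, hdvd.mpr hdz⟩, if_pos hd]
  · rw [if_neg, if_neg hd]
    rintro ⟨-, h2⟩
    exact hd (by exact_mod_cast hdvd.mp h2)

lemma sumPf (N : ℕ) (hN : 1 ≤ N) : ∀ n : ℕ, 1 ≤ n →
    ∑ j ∈ Finset.Icc 1 n, Pf j N n = -(dCount n N : ℤ) := by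
  induction N, hN using Nat.le_induction with
  | base =>
    intro n hn
    calc ∑ j ∈ Finset.Icc 1 n, Pf j 1 n
        = ∑ j ∈ Finset.Icc 1 n, (if j = n then (-1 : ℤ) else 0) :=
          Finset.sum_congr rfl fun j _ => Pf_one hn
      _ = if n ∈ Finset.Icc 1 n then (-1 : ℤ) else 0 := by
          rw [Finset.sum_ite_eq' (Finset.Icc 1 n) n (fun _ => (-1 : ℤ))]
      _ = -(dCount n 1 : ℤ) := by
          rw [if_pos (Finset.mem_Icc.mpr ⟨hn, le_rfl⟩), dCount_one hn]
          norm_num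
  | succ N hN ih =>
    intro n hn
    have swap : (∑ j ∈ Finset.Icc 1 n, ∑ T ∈ (Finset.range N).powerset,
        if (∑ t ∈ T, t) + N + j * (T.card + 1) = n then (-1 : ℤ) ^ T.card else 0)
        = Hf 1 N ((n : ℤ) - N) := by
      rw [Finset.sum_comm, Hf]
      apply Finset.sum_congr rfl
      intro T _
      rw [sum_ite_mul_eq n N hn T]
      norm_num
    calc ∑ j ∈ Finset.Icc 1 n, Pf j (N + 1) n
        = ∑ j ∈ Finset.Icc 1 n, (Pf j N n - ∑ T ∈ (Finset.range N).powerset,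
            if (∑ t ∈ T, t) + N + j * (T.card + 1) = n then (-1 : ℤ) ^ T.card else 0) :=
          Finset.sum_congr rfl fun j _ => Pf_toggle j N n
      _ = (∑ j ∈ Finset.Icc 1 n, Pf j N n) - Hf 1 N ((n : ℤ) - N) := by
          rw [Finset.sum_sub_distrib, swap]
      _ = -(dCount n N : ℤ) - (if (N + 1) ∣ n then 1 else 0) := by
          rw [ih n hn, Hf_value N n hn]
      _ = -(dCount n (N + 1) : ℤ) := by
          rw [dCount_succ n N]
          split <;> push_cast <;> ring

/-- the collection of partitions of `m` into distinct parts with window `< N` -/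
def FF (m N : ℕ) : Finset (Finset ℕ) :=
  (Finset.Icc 1 m).powerset.filter
    (fun S => S.sum id = m ∧ ∀ x ∈ S, ∀ y ∈ S, x - y ≤ N - 1)

def gmin (S : Finset ℕ) : ℕ := S.min.untopD 0
def gmax (S : Finset ℕ) : ℕ := S.max.unbotD 0

lemma gmin_eq {S : Finset ℕ} (h : S.Nonempty) : gmin S = S.min' h := by
  rw [gmin, ← Finset.coe_min' h, WithTop.untopD_coe]

lemma gmax_eq {S : Finset ℕ} (h : S.Nonempty) : gmax S = S.max' h := by
  rw [gmax, ← Finset.coe_max' h, WithBot.unbotD_coe]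

lemma gmin_mem {S : Finset ℕ} (h : S.Nonempty) : gmin S ∈ S := by
  rw [gmin_eq h]; exact S.min'_mem h

lemma gmax_mem {S : Finset ℕ} (h : S.Nonempty) : gmax S ∈ S := by
  rw [gmax_eq h]; exact S.max'_mem h

lemma gmin_le {S : Finset ℕ} {x : ℕ} (hx : x ∈ S) : gmin S ≤ x := by
  rw [gmin_eq ⟨x, hx⟩]; exact S.min'_le x hx

lemma le_gmax {S : Finset ℕ} {x : ℕ} (hx : x ∈ S) : x ≤ gmax S := by
  rw [gmax_eq ⟨x, hx⟩]; exact S.le_max' x hx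

lemma gmin_eq_of {S : Finset ℕ} {a : ℕ} (ha : a ∈ S) (h : ∀ x ∈ S, a ≤ x) :
    gmin S = a := by
  have hne : S.Nonempty := ⟨a, ha⟩
  rw [gmin_eq hne]
  exact le_antisymm (S.min'_le a ha) (Finset.le_min' S hne a h)

lemma gmax_eq_of {S : Finset ℕ} {a : ℕ} (ha : a ∈ S) (h : ∀ x ∈ S, x ≤ a) :
    gmax S = a := by
  have hne : S.Nonempty := ⟨a, ha⟩
  rw [gmax_eq hne]
  exact le_antisymm (Finset.max'_le S hne a h) (S.le_max' a ha)

lemma FF_mem {m N : ℕ} {S : Finset ℕ} (h : S ∈ FF m N) :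
    S ⊆ Finset.Icc 1 m ∧ S.sum id = m ∧ ∀ x ∈ S, ∀ y ∈ S, x - y ≤ N - 1 := by
  rw [FF, Finset.mem_filter, Finset.mem_powerset] at h
  exact ⟨h.1, h.2.1, h.2.2⟩

lemma FF_mem_intro {m N : ℕ} {S : Finset ℕ} (h1 : S ⊆ Finset.Icc 1 m)
    (h2 : S.sum id = m) (h3 : ∀ x ∈ S, ∀ y ∈ S, x - y ≤ N - 1) : S ∈ FF m N := by
  rw [FF, Finset.mem_filter, Finset.mem_powerset]
  exact ⟨h1, h2, h3⟩

lemma FF_nonempty {m N : ℕ} (hm : 1 ≤ m) {S : Finset ℕ} (h : S ∈ FF m N) :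
    S.Nonempty := by
  rw [Finset.nonempty_iff_ne_empty]
  rintro rfl
  have := (FF_mem h).2.1
  rw [Finset.sum_empty] at this
  omega

lemma tSum_FF (m N : ℕ) : tSum m N
    = ∑ S ∈ FF m N, if h : S.Nonempty then (-1 : ℤ) ^ (S.card - 1) * (S.min' h : ℤ) else 0 :=
  rfl

lemma tSum_eq_gmin {m N : ℕ} (hm : 1 ≤ m) :
    tSum m N = ∑ S ∈ FF m N, (-1 : ℤ) ^ (S.card - 1) * (gmin S : ℤ) := by
  rw [tSum_FF]
  apply Finset.sum_congr rfl
  intro S hS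
  have hne : S.Nonempty := FF_nonempty hm hS
  rw [dif_pos hne, gmin_eq hne]

lemma tSum_zero (N : ℕ) : tSum 0 N = 0 := by
  rw [tSum_FF]
  apply Finset.sum_eq_zero
  intro S hS
  have h1 := (FF_mem hS).1
  have h2 : S = ∅ := by
    rw [show Finset.Icc 1 0 = ∅ from rfl] at h1
    exact Finset.subset_empty.mp h1
  subst h2
  rw [dif_neg]
  exact Finset.not_nonempty_empty

lemma up_facts {n N : ℕ} (hN : 1 ≤ N) (hlt : N < n) {S : Finset ℕ}
    (hS : S ∈ FF (n - N) N) :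
    insert (gmin S + N) (S.erase (gmin S)) ∈ (FF n N).filter (fun T => N < gmax T)
    ∧ gmax (insert (gmin S + N) (S.erase (gmin S))) = gmin S + N
    ∧ (insert (gmin S + N) (S.erase (gmin S))).card = S.card := by
  obtain ⟨hsub, hsum, hwin⟩ := FF_mem hS
  have hm1 : 1 ≤ n - N := by omega
  have hne : S.Nonempty := FF_nonempty hm1 hS
  have haS : gmin S ∈ S := gmin_mem hne
  have hbounds : ∀ x ∈ S, 1 ≤ x ∧ x ≤ n - N := by
    intro x hx
    exact Finset.mem_Icc.mp (hsub hx)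
  have ha1 : 1 ≤ gmin S := (hbounds _ haS).1
  have han : gmin S ≤ n - N := (hbounds _ haS).2
  have hup : ∀ x ∈ S, x ≤ gmin S + N - 1 := by
    intro x hx
    have h1 := hwin x hx (gmin S) haS
    have h2 := gmin_le hx
    omega
  have hnotin : gmin S + N ∉ S.erase (gmin S) := by
    intro hmem
    have hx := Finset.mem_of_mem_erase hmem
    have := hup _ hx
    omega
  have hkey : ∀ z ∈ insert (gmin S + N) (S.erase (gmin S)),
      gmin S + 1 ≤ z ∧ z ≤ gmin S + N := by
    intro z hz
    rcases Finset.mem_insert.mp hz with rfl | hz'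
    · omega
    · obtain ⟨hzne, hzS⟩ := Finset.mem_erase.mp hz'
      have := gmin_le hzS
      have := hup _ hzS
      omega
  have hcard : (insert (gmin S + N) (S.erase (gmin S))).card = S.card := by
    rw [Finset.card_insert_of_notMem hnotin, Finset.card_erase_of_mem haS]
    have : 1 ≤ S.card := Finset.card_pos.mpr hne
    omega
  have hesum : gmin S + ∑ x ∈ S.erase (gmin S), x = n - N := by
    have h := Finset.add_sum_erase S id haS
    simp only [Function.id_def] at h hsum
    omega
  have hsum' : (insert (gmin S + N) (S.erase (gmin S))).sum id = n := by
    rw [show ((insert (gmin S + N) (S.erase (gmin S))).sum id)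
        = ∑ x ∈ insert (gmin S + N) (S.erase (gmin S)), x from rfl,
      Finset.sum_insert hnotin]
    omega
  have hgmax : gmax (insert (gmin S + N) (S.erase (gmin S))) = gmin S + N :=
    gmax_eq_of (Finset.mem_insert_self _ _) (fun z hz => (hkey z hz).2)
  refine ⟨Finset.mem_filter.mpr ⟨FF_mem_intro ?_ hsum' ?_, ?_⟩, hgmax, hcard⟩
  · intro x hx
    rw [Finset.mem_Icc]
    rcases Finset.mem_insert.mp hx with rfl | hx'
    · omega
    · obtain ⟨-, hxS⟩ := Finset.mem_erase.mp hx'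
      have := hbounds _ hxS
      omega
  · intro x hx y hy
    have h1 := hkey x hx
    have h2 := hkey y hy
    omega
  · rw [hgmax]
    omega

lemma down_facts {n N : ℕ} (hN : 1 ≤ N) (hn : 1 ≤ n) {S : Finset ℕ}
    (hS : S ∈ (FF n N).filter (fun T => N < gmax T)) :
    insert (gmax S - N) (S.erase (gmax S)) ∈ FF (n - N) N
    ∧ gmin (insert (gmax S - N) (S.erase (gmax S))) = gmax S - N
    ∧ (insert (gmax S - N) (S.erase (gmax S))).card = S.card := by
  obtain ⟨hS', hg⟩ := Finset.mem_filter.mp hS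
  obtain ⟨hsub, hsum, hwin⟩ := FF_mem hS'
  have hsumx : ∑ x ∈ S, x = n := by
    rw [← hsum]; rfl
  have hne : S.Nonempty := FF_nonempty hn hS'
  have hgS : gmax S ∈ S := gmax_mem hne
  have hbounds : ∀ x ∈ S, 1 ≤ x ∧ x ≤ n := by
    intro x hx
    exact Finset.mem_Icc.mp (hsub hx)
  have hgn : gmax S ≤ n := (hbounds _ hgS).2
  have hlow : ∀ x ∈ S, gmax S - N + 1 ≤ x := by
    intro x hx
    have h1 := hwin (gmax S) hgS x hx
    have h2 := le_gmax hx
    have h3 := (hbounds _ hx).1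
    omega
  have hnotin : gmax S - N ∉ S.erase (gmax S) := by
    intro hmem
    have hx := Finset.mem_of_mem_erase hmem
    have := hlow _ hx
    omega
  have hkey : ∀ z ∈ insert (gmax S - N) (S.erase (gmax S)),
      gmax S - N ≤ z ∧ z ≤ gmax S - 1 := by
    intro z hz
    rcases Finset.mem_insert.mp hz with rfl | hz'
    · omega
    · obtain ⟨hzne, hzS⟩ := Finset.mem_erase.mp hz'
      have := hlow _ hzS
      have := le_gmax hzS
      omega
  have hcard : (insert (gmax S - N) (S.erase (gmax S))).card = S.card := by
    rw [Finset.card_insert_of_notMem hnotin, Finset.card_erase_of_mem hgS]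
    have : 1 ≤ S.card := Finset.card_pos.mpr hne
    omega
  have hesum : gmax S + ∑ x ∈ S.erase (gmax S), x = n := by
    have h := Finset.add_sum_erase S id hgS
    simp only [Function.id_def] at h hsum
    omega
  have hpair : ∀ x ∈ S.erase (gmax S), x + gmax S ≤ n := by
    intro x hx
    obtain ⟨hxne, hxS⟩ := Finset.mem_erase.mp hx
    have hsubpair : ({x, gmax S} : Finset ℕ) ⊆ S := by
      intro z hz
      rcases Finset.mem_insert.mp hz with rfl | hz'
      · exact hxS
      · rw [Finset.mem_singleton.mp hz']
        exact hgS
    have hle : ({x, gmax S} : Finset ℕ).sum id ≤ S.sum id :=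
      Finset.sum_le_sum_of_subset hsubpair
    rw [Finset.sum_pair hxne] at hle
    simp only [id_eq, Function.id_def] at hle ⊢
    omega
  have hsum' : (insert (gmax S - N) (S.erase (gmax S))).sum id = n - N := by
    rw [show ((insert (gmax S - N) (S.erase (gmax S))).sum id)
        = ∑ x ∈ insert (gmax S - N) (S.erase (gmax S)), x from rfl,
      Finset.sum_insert hnotin]
    omega
  have hgmin : gmin (insert (gmax S - N) (S.erase (gmax S))) = gmax S - N :=
    gmin_eq_of (Finset.mem_insert_self _ _) (fun z hz => (hkey z hz).1)
  refine ⟨FF_mem_intro ?_ hsum' ?_, hgmin, hcard⟩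
  · intro x hx
    rw [Finset.mem_Icc]
    rcases Finset.mem_insert.mp hx with rfl | hx'
    · omega
    · obtain ⟨hxne, hxS⟩ := Finset.mem_erase.mp hx'
      have h1 := hpair x (Finset.mem_erase.mpr ⟨hxne, hxS⟩)
      have h2 := (hbounds _ hxS).1
      omega
  · intro x hx y hy
    have h1 := hkey x hx
    have h2 := hkey y hy
    omega

lemma tSum_shift {n N : ℕ} (hn : 1 ≤ n) (hN : 1 ≤ N) :
    tSum (n - N) N
      = ∑ S ∈ FF n N, (-1 : ℤ) ^ (S.card - 1) * ((gmax S - N : ℕ) : ℤ) := by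
  rcases le_or_gt n N with hle | hlt
  · have h0 : n - N = 0 := by omega
    rw [h0, tSum_zero]
    symm
    apply Finset.sum_eq_zero
    intro S hS
    have hsub := (FF_mem hS).1
    have hne := FF_nonempty hn hS
    have hgm : gmax S ≤ n := (Finset.mem_Icc.mp (hsub (gmax_mem hne))).2
    have h1 : gmax S - N = 0 := by omega
    rw [h1]
    norm_num
  · have hm1 : 1 ≤ n - N := by omega
    rw [tSum_eq_gmin hm1]
    have hfil : ∑ S ∈ FF n N, (-1 : ℤ) ^ (S.card - 1) * ((gmax S - N : ℕ) : ℤ)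
        = ∑ S ∈ (FF n N).filter (fun T => N < gmax T),
            (-1 : ℤ) ^ (S.card - 1) * ((gmax S - N : ℕ) : ℤ) := by
      symm
      apply Finset.sum_filter_of_ne
      intro S _ hne
      by_contra hc
      apply hne
      have h1 : gmax S - N = 0 := by omega
      rw [h1]
      norm_num
    rw [hfil]
    apply Finset.sum_nbij'
      (i := fun S => insert (gmin S + N) (S.erase (gmin S)))
      (j := fun S => insert (gmax S - N) (S.erase (gmax S)))
    · intro S hS
      exact (up_facts hN hlt hS).1
    · intro S hS
      exact (down_facts hN hn hS).1
    · intro S hS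
      have h2 := (up_facts hN hlt hS).2.1
      have hne : S.Nonempty := FF_nonempty hm1 hS
      have haS : gmin S ∈ S := gmin_mem hne
      have hup : ∀ x ∈ S, x ≤ gmin S + N - 1 := by
        intro x hx
        have h1 := (FF_mem hS).2.2 x hx (gmin S) haS
        have h2 := gmin_le hx
        omega
      have hnotin : gmin S + N ∉ S.erase (gmin S) := by
        intro hmem
        have hx := Finset.mem_of_mem_erase hmem
        have := hup _ hx
        omega
      simp only [h2]
      rw [Finset.erase_insert hnotin, Nat.add_sub_cancel, Finset.insert_erase haS]
    · intro S hS
      have h2 := (down_facts hN hn hS).2.1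
      obtain ⟨hS', hg⟩ := Finset.mem_filter.mp hS
      have hne : S.Nonempty := FF_nonempty hn hS'
      have hgS : gmax S ∈ S := gmax_mem hne
      have hlow : ∀ x ∈ S, gmax S - N + 1 ≤ x := by
        intro x hx
        have h1 := (FF_mem hS').2.2 (gmax S) hgS x hx
        have h3 := le_gmax hx
        have h4 := (Finset.mem_Icc.mp ((FF_mem hS').1 hx)).1
        omega
      have hnotin : gmax S - N ∉ S.erase (gmax S) := by
        intro hmem
        have hx := Finset.mem_of_mem_erase hmem
        have := hlow _ hx
        omega
      simp only [h2]
      rw [Finset.erase_insert hnotin]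
      have he : gmax S - N + N = gmax S := by omega
      rw [he, Finset.insert_erase hgS]
    · intro S hS
      have h2 := (up_facts hN hlt hS).2.1
      have h3 := (up_facts hN hlt hS).2.2
      rw [h2, h3, Nat.add_sub_cancel]

lemma count_j {n N : ℕ} (hn : 1 ≤ n) (hN : 1 ≤ N) {S : Finset ℕ} (hS : S ∈ FF n N) :
    (∑ j ∈ Finset.Icc 1 n,
      if (j ≤ gmin S ∧ gmax S ≤ j + N - 1) then (-1 : ℤ) ^ (S.card - 1) else 0)
    = (-1 : ℤ) ^ (S.card - 1) * ((gmin S : ℤ) - ((gmax S - N : ℕ) : ℤ)) := by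
  obtain ⟨hsub, hsum, hwin⟩ := FF_mem hS
  have hne : S.Nonempty := FF_nonempty hn hS
  have hminS := gmin_mem hne
  have hmaxS := gmax_mem hne
  have h1 : 1 ≤ gmin S := (Finset.mem_Icc.mp (hsub hminS)).1
  have h2 : gmax S ≤ n := (Finset.mem_Icc.mp (hsub hmaxS)).2
  have h3 : gmin S ≤ gmax S := le_gmax hminS
  have h4 : gmax S ≤ gmin S + N - 1 := by
    have := hwin (gmax S) hmaxS (gmin S) hminS
    omega
  have hset : (Finset.Icc 1 n).filter (fun j => j ≤ gmin S ∧ gmax S ≤ j + N - 1)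
      = Finset.Icc (gmax S - N + 1) (gmin S) := by
    ext j
    simp only [Finset.mem_filter, Finset.mem_Icc]
    omega
  rw [← Finset.sum_filter, hset, Finset.sum_const, Nat.card_Icc]
  have hcount : gmin S + 1 - (gmax S - N + 1) = gmin S - (gmax S - N) := by omega
  have hA : gmax S - N ≤ gmin S := by omega
  rw [hcount, nsmul_eq_mul, Nat.cast_sub hA]
  ring

lemma inner_Pf {n N j : ℕ} (hn : 1 ≤ n) (hN : 1 ≤ N) (hj : 1 ≤ j) :
    (∑ S ∈ FF n N,
      if (j ≤ gmin S ∧ gmax S ≤ j + N - 1) then (-1 : ℤ) ^ (S.card - 1) else 0)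
    = -(Pf j N n) := by
  rw [← Finset.sum_filter]
  have hgj : Function.Injective (fun t : ℕ => j + t) := fun a b h => by simpa using h
  have hseteq : (FF n N).filter (fun S => j ≤ gmin S ∧ gmax S ≤ j + N - 1)
      = ((Finset.Icc j (j + N - 1)).powerset).filter (fun S => S.sum id = n) := by
    ext S
    simp only [Finset.mem_filter, Finset.mem_powerset]
    constructor
    · rintro ⟨hS, hc1, hc2⟩
      obtain ⟨hsub, hsum, hwin⟩ := FF_mem hS
      refine ⟨?_, hsum⟩
      intro x hx
      rw [Finset.mem_Icc]
      exact ⟨le_trans hc1 (gmin_le hx), le_trans (le_gmax hx) hc2⟩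
    · rintro ⟨hsub, hsum⟩
      have hne : S.Nonempty := by
        rw [Finset.nonempty_iff_ne_empty]
        rintro rfl
        rw [Finset.sum_empty] at hsum
        omega
      have hbb : ∀ x ∈ S, j ≤ x ∧ x ≤ j + N - 1 := by
        intro x hx
        exact Finset.mem_Icc.mp (hsub hx)
      have hxn : ∀ x ∈ S, x ≤ n := by
        intro x hx
        calc x = id x := rfl
          _ ≤ S.sum id := Finset.single_le_sum (fun i _ => Nat.zero_le (id i)) hx
          _ = n := hsum
      refine ⟨FF_mem_intro ?_ hsum ?_, ?_, ?_⟩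
      · intro x hx
        rw [Finset.mem_Icc]
        exact ⟨le_trans hj (hbb x hx).1, hxn x hx⟩
      · intro x hx y hy
        have := hbb x hx
        have := hbb y hy
        omega
      · exact le_trans (hbb _ (gmin_mem hne)).1 (le_refl _)
      · exact (hbb _ (gmax_mem hne)).2
  rw [hseteq, Finset.sum_filter]
  have hicc : Finset.Icc j (j + N - 1) = (Finset.range N).image (fun t => j + t) := by
    ext x
    simp only [Finset.mem_Icc, Finset.mem_image, Finset.mem_range]
    constructor
    · intro h
      exact ⟨x - j, by omega, by omega⟩
    · rintro ⟨t, ht, rfl⟩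
      omega
  rw [hicc, sum_powerset_image hgj]
  rw [Pf, ← Finset.sum_neg_distrib]
  apply Finset.sum_congr rfl
  intro T hT
  have hcard : (T.image (fun t => j + t)).card = T.card :=
    Finset.card_image_of_injective _ hgj
  have hsumim : (T.image (fun t => j + t)).sum id = (∑ t ∈ T, t) + j * T.card := by
    rw [show ((T.image (fun t => j + t)).sum id) = ∑ x ∈ T.image (fun t => j + t), x from rfl,
      Finset.sum_image (fun a _ b _ h => hgj h), Finset.sum_add_distrib, Finset.sum_const,
      smul_eq_mul]
    ring
  rw [hcard, hsumim]
  by_cases hcond : (∑ t ∈ T, t) + j * T.card = n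
  · rw [if_pos hcond, if_pos hcond]
    have hT1 : 1 ≤ T.card := by
      rcases Nat.eq_zero_or_pos T.card with h0 | h0
      · exfalso
        rw [Finset.card_eq_zero.mp h0] at hcond
        simp at hcond
        omega
      · exact h0
    have : T.card = T.card - 1 + 1 := by omega
    rw [this, pow_succ]
    have : T.card - 1 + 1 - 1 = T.card - 1 := by omega
    rw [this]
    ring
  · rw [if_neg hcond, if_neg hcond]
    ring

end Stmt19Aux

/-- Refinement of Uchimura's divisor identity: `d(n,N) = t(n,N) - t(n-N,N)`. -/
theorem stmt19 (n N : ℕ) (hn : 1 ≤ n) (hN : 1 ≤ N) :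
    (dCount n N : ℤ) = tSum n N - tSum (n - N) N := by
  open Stmt19Aux in
  rw [tSum_eq_gmin hn, tSum_shift hn hN, ← Finset.sum_sub_distrib]
  have hper : ∀ S ∈ Stmt19Aux.FF n N,
      (-1 : ℤ) ^ (S.card - 1) * (Stmt19Aux.gmin S : ℤ)
        - (-1 : ℤ) ^ (S.card - 1) * ((Stmt19Aux.gmax S - N : ℕ) : ℤ)
      = ∑ j ∈ Finset.Icc 1 n,
          (if (j ≤ Stmt19Aux.gmin S ∧ Stmt19Aux.gmax S ≤ j + N - 1)
            then (-1 : ℤ) ^ (S.card - 1) else 0) := by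
    intro S hS
    rw [Stmt19Aux.count_j hn hN hS]
    ring
  rw [Finset.sum_congr rfl hper, Finset.sum_comm]
  have hin : ∀ j ∈ Finset.Icc 1 n,
      (∑ S ∈ Stmt19Aux.FF n N,
        (if (j ≤ Stmt19Aux.gmin S ∧ Stmt19Aux.gmax S ≤ j + N - 1)
          then (-1 : ℤ) ^ (S.card - 1) else 0))
      = -(Stmt19Aux.Pf j N n) := by
    intro j hj
    exact Stmt19Aux.inner_Pf hn hN (Finset.mem_Icc.mp hj).1
  rw [Finset.sum_congr rfl hin, Finset.sum_neg_distrib, Stmt19Aux.sumPf N hN n hn]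
  ring
end
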